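/- arXiv:1010.3673 — 2 statements merged into one kernel-verified Lean document; each statement's English description precedes it below -/
import Mathlib

section
/- The tree product ΠP with the metric D is a complete metric space: every Cauchy sequence in ΠP converges. -/
open scoped Classical

/-- The set `Ω`: pairs of (distinct) points coming from one of the spaces `M i`. -/
abbrev PairVal (I : Type*) (M : I → Type*) := Σ i : I, M i × M i

/-- An element of the tree product `ΠP` of the family of metric spaces `M i`:
a partial function from a dense open subset of `]0, d[` to `Ω`, encoded as an
`Option`-valued function, satisfying conditions (Π₁)–(Π₅). -/
structure TreeProdFun (I : Type*) (M : I → Type*) [∀ i, MetricSpace (M i)] where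
  /-- the length of the interval of definition -/
  d : ℝ
  d_nonneg : 0 ≤ d
  /-- the partial function; `none` outside the domain -/
  f : ℝ → Option (PairVal I M)
  /-- (Π₁) the domain is contained in `]0, d[` … -/
  dom_sub : ∀ t : ℝ, (f t).isSome → t ∈ Set.Ioo 0 d
  /-- … it is open … -/
  dom_open : IsOpen {t : ℝ | (f t).isSome = true}
  /-- … and dense in `]0, d[`. -/
  dom_dense : Set.Ioo 0 d ⊆ closure {t : ℝ | (f t).isSome = true}
  /-- values are pairs of *distinct* points -/
  distinct : ∀ t i (x y : M i), f t = some ⟨i, (x, y)⟩ → x ≠ y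
  /-- (Π₂) `f` is locally constant on its domain -/
  locConst : ∀ t : ℝ, (f t).isSome → ∀ᶠ s in nhds t, f s = f t
  /-- (Π₃) on a maximal subinterval of the domain with value `(x,y)`, the length of the
  interval equals `dist x y` -/
  intervalLen : ∀ a b : ℝ, a < b → (∀ t ∈ Set.Ioo a b, (f t).isSome) →
    ¬ (f a).isSome → ¬ (f b).isSome →
    ∀ t ∈ Set.Ioo a b, ∀ i (x y : M i), f t = some ⟨i, (x, y)⟩ → dist x y = b - a
  /-- (Π₄) no fake exits: no two consecutive values of the form `(x₁,x₂), (x₂,x₃)` -/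
  noFakeExit : ∀ a b c : ℝ, a < b → b < c →
    (∀ t ∈ Set.Ioo a b, (f t).isSome) → (∀ t ∈ Set.Ioo b c, (f t).isSome) →
    ¬ (f a).isSome → ¬ (f b).isSome → ¬ (f c).isSome →
    ∀ s ∈ Set.Ioo a b, ∀ t ∈ Set.Ioo b c, ∀ i (x y z w : M i),
      f s = some ⟨i, (x, y)⟩ → f t = some ⟨i, (z, w)⟩ → y ≠ z
  /-- (Π₅) no backtracking: `f` never coincides on `]p-q, p+q[` with its reflection at `p`
  composed with swapping the components of the values -/
  noBacktrack : ∀ p q : ℝ, 0 < q → Set.Ioo (p - q) (p + q) ⊆ Set.Ioo 0 d →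
    ¬ ∀ t ∈ Set.Ioo (p - q) (p + q),
        f t = Option.map (fun v : PairVal I M => ⟨v.1, (v.2.2, v.2.1)⟩) (f (2 * p - t))

variable {I : Type*} {M : I → Type*} [∀ i, MetricSpace (M i)]

/-- The domain `A_f` of an element of the tree product. -/
def TreeProdFun.dom (f : TreeProdFun I M) : Set ℝ := {t : ℝ | (f.f t).isSome}

/-- The empty function `f_∅`. -/
def emptyTPF (I : Type*) (M : I → Type*) [∀ i, MetricSpace (M i)] : TreeProdFun I M where
  d := 0
  d_nonneg := le_refl 0
  f := fun _ => none
  dom_sub := by intro t h; simp at h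
  dom_open := by simp
  dom_dense := by simp
  distinct := by intro t i x y h; cases h
  locConst := by intro t h; simp at h
  intervalLen := by intro a b _ _ _ _ t ht i x y h; cases h
  noFakeExit := by intro a b c _ _ _ _ _ _ _ s hs t ht i x y z w h; cases h
  noBacktrack := by
    intro p q hq hsub _
    have hp : p ∈ Set.Ioo (p - q) (p + q) := by constructor <;> linarith
    have := hsub hp
    simp at this

/-- The divergence point `div(f,g)`: the supremum of all `s` such that the restrictions of
`f` and `g` to `]0,s[ ∩ A_f` coincide. -/
noncomputable def divPt (f g : TreeProdFun I M) : ℝ :=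
  sSup {s : ℝ | 0 ≤ s ∧ s ≤ min f.d g.d ∧
    ∀ t ∈ Set.Ioo (0 : ℝ) s, (f.f t).isSome → f.f t = g.f t}

/-- `afterPt f s` is the right endpoint of the maximal (possibly empty) interval
`]s, a[` contained in the domain of `f`; it equals `s` if there is no such interval. -/
noncomputable def afterPt (f : TreeProdFun I M) (s : ℝ) : ℝ :=
  sSup {b : ℝ | s ≤ b ∧ b ≤ max s f.d ∧ ∀ t ∈ Set.Ioo s b, (f.f t).isSome}

/-- Distance between the second coordinates of two values in `Ω` (0 if undefined or in
different spaces; only used when the indices agree). -/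
noncomputable def optSndDist : Option (PairVal I M) → Option (PairVal I M) → ℝ
  | some ⟨i, (_, y)⟩, some ⟨j, (_, w)⟩ =>
      if h : i = j then dist (cast (congrArg M h) y) w else 0
  | _, _ => 0

/-- The two values are defined and have the same first coordinate (`x_g(f) = x_f(g)`). -/
def sameStart : Option (PairVal I M) → Option (PairVal I M) → Prop
  | some ⟨i, (x, _)⟩, some ⟨j, (z, _)⟩ => ∃ h : i = j, cast (congrArg M h) x = z
  | _, _ => False

/-- The distance function `D` on the tree product, defined case-wise: in type 1
(both functions continue after the divergence point in the same piece through the same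
entrance point) via the exit points, in type 2 via the divergence point. -/
noncomputable def Dtp (f g : TreeProdFun I M) : ℝ :=
  if divPt f g < afterPt f (divPt f g) ∧ divPt f g < afterPt g (divPt f g) ∧
      sameStart (f.f ((divPt f g + afterPt f (divPt f g)) / 2))
        (g.f ((divPt f g + afterPt g (divPt f g)) / 2))
  then (f.d - afterPt f (divPt f g)) + (g.d - afterPt g (divPt f g)) +
       optSndDist (f.f ((divPt f g + afterPt f (divPt f g)) / 2))
         (g.f ((divPt f g + afterPt g (divPt f g)) / 2))
  else (f.d - divPt f g) + (g.d - divPt f g)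



/- ===================== INFRASTRUCTURE ===================== -/

namespace TreeProdFun

variable (f g : TreeProdFun I M)

lemma none_of_notIoo {t : ℝ} (h : t ∉ Set.Ioo 0 f.d) : f.f t = none := by
  by_contra hc
  exact h (f.dom_sub t (by simpa [Option.isSome_iff_ne_none] using hc))

lemma isSome_mem {t : ℝ} (h : (f.f t).isSome) : t ∈ Set.Ioo 0 f.d := f.dom_sub t h

/-- The defining set of `divPt`. -/
def divSet (f g : TreeProdFun I M) : Set ℝ :=
  {s : ℝ | 0 ≤ s ∧ s ≤ min f.d g.d ∧
    ∀ t ∈ Set.Ioo (0 : ℝ) s, (f.f t).isSome → f.f t = g.f t}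

lemma divPt_eq_sSup : divPt f g = sSup (divSet f g) := rfl

lemma divSet_nonempty : (divSet f g).Nonempty :=
  ⟨0, le_refl 0, le_min f.d_nonneg g.d_nonneg, by simp⟩

lemma divSet_bdd : BddAbove (divSet f g) := ⟨min f.d g.d, fun x hx => hx.2.1⟩

lemma divPt_nonneg : 0 ≤ divPt f g :=
  le_csSup (divSet_bdd f g) ⟨le_refl 0, le_min f.d_nonneg g.d_nonneg, by simp⟩

lemma divPt_le_min : divPt f g ≤ min f.d g.d :=
  csSup_le (divSet_nonempty f g) (fun _ hx => hx.2.1)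

lemma divPt_le_left : divPt f g ≤ f.d := (divPt_le_min f g).trans (min_le_left _ _)

lemma divPt_le_right : divPt f g ≤ g.d := (divPt_le_min f g).trans (min_le_right _ _)

lemma le_divPt {r : ℝ} (h0 : 0 ≤ r) (hf : r ≤ f.d) (hg : r ≤ g.d)
    (hag : ∀ t ∈ Set.Ioo (0 : ℝ) r, (f.f t).isSome → f.f t = g.f t) : r ≤ divPt f g :=
  le_csSup (divSet_bdd f g) ⟨h0, le_min hf hg, hag⟩

lemma divPt_agree : ∀ t ∈ Set.Ioo (0 : ℝ) (divPt f g), (f.f t).isSome → f.f t = g.f t := by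
  intro t ht hs
  obtain ⟨s, hsmem, hts⟩ := exists_lt_of_lt_csSup (divSet_nonempty f g) ht.2
  exact hsmem.2.2 t ⟨ht.1, hts⟩ hs

/-- The defining set of `afterPt`. -/
def aftSet (f : TreeProdFun I M) (s : ℝ) : Set ℝ :=
  {b : ℝ | s ≤ b ∧ b ≤ max s f.d ∧ ∀ t ∈ Set.Ioo s b, (f.f t).isSome}

lemma aftSet_nonempty (s : ℝ) : (aftSet f s).Nonempty :=
  ⟨s, le_refl s, le_max_left _ _, by simp⟩

lemma aftSet_bdd (s : ℝ) : BddAbove (aftSet f s) := ⟨max s f.d, fun x hx => hx.2.1⟩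

lemma self_le_afterPt (s : ℝ) : s ≤ afterPt f s :=
  le_csSup (aftSet_bdd f s) ⟨le_refl s, le_max_left _ _, by simp⟩

lemma afterPt_le_max (s : ℝ) : afterPt f s ≤ max s f.d :=
  csSup_le (aftSet_nonempty f s) (fun _ hx => hx.2.1)

lemma afterPt_le_d {s : ℝ} (h : s ≤ f.d) : afterPt f s ≤ f.d := by
  have := afterPt_le_max f s
  rwa [max_eq_right h] at this

lemma le_afterPt {s b : ℝ} (hsb : s ≤ b) (hbd : b ≤ max s f.d)
    (h : ∀ t ∈ Set.Ioo s b, (f.f t).isSome) : b ≤ afterPt f s :=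
  le_csSup (aftSet_bdd f s) ⟨hsb, hbd, h⟩

lemma afterPt_some {s : ℝ} : ∀ t ∈ Set.Ioo s (afterPt f s), (f.f t).isSome := by
  intro t ht
  obtain ⟨b, hbmem, htb⟩ := exists_lt_of_lt_csSup (aftSet_nonempty f s) ht.2
  exact hbmem.2.2 t ⟨ht.1, htb⟩

lemma afterPt_none {s : ℝ} (h : s < afterPt f s) : f.f (afterPt f s) = none := by
  set a := afterPt f s with ha
  by_cases hmem : a ∈ Set.Ioo 0 f.d
  · by_contra hc
    have hsome : (f.f a).isSome := by simpa [Option.isSome_iff_ne_none] using hc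
    obtain ⟨ε, hε, hball⟩ := Metric.eventually_nhds_iff.mp (f.locConst a hsome)
    set b := a + min (ε/2) (f.d - a) with hb
    have hbd : b ≤ f.d := by
      have : min (ε/2) (f.d - a) ≤ f.d - a := min_le_right _ _
      simp only [hb]; linarith
    have hab : a < b := by
      have : (0:ℝ) < min (ε/2) (f.d - a) := lt_min (by linarith) (by linarith [hmem.2])
      simp only [hb]; linarith
    · have hble : b ≤ afterPt f s := by
        apply le_afterPt
        · linarith
        · exact hbd.trans (le_max_right _ _)
        · intro t ht
          by_cases hta : t < a
          · exact afterPt_some f t ⟨ht.1, hta⟩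
          · push_neg at hta
            have : dist t a < ε := by
              rw [Real.dist_eq, abs_lt]
              constructor
              · linarith
              · have : t < b := ht.2
                have : min (ε/2) (f.d - a) ≤ ε/2 := min_le_left _ _
                simp only [hb] at *
                linarith
            rw [hball this]
            exact hsome
      rw [← ha] at hble
      linarith
  · exact none_of_notIoo f hmem

/-- Right endpoint of the maximal interval of the domain containing `t`. -/
noncomputable def pieceEnd (f : TreeProdFun I M) (t : ℝ) : ℝ :=
  sSup {b : ℝ | t ≤ b ∧ b ≤ f.d ∧ ∀ u ∈ Set.Ico t b, (f.f u).isSome}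

/-- Left endpoint of the maximal interval of the domain containing `t`. -/
noncomputable def pieceStart (f : TreeProdFun I M) (t : ℝ) : ℝ :=
  sInf {a : ℝ | a ≤ t ∧ 0 ≤ a ∧ ∀ u ∈ Set.Ioc a t, (f.f u).isSome}

section Piece
variable {f} {t : ℝ} (ht : (f.f t).isSome)
include ht

lemma pieceEnd_nonempty : {b : ℝ | t ≤ b ∧ b ≤ f.d ∧ ∀ u ∈ Set.Ico t b, (f.f u).isSome}.Nonempty :=
  ⟨t, le_refl t, (f.isSome_mem ht).2.le, by simp⟩

omit ht in
lemma pieceEnd_bdd : BddAbove {b : ℝ | t ≤ b ∧ b ≤ f.d ∧ ∀ u ∈ Set.Ico t b, (f.f u).isSome} :=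
  ⟨f.d, fun x hx => hx.2.1⟩

lemma le_pieceEnd {b : ℝ} (htb : t ≤ b) (hbd : b ≤ f.d)
    (h : ∀ u ∈ Set.Ico t b, (f.f u).isSome) : b ≤ pieceEnd f t :=
  le_csSup (pieceEnd_bdd (f:=f) (t:=t)) ⟨htb, hbd, h⟩

lemma pieceEnd_le_d : pieceEnd f t ≤ f.d :=
  csSup_le (pieceEnd_nonempty ht) (fun _ hx => hx.2.1)

lemma self_le_pieceEnd : t ≤ pieceEnd f t :=
  le_csSup (pieceEnd_bdd (f:=f) (t:=t)) ⟨le_refl t, (f.isSome_mem ht).2.le, by simp⟩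

lemma pieceEnd_some : ∀ u ∈ Set.Ico t (pieceEnd f t), (f.f u).isSome := by
  intro u hu
  obtain ⟨b, hbmem, hub⟩ := exists_lt_of_lt_csSup (pieceEnd_nonempty ht) hu.2
  exact hbmem.2.2 u ⟨hu.1, hub⟩

lemma lt_pieceEnd : t < pieceEnd f t := by
  obtain ⟨ε, hε, hball⟩ := Metric.eventually_nhds_iff.mp (f.locConst t ht)
  have htd := f.isSome_mem ht
  set b := t + min (ε/2) (f.d - t) with hb
  have hpos : (0:ℝ) < min (ε/2) (f.d - t) := lt_min (by linarith) (by linarith [htd.2])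
  have : b ≤ pieceEnd f t := by
    apply le_pieceEnd ht (by simp only [hb]; linarith)
    · have : min (ε/2) (f.d - t) ≤ f.d - t := min_le_right _ _
      simp only [hb]; linarith
    · intro u hu
      have : dist u t < ε := by
        rw [Real.dist_eq, abs_lt]
        have h1 : min (ε/2) (f.d - t) ≤ ε/2 := min_le_left _ _
        have h2 := hu.1; have h3 := hu.2
        simp only [hb] at h3
        constructor <;> linarith
      rw [hball this]; exact ht
  simp only [hb] at this ⊢
  linarith

lemma pieceEnd_none : f.f (pieceEnd f t) = none := by
  set a := pieceEnd f t with ha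
  by_cases hmem : a ∈ Set.Ioo 0 f.d
  · by_contra hc
    have hsome : (f.f a).isSome := by simpa [Option.isSome_iff_ne_none] using hc
    obtain ⟨ε, hε, hball⟩ := Metric.eventually_nhds_iff.mp (f.locConst a hsome)
    set b := a + min (ε/2) (f.d - a) with hb
    have hpos : (0:ℝ) < min (ε/2) (f.d - a) := lt_min (by linarith) (by linarith [hmem.2])
    have hble : b ≤ pieceEnd f t := by
      apply le_pieceEnd ht
      · have := self_le_pieceEnd ht; rw [← ha] at *; simp only [hb]; linarith
      · have : min (ε/2) (f.d - a) ≤ f.d - a := min_le_right _ _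
        simp only [hb]; linarith
      · intro u hu
        by_cases hua : u < a
        · exact pieceEnd_some ht u ⟨hu.1, hua⟩
        · push_neg at hua
          have : dist u a < ε := by
            rw [Real.dist_eq, abs_lt]
            have h1 : min (ε/2) (f.d - a) ≤ ε/2 := min_le_left _ _
            have h3 := hu.2
            simp only [hb] at h3
            constructor <;> linarith
          rw [hball this]; exact hsome
    rw [← ha] at hble
    simp only [hb] at hble
    linarith
  · exact f.none_of_notIoo hmem

lemma pieceStart_nonempty : {a : ℝ | a ≤ t ∧ 0 ≤ a ∧ ∀ u ∈ Set.Ioc a t, (f.f u).isSome}.Nonempty :=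
  ⟨t, le_refl t, (f.isSome_mem ht).1.le, by simp⟩

omit ht in
lemma pieceStart_bdd : BddBelow {a : ℝ | a ≤ t ∧ 0 ≤ a ∧ ∀ u ∈ Set.Ioc a t, (f.f u).isSome} :=
  ⟨0, fun x hx => hx.2.1⟩

lemma pieceStart_le' {a : ℝ} (hat : a ≤ t) (ha0 : 0 ≤ a)
    (h : ∀ u ∈ Set.Ioc a t, (f.f u).isSome) : pieceStart f t ≤ a :=
  csInf_le (pieceStart_bdd (f:=f) (t:=t)) ⟨hat, ha0, h⟩

lemma pieceStart_nonneg : 0 ≤ pieceStart f t :=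
  le_csInf (pieceStart_nonempty ht) (fun _ hx => hx.2.1)

lemma pieceStart_le_self : pieceStart f t ≤ t :=
  csInf_le (pieceStart_bdd (f:=f) (t:=t)) ⟨le_refl t, (f.isSome_mem ht).1.le, by simp⟩

lemma pieceStart_some : ∀ u ∈ Set.Ioc (pieceStart f t) t, (f.f u).isSome := by
  intro u hu
  obtain ⟨a, hamem, hua⟩ := exists_lt_of_csInf_lt (pieceStart_nonempty ht) hu.1
  exact hamem.2.2 u ⟨hua, hu.2⟩

lemma pieceStart_lt : pieceStart f t < t := by
  obtain ⟨ε, hε, hball⟩ := Metric.eventually_nhds_iff.mp (f.locConst t ht)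
  have htd := f.isSome_mem ht
  set a := t - min (ε/2) t with hb
  have hpos : (0:ℝ) < min (ε/2) t := lt_min (by linarith) htd.1
  have : pieceStart f t ≤ a := by
    apply pieceStart_le' ht (by simp only [hb]; linarith)
    · have : min (ε/2) t ≤ t := min_le_right _ _
      simp only [hb]; linarith
    · intro u hu
      have : dist u t < ε := by
        rw [Real.dist_eq, abs_lt]
        have h1 : min (ε/2) t ≤ ε/2 := min_le_left _ _
        have h2 := hu.1; have h3 := hu.2
        simp only [hb] at h2
        constructor <;> linarith
      rw [hball this]; exact ht
  simp only [hb] at this ⊢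
  linarith

lemma pieceStart_none : f.f (pieceStart f t) = none := by
  set a := pieceStart f t with ha
  by_cases hmem : a ∈ Set.Ioo 0 f.d
  · by_contra hc
    have hsome : (f.f a).isSome := by simpa [Option.isSome_iff_ne_none] using hc
    obtain ⟨ε, hε, hball⟩ := Metric.eventually_nhds_iff.mp (f.locConst a hsome)
    set b := a - min (ε/2) a with hb
    have hpos : (0:ℝ) < min (ε/2) a := lt_min (by linarith) hmem.1
    have hble : pieceStart f t ≤ b := by
      apply pieceStart_le' ht
      · have := pieceStart_lt ht; rw [← ha] at *; simp only [hb]; linarith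
      · have : min (ε/2) a ≤ a := min_le_right _ _
        simp only [hb]; linarith
      · intro u hu
        by_cases hua : a < u
        · exact pieceStart_some ht u ⟨hua, hu.2⟩
        · push_neg at hua
          have : dist u a < ε := by
            rw [Real.dist_eq, abs_lt]
            have h1 : min (ε/2) a ≤ ε/2 := min_le_left _ _
            have h2 := hu.1
            simp only [hb] at h2
            constructor <;> linarith
          rw [hball this]; exact hsome
    rw [← ha] at hble
    simp only [hb] at hble
    linarith
  · exact f.none_of_notIoo hmem

end Piece
section Piece2
variable {f : TreeProdFun I M} {t : ℝ} (ht : (f.f t).isSome)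
include ht

lemma piece_const_right : ∀ u, t ≤ u → u < pieceEnd f t → f.f u = f.f t := by
  intro u htu hu
  set S : Set ℝ := {b | t ≤ b ∧ b ≤ u ∧ ∀ v ∈ Set.Ico t b, f.f v = f.f t} with hS
  have hSne : S.Nonempty := ⟨t, le_refl t, htu, by simp⟩
  have hSbdd : BddAbove S := ⟨u, fun x hx => hx.2.1⟩
  set c := sSup S with hc
  have htc : t ≤ c := le_csSup hSbdd ⟨le_refl t, htu, by simp⟩
  have hcu : c ≤ u := csSup_le hSne (fun x hx => hx.2.1)
  have hconst : ∀ v ∈ Set.Ico t c, f.f v = f.f t := by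
    intro v hv
    obtain ⟨b, hbmem, hvb⟩ := exists_lt_of_lt_csSup hSne hv.2
    exact hbmem.2.2 v ⟨hv.1, hvb⟩
  have hcsome : (f.f c).isSome := pieceEnd_some ht c ⟨htc, lt_of_le_of_lt hcu hu⟩
  obtain ⟨ε, hε, hball⟩ := Metric.eventually_nhds_iff.mp (f.locConst c hcsome)
  have hct : f.f c = f.f t := by
    rcases eq_or_lt_of_le htc with h | h
    · rw [← h]
    · set v := max t (c - ε/2) with hv
      have hv1 : v ∈ Set.Ico t c := by
        constructor
        · exact le_max_left _ _
        · simp only [hv, max_lt_iff]; constructor <;> linarith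
      have hd : dist v c < ε := by
        rw [Real.dist_eq, abs_lt]
        have h1 : c - ε/2 ≤ v := le_max_right _ _
        have h2 := hv1.2
        constructor <;> linarith
      rw [← hball hd, hconst v hv1]
  rcases eq_or_lt_of_le hcu with h | h
  · rw [← h]; exact hct
  · exfalso
    set b := min u (c + ε/2) with hb
    have hcb : c < b := lt_min h (by linarith)
    have hmem : b ∈ S := by
      refine ⟨by linarith, min_le_left _ _, ?_⟩
      intro v hv
      by_cases hvc : v < c
      · exact hconst v ⟨hv.1, hvc⟩
      · push_neg at hvc
        have hd : dist v c < ε := by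
          rw [Real.dist_eq, abs_lt]
          have h2 := hv.2
          have h3 : b ≤ c + ε/2 := min_le_right _ _
          constructor <;> linarith
        rw [hball hd, hct]
    have := le_csSup hSbdd hmem
    rw [← hc] at this
    linarith

lemma piece_const_left : ∀ u, pieceStart f t < u → u ≤ t → f.f u = f.f t := by
  intro u hu hut
  set S : Set ℝ := {a | u ≤ a ∧ a ≤ t ∧ ∀ v ∈ Set.Ioc a t, f.f v = f.f t} with hS
  have hSne : S.Nonempty := ⟨t, hut, le_refl t, by simp⟩
  have hSbdd : BddBelow S := ⟨u, fun x hx => hx.1⟩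
  set c := sInf S with hc
  have huc : u ≤ c := le_csInf hSne (fun x hx => hx.1)
  have hct : c ≤ t := csInf_le hSbdd ⟨hut, le_refl t, by simp⟩
  have hconst : ∀ v ∈ Set.Ioc c t, f.f v = f.f t := by
    intro v hv
    obtain ⟨a, hamem, hva⟩ := exists_lt_of_csInf_lt hSne hv.1
    exact hamem.2.2 v ⟨hva, hv.2⟩
  have hcsome : (f.f c).isSome := pieceStart_some ht c ⟨lt_of_lt_of_le hu huc, hct⟩
  obtain ⟨ε, hε, hball⟩ := Metric.eventually_nhds_iff.mp (f.locConst c hcsome)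
  have hctv : f.f c = f.f t := by
    rcases eq_or_lt_of_le hct with h | h
    · rw [h]
    · set v := min t (c + ε/2) with hv
      have hv1 : v ∈ Set.Ioc c t := by
        constructor
        · simp only [hv, lt_min_iff]; constructor <;> linarith
        · exact min_le_left _ _
      have hd : dist v c < ε := by
        rw [Real.dist_eq, abs_lt]
        have h1 : v ≤ c + ε/2 := min_le_right _ _
        have h2 := hv1.1
        constructor <;> linarith
      rw [← hball hd, hconst v hv1]
  rcases eq_or_lt_of_le huc with h | h
  · rw [h]; exact hctv
  · exfalso
    set a := max u (c - ε/2) with ha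
    have hac : a < c := max_lt h (by linarith)
    have hmem : a ∈ S := by
      refine ⟨le_max_left _ _, by linarith, ?_⟩
      intro v hv
      by_cases hvc : c < v
      · exact hconst v ⟨hvc, hv.2⟩
      · push_neg at hvc
        have hd : dist v c < ε := by
          rw [Real.dist_eq, abs_lt]
          have h2 := hv.1
          have h3 : c - ε/2 ≤ a := le_max_right _ _
          constructor <;> linarith
        rw [hball hd, hctv]
    have := csInf_le hSbdd hmem
    rw [← hc] at this
    linarith

lemma piece_const : ∀ u ∈ Set.Ioo (pieceStart f t) (pieceEnd f t), f.f u = f.f t := by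
  intro u hu
  rcases le_or_gt u t with h | h
  · exact piece_const_left ht u hu.1 h
  · exact piece_const_right ht u h.le hu.2

lemma piece_len {i : I} {x y : M i} (hv : f.f t = some ⟨i, (x, y)⟩) :
    dist x y = pieceEnd f t - pieceStart f t := by
  have h1 := pieceStart_lt ht
  have h2 := lt_pieceEnd ht
  refine f.intervalLen (pieceStart f t) (pieceEnd f t) (by linarith) ?_ ?_ ?_ t ⟨h1, h2⟩ i x y hv
  · intro v hv'
    rcases le_or_gt v t with h | h
    · exact pieceStart_some ht v ⟨hv'.1, h⟩
    · exact pieceEnd_some ht v ⟨h.le, hv'.2⟩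
  · rw [pieceStart_none ht]; simp
  · rw [pieceEnd_none ht]; simp

end Piece2

lemma afterPt_of_some {f : TreeProdFun I M} {s : ℝ} (hs : (f.f s).isSome) :
    afterPt f s = pieceEnd f s := by
  apply le_antisymm
  · by_contra hlt
    push_neg at hlt
    have h2 : s < pieceEnd f s := lt_pieceEnd hs
    have : (f.f (pieceEnd f s)).isSome := afterPt_some f _ ⟨h2, hlt⟩
    rw [pieceEnd_none hs] at this
    simp at this
  · apply le_afterPt f (self_le_pieceEnd hs) ((pieceEnd_le_d hs).trans (le_max_right _ _))
    intro v hv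
    exact pieceEnd_some hs v ⟨hv.1.le, hv.2⟩

lemma afterPt_pieces {f : TreeProdFun I M} {s : ℝ} (hsd : s ≤ f.d) {t : ℝ}
    (ht : t ∈ Set.Ioo s (afterPt f s)) :
    (f.f t).isSome ∧ pieceEnd f t = afterPt f s ∧ pieceStart f t ≤ s := by
  have hsome : (f.f t).isSome := afterPt_some f t ht
  have hPE : pieceEnd f t = afterPt f s := by
    apply le_antisymm
    · by_contra hlt
      push_neg at hlt
      have : (f.f (afterPt f s)).isSome :=
        pieceEnd_some hsome (afterPt f s) ⟨ht.2.le, hlt⟩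
      rw [afterPt_none f (lt_trans ht.1 ht.2)] at this
      simp at this
    · apply le_pieceEnd hsome ht.2.le (afterPt_le_d f hsd)
      intro v hv
      rcases eq_or_lt_of_le hv.1 with h | h
      · rw [← h]; exact hsome
      · exact afterPt_some f v ⟨lt_trans ht.1 h, hv.2⟩
  refine ⟨hsome, hPE, ?_⟩
  by_contra hlt
  push_neg at hlt
  have : (f.f (pieceStart f t)).isSome :=
    afterPt_some f _ ⟨hlt, lt_trans (pieceStart_lt hsome) ht.2⟩
  rw [pieceStart_none hsome] at this
  simp at this

lemma sameStart_intro {i : I} {x y₁ y₂ : M i} :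
    sameStart (some ⟨i,(x,y₁)⟩ : Option (PairVal I M)) (some ⟨i,(x,y₂)⟩) :=
  ⟨rfl, by simp⟩

lemma sameStart_unpack {o₁ o₂ : Option (PairVal I M)} (h : sameStart o₁ o₂) :
    ∃ (i : I) (x y₁ y₂ : M i), o₁ = some ⟨i,(x,y₁)⟩ ∧ o₂ = some ⟨i,(x,y₂)⟩ := by
  rcases o₁ with _ | ⟨i, x, y⟩
  · exact absurd h (by simp [sameStart])
  rcases o₂ with _ | ⟨j, z, w⟩
  · exact absurd h (by simp [sameStart])
  obtain ⟨hij, hxz⟩ := h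
  subst hij
  simp only [cast_eq] at hxz
  subst hxz
  exact ⟨i, x, y, w, rfl, rfl⟩

lemma optSndDist_some {i : I} {x₁ y₁ x₂ y₂ : M i} :
    optSndDist (some ⟨i,(x₁,y₁)⟩ : Option (PairVal I M)) (some ⟨i,(x₂,y₂)⟩) = dist y₁ y₂ := by
  simp [optSndDist]

lemma exists_dom_mem (f : TreeProdFun I M) {a b : ℝ} (hab : a < b) (ha : 0 ≤ a) (hb : b ≤ f.d) :
    ∃ t ∈ Set.Ioo a b, (f.f t).isSome := by
  have hmid : (a+b)/2 ∈ Set.Ioo 0 f.d := ⟨by linarith, by linarith⟩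
  have := f.dom_dense hmid
  rw [_root_.mem_closure_iff] at this
  obtain ⟨t, ht, hts⟩ := this (Set.Ioo a b) isOpen_Ioo ⟨by linarith, by linarith⟩
  exact ⟨t, ht, hts⟩

/-- Alignment: if `f` agrees with `g` (on the domain of `f`) on `]0,s[`, and both have
pieces just after `s` entering through the same point, then the two pieces have the same
starting point. -/
lemma align {f g : TreeProdFun I M} {s : ℝ}
    (hag : ∀ t ∈ Set.Ioo (0:ℝ) s, (f.f t).isSome → f.f t = g.f t)
    {tf tg : ℝ} (htf : tf ∈ Set.Ioo s (afterPt f s)) (htg : tg ∈ Set.Ioo s (afterPt g s))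
    (hfd : s ≤ f.d) (hgd : s ≤ g.d)
    {i : I} {x yf yg : M i}
    (hvf : f.f tf = some ⟨i,(x,yf)⟩) (hvg : g.f tg = some ⟨i,(x,yg)⟩) :
    pieceStart f tf = pieceStart g tg := by
  obtain ⟨hfsome, hfPE, hfPS⟩ := afterPt_pieces hfd htf
  obtain ⟨hgsome, hgPE, hgPS⟩ := afterPt_pieces hgd htg
  set γf := pieceStart f tf with hγf
  set γg := pieceStart g tg with hγg
  have hγf0 : 0 ≤ γf := pieceStart_nonneg hfsome
  have hγg0 : 0 ≤ γg := pieceStart_nonneg hgsome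
  have hfPEgt : s < pieceEnd f tf := by rw [hfPE]; exact lt_trans htf.1 htf.2
  have hgPEgt : s < pieceEnd g tg := by rw [hgPE]; exact lt_trans htg.1 htg.2
  have hlenf : dist x yf = pieceEnd f tf - γf := piece_len hfsome hvf
  have hleng : dist x yg = pieceEnd g tg - γg := piece_len hgsome hvg
  rcases lt_trichotomy γf γg with hlt | heq | hgt
  · -- f's piece starts earlier: contradiction
    exfalso
    set t := (γf + γg)/2 with htdef
    have htmem : t ∈ Set.Ioo γf γg :=
      ⟨by simp only [htdef]; linarith, by simp only [htdef]; linarith⟩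
    have htIoo : t ∈ Set.Ioo (0:ℝ) s := ⟨by linarith [htmem.1], lt_of_lt_of_le htmem.2 hgPS⟩
    have hft : f.f t = some ⟨i,(x,yf)⟩ := by
      rw [piece_const hfsome t ⟨htmem.1, by linarith [htmem.2, hgPS, hfPEgt]⟩, hvf]
    have hfts : (f.f t).isSome := by rw [hft]; rfl
    have hgval : g.f t = some ⟨i,(x,yf)⟩ := by rw [← hag t htIoo hfts, hft]
    have hgts : (g.f t).isSome := by rw [hgval]; rfl
    set α := pieceStart g t with hα
    set β := pieceEnd g t with hβ
    have hα0 : 0 ≤ α := pieceStart_nonneg hgts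
    have htβ : t < β := lt_pieceEnd hgts
    have hαt : α < t := pieceStart_lt hgts
    have hβle : β ≤ γg := by
      by_contra hc
      push_neg at hc
      have : (g.f γg).isSome := pieceEnd_some hgts γg ⟨le_of_lt htmem.2, hc⟩
      rw [pieceStart_none hgsome] at this; simp at this
    have hlen2 : dist x yf = β - α := piece_len hgts hgval
    rcases le_or_gt γf α with hcase | hcase
    · -- α ≥ γf : length too small
      have h1 : β - α ≤ γg - γf := by linarith
      have hγgs : γg ≤ s := hgPS
      linarith
    · -- α < γf
      obtain ⟨t1, ht1, ht1some⟩ := f.exists_dom_mem hcase hα0 (le_trans hfPS hfd)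
      have hγfβ : γf < β := lt_trans (lt_of_lt_of_le (lt_of_lt_of_le htmem.1 (le_refl t)) (le_refl t)) htβ
      have hgt1 : g.f t1 = some ⟨i,(x,yf)⟩ := by
        rw [piece_const hgts t1 ⟨ht1.1, lt_trans ht1.2 hγfβ⟩, hgval]
      have ht1Ioo : t1 ∈ Set.Ioo (0:ℝ) s :=
        ⟨by linarith [ht1.1], by linarith [ht1.2, hgPS, htmem.2]⟩
      have hft1 : f.f t1 = some ⟨i,(x,yf)⟩ := by rw [hag t1 ht1Ioo ht1some, hgt1]
      set α' := pieceStart f t1 with hα'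
      set β' := pieceEnd f t1 with hβ'
      have hβ'le : β' ≤ γf := by
        by_contra hc
        push_neg at hc
        have : (f.f γf).isSome := pieceEnd_some ht1some γf ⟨le_of_lt ht1.2, hc⟩
        rw [pieceStart_none hfsome] at this; simp at this
      have hα'ge : α ≤ α' := by
        by_contra hc
        push_neg at hc
        have hsα : (f.f α).isSome := pieceStart_some ht1some α ⟨hc, le_of_lt ht1.1⟩
        rcases eq_or_lt_of_le hα0 with h0 | h0
        · have := f.isSome_mem hsα
          rw [← h0] at this
          exact absurd this.1 (lt_irrefl 0)
        · have hαIoo : α ∈ Set.Ioo (0:ℝ) s := ⟨h0, by linarith [ht1.1, ht1Ioo.2]⟩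
          have := hag α hαIoo hsα
          rw [pieceStart_none hgts] at this
          rw [this] at hsα
          simp at hsα
      have hlen3 : dist x yf = β' - α' := piece_len ht1some hft1
      linarith
  · exact heq
  · -- g's piece starts earlier: contradiction
    exfalso
    obtain ⟨t1, ht1, ht1some⟩ := f.exists_dom_mem hgt hγg0 (le_trans hfPS hfd)
    have ht1s : t1 ∈ Set.Ioo (0:ℝ) s := ⟨by linarith [ht1.1], lt_of_lt_of_le ht1.2 hfPS⟩
    have hgpieceval : g.f t1 = some ⟨i,(x,yg)⟩ := by
      rw [piece_const hgsome t1 ⟨ht1.1, by linarith [ht1.2, hfPS, hgPEgt]⟩, hvg]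
    have hft1 : f.f t1 = some ⟨i,(x,yg)⟩ := by rw [hag t1 ht1s ht1some, hgpieceval]
    set α' := pieceStart f t1 with hα'
    set β' := pieceEnd f t1 with hβ'
    have hβ'le : β' ≤ γf := by
      by_contra hc
      push_neg at hc
      have : (f.f γf).isSome := pieceEnd_some ht1some γf ⟨le_of_lt ht1.2, hc⟩
      rw [pieceStart_none hfsome] at this; simp at this
    have hα'ge : γg ≤ α' := by
      by_contra hc
      push_neg at hc
      have hsomeγg : (f.f γg).isSome := pieceStart_some ht1some γg ⟨hc, le_of_lt ht1.1⟩
      rcases eq_or_lt_of_le hγg0 with h0 | h0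
      · have := f.isSome_mem hsomeγg
        rw [← h0] at this
        exact absurd this.1 (lt_irrefl 0)
      · have hγgIoo : γg ∈ Set.Ioo (0:ℝ) s := ⟨h0, lt_of_lt_of_le hgt hfPS⟩
        have := hag γg hγgIoo hsomeγg
        rw [pieceStart_none hgsome] at this
        rw [this] at hsomeγg
        simp at hsomeγg
    have hlen3 : dist x yg = β' - α' := piece_len ht1some hft1
    have hγfs : γf ≤ s := hfPS
    linarith [hgPEgt]

lemma pair_some_inj {i : I} {x y x' y' : M i}
    (h : (some ⟨i,(x,y)⟩ : Option (PairVal I M)) = some ⟨i,(x',y')⟩) : x = x' ∧ y = y' := by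
  simp at h; exact h

lemma Dtp_nonneg (f g : TreeProdFun I M) : 0 ≤ Dtp f g := by
  unfold Dtp
  split_ifs with hc
  · obtain ⟨h1, h2, hss⟩ := hc
    obtain ⟨i, x, yf, yg, hvf, hvg⟩ := sameStart_unpack hss
    rw [hvf, hvg, optSndDist_some]
    have hA : afterPt f (divPt f g) ≤ f.d := afterPt_le_d f (divPt_le_left f g)
    have hB : afterPt g (divPt f g) ≤ g.d := afterPt_le_d g (divPt_le_right f g)
    have := dist_nonneg (x := yf) (y := yg)
    linarith
  · have h1 := divPt_le_left f g
    have h2 := divPt_le_right f g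
    linarith

/-- Structure of `Dtp f g < ε`: either type 2 with both tails small, or type 1 with full
piece data. -/
lemma Dtp_cases {f g : TreeProdFun I M} {ε : ℝ} (hε : Dtp f g < ε) :
    (f.d - divPt f g < ε ∧ g.d - divPt f g < ε) ∨
    (∃ (γ af ag : ℝ) (i : I) (x yf yg : M i),
      0 ≤ γ ∧ γ ≤ divPt f g ∧ divPt f g < af ∧ divPt f g < ag ∧ af ≤ f.d ∧ ag ≤ g.d ∧
      (∀ t ∈ Set.Ioo γ af, f.f t = some ⟨i,(x,yf)⟩) ∧
      (∀ t ∈ Set.Ioo γ ag, g.f t = some ⟨i,(x,yg)⟩) ∧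
      f.f γ = none ∧ g.f γ = none ∧ f.f af = none ∧ g.f ag = none ∧
      dist x yf = af - γ ∧ dist x yg = ag - γ ∧
      (f.d - af) + (g.d - ag) + dist yf yg = Dtp f g) := by
  set s := divPt f g with hs
  by_cases hc : s < afterPt f s ∧ s < afterPt g s ∧
      sameStart (f.f ((s + afterPt f s) / 2)) (g.f ((s + afterPt g s) / 2))
  · right
    obtain ⟨h1, h2, hss⟩ := hc
    set A := afterPt f s with hA
    set B := afterPt g s with hB
    have hmf : (s + A)/2 ∈ Set.Ioo s A := ⟨by linarith, by linarith⟩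
    have hmg : (s + B)/2 ∈ Set.Ioo s B := ⟨by linarith, by linarith⟩
    obtain ⟨i, x, yf, yg, hvf, hvg⟩ := sameStart_unpack hss
    have hfd : s ≤ f.d := divPt_le_left f g
    have hgd : s ≤ g.d := divPt_le_right f g
    obtain ⟨hfsome, hfPE, hfPS⟩ := afterPt_pieces hfd hmf
    obtain ⟨hgsome, hgPE, hgPS⟩ := afterPt_pieces hgd hmg
    have halign : pieceStart f ((s + A)/2) = pieceStart g ((s + B)/2) :=
      align (divPt_agree f g) hmf hmg hfd hgd hvf hvg
    set γ := pieceStart f ((s + A)/2) with hγ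
    refine ⟨γ, A, B, i, x, yf, yg, pieceStart_nonneg hfsome, hfPS, h1, h2,
      afterPt_le_d f hfd, afterPt_le_d g hgd, ?_, ?_, ?_, ?_, ?_, ?_, ?_, ?_, ?_⟩
    · intro t ht
      have ht' : t ∈ Set.Ioo (pieceStart f ((s + A)/2)) (pieceEnd f ((s + A)/2)) :=
        ⟨ht.1, by rw [hfPE, ← hA]; exact ht.2⟩
      rw [piece_const hfsome t ht', hvf]
    · intro t ht
      have ht' : t ∈ Set.Ioo (pieceStart g ((s + B)/2)) (pieceEnd g ((s + B)/2)) :=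
        ⟨by rw [← halign]; exact ht.1, by rw [hgPE, ← hB]; exact ht.2⟩
      rw [piece_const hgsome t ht', hvg]
    · exact pieceStart_none hfsome
    · rw [halign]; exact pieceStart_none hgsome
    · rw [hA, ← hfPE]; exact pieceEnd_none hfsome
    · rw [hB, ← hgPE]; exact pieceEnd_none hgsome
    · rw [piece_len hfsome hvf, hfPE, ← hA]
    · rw [piece_len hgsome hvg, hgPE, ← halign, ← hB]
    · rw [Dtp, if_pos ⟨h1, h2, hss⟩, hvf, hvg, optSndDist_some]
  · left
    rw [Dtp, if_neg hc] at hε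
    have h1 := divPt_le_left f g
    have h2 := divPt_le_right f g
    constructor <;> linarith

/-- The exact value of `Dtp` in an explicitly given type-1 situation. -/
lemma Dtp_eq_type1 {f g : TreeProdFun I M} {γ bf bg : ℝ} {i : I} {x yf yg : M i}
    (hγ0 : 0 ≤ γ) (hγf : γ < bf) (hγg : γ < bg) (hbf : bf ≤ f.d) (hbg : bg ≤ g.d)
    (hag : ∀ t ∈ Set.Ioo (0:ℝ) γ, (f.f t).isSome → f.f t = g.f t)
    (hf : ∀ t ∈ Set.Ioo γ bf, f.f t = some ⟨i,(x,yf)⟩)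
    (hg : ∀ t ∈ Set.Ioo γ bg, g.f t = some ⟨i,(x,yg)⟩)
    (hfb : f.f bf = none) (hgb : g.f bg = none) (hne : yf ≠ yg) :
    Dtp f g = (f.d - bf) + (g.d - bg) + dist yf yg := by
  have hsγ : divPt f g = γ := by
    apply le_antisymm
    · by_contra hc
      push_neg at hc
      set m := min (divPt f g) (min bf bg) with hm
      have hγm : γ < m := lt_min hc (lt_min hγf hγg)
      set t := (γ + m)/2 with ht
      have htb1 : γ < t := by simp only [ht]; linarith
      have htb2 : t < m := by simp only [ht]; linarith
      have hms : m ≤ divPt f g := min_le_left _ _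
      have hmf' : m ≤ bf := (min_le_right _ _).trans (min_le_left _ _)
      have hmg' : m ≤ bg := (min_le_right _ _).trans (min_le_right _ _)
      have h1 : f.f t = some ⟨i,(x,yf)⟩ := hf t ⟨htb1, lt_of_lt_of_le htb2 hmf'⟩
      have h2 : g.f t = some ⟨i,(x,yg)⟩ := hg t ⟨htb1, lt_of_lt_of_le htb2 hmg'⟩
      have hsome : (f.f t).isSome := by rw [h1]; rfl
      have := divPt_agree f g t ⟨by linarith, lt_of_lt_of_le htb2 hms⟩ hsome
      rw [h1, h2] at this
      exact hne (pair_some_inj this).2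
    · exact le_divPt f g hγ0 (le_of_lt (lt_of_lt_of_le hγf hbf))
        (le_of_lt (lt_of_lt_of_le hγg hbg)) hag
  have hAf : afterPt f γ = bf := by
    apply le_antisymm
    · by_contra hc
      push_neg at hc
      have : (f.f bf).isSome := afterPt_some f bf ⟨hγf, hc⟩
      rw [hfb] at this; simp at this
    · apply le_afterPt f (le_of_lt hγf) (hbf.trans (le_max_right _ _))
      intro v hv
      rw [hf v hv]; rfl
  have hAg : afterPt g γ = bg := by
    apply le_antisymm
    · by_contra hc
      push_neg at hc
      have : (g.f bg).isSome := afterPt_some g bg ⟨hγg, hc⟩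
      rw [hgb] at this; simp at this
    · apply le_afterPt g (le_of_lt hγg) (hbg.trans (le_max_right _ _))
      intro v hv
      rw [hg v hv]; rfl
  have hmf : f.f ((γ + bf)/2) = some ⟨i,(x,yf)⟩ := hf _ ⟨by linarith, by linarith⟩
  have hmg : g.f ((γ + bg)/2) = some ⟨i,(x,yg)⟩ := hg _ ⟨by linarith, by linarith⟩
  rw [Dtp, hsγ, hAf, hAg, if_pos ⟨hγf, hγg, by rw [hmf, hmg]; exact sameStart_intro⟩,
    hmf, hmg, optSndDist_some]

/-- Master bound: if `f` agrees with `g` on `]0,r[` then `Dtp f g` is controlled by the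
tails beyond `r`. -/
lemma Dtp_le_of_agree {f g : TreeProdFun I M} {r : ℝ} (h0 : 0 ≤ r)
    (hrf : r ≤ f.d) (hrg : r ≤ g.d)
    (hag : ∀ t ∈ Set.Ioo (0:ℝ) r, (f.f t).isSome → f.f t = g.f t) :
    Dtp f g ≤ 2 * ((f.d - r) + (g.d - r)) := by
  set s := divPt f g with hs
  have hrs : r ≤ s := le_divPt f g h0 hrf hrg hag
  have hfd : s ≤ f.d := divPt_le_left f g
  have hgd : s ≤ g.d := divPt_le_right f g
  rw [Dtp]
  split_ifs with hc
  · obtain ⟨h1, h2, hss⟩ := hc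
    set A := afterPt f s with hA
    set B := afterPt g s with hB
    have hmf : (s + A)/2 ∈ Set.Ioo s A := ⟨by linarith, by linarith⟩
    have hmg : (s + B)/2 ∈ Set.Ioo s B := ⟨by linarith, by linarith⟩
    obtain ⟨i, x, yf, yg, hvf, hvg⟩ := sameStart_unpack hss
    obtain ⟨hfsome, hfPE, hfPS⟩ := afterPt_pieces hfd hmf
    obtain ⟨hgsome, hgPE, hgPS⟩ := afterPt_pieces hgd hmg
    have hAd : A ≤ f.d := afterPt_le_d f hfd
    have hBd : B ≤ g.d := afterPt_le_d g hgd
    have halign : pieceStart f ((s + A)/2) = pieceStart g ((s + B)/2) :=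
      align (divPt_agree f g) hmf hmg hfd hgd hvf hvg
    rw [hvf, hvg, optSndDist_some]
    -- case on whether the pieces straddle s
    by_cases hfs : (f.f s).isSome
    · -- f's piece straddles s, hence so does g's, and the values agree: dist = 0
      have hPSf : pieceStart f ((s + A)/2) < s := by
        rcases lt_or_eq_of_le hfPS with h | h
        · exact h
        · exfalso
          have := pieceStart_none hfsome
          rw [h] at this
          rw [this] at hfs
          simp at hfs
      have hPSg : pieceStart g ((s + B)/2) < s := by rw [← halign]; exact hPSf
      have hyfg : yf = yg := by
        set t := (max (pieceStart f ((s + A)/2)) (pieceStart g ((s + B)/2)) + s)/2 with ht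
        have htf : t ∈ Set.Ioo (pieceStart f ((s + A)/2)) (pieceEnd f ((s + A)/2)) := by
          constructor
          · have := le_max_left (pieceStart f ((s + A)/2)) (pieceStart g ((s + B)/2))
            have hmax : max (pieceStart f ((s + A)/2)) (pieceStart g ((s + B)/2)) < s :=
              max_lt hPSf hPSg
            simp only [ht]
            linarith
          · have hmax : max (pieceStart f ((s + A)/2)) (pieceStart g ((s + B)/2)) < s :=
              max_lt hPSf hPSg
            have : s < pieceEnd f ((s + A)/2) := by
              rw [hfPE]; exact lt_trans hmf.1 hmf.2
            simp only [ht]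
            linarith
        have htg : t ∈ Set.Ioo (pieceStart g ((s + B)/2)) (pieceEnd g ((s + B)/2)) := by
          constructor
          · have := le_max_right (pieceStart f ((s + A)/2)) (pieceStart g ((s + B)/2))
            have hmax : max (pieceStart f ((s + A)/2)) (pieceStart g ((s + B)/2)) < s :=
              max_lt hPSf hPSg
            simp only [ht]
            linarith
          · have hmax : max (pieceStart f ((s + A)/2)) (pieceStart g ((s + B)/2)) < s :=
              max_lt hPSf hPSg
            have : s < pieceEnd g ((s + B)/2) := by
              rw [hgPE]; exact lt_trans hmg.1 hmg.2
            simp only [ht]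
            linarith
        have hfv : f.f t = some ⟨i,(x,yf)⟩ := by rw [piece_const hfsome t htf, hvf]
        have hgv : g.f t = some ⟨i,(x,yg)⟩ := by rw [piece_const hgsome t htg, hvg]
        have htIoo : t ∈ Set.Ioo (0:ℝ) s := by
          constructor
          · have h1 := pieceStart_nonneg hfsome
            have := le_max_left (pieceStart f ((s + A)/2)) (pieceStart g ((s + B)/2))
            simp only [ht]
            linarith [max_lt hPSf hPSg]
          · simp only [ht]
            linarith [max_lt hPSf hPSg]
        have := divPt_agree f g t htIoo (by rw [hfv]; rfl)
        rw [hfv, hgv] at this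
        exact (pair_some_inj this).2
      rw [hyfg]
      simp only [dist_self]
      linarith
    · -- f none at s: then g none at s too (by align), both pieces start at s
      have hPSf : pieceStart f ((s + A)/2) = s := by
        rcases lt_or_eq_of_le hfPS with h | h
        · exfalso
          have : (f.f s).isSome := by
            apply pieceStart_some hfsome
            constructor
            · exact h
            · linarith [hmf.1]
          exact hfs this
        · exact h
      have hlenf : dist x yf = A - s := by
        rw [piece_len hfsome hvf, hfPE, hPSf]
      have hleng : dist x yg = B - s := by
        rw [piece_len hgsome hvg, hgPE, ← halign, hPSf]
      have : dist yf yg ≤ dist yf x + dist x yg := dist_triangle _ _ _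
      rw [dist_comm yf x] at this
      rw [hlenf, hleng] at this
      linarith
  · linarith

lemma d_sub_lt {f g : TreeProdFun I M} {ε : ℝ} (h : Dtp f g < ε) : f.d - g.d < ε := by
  rcases Dtp_cases h with ⟨h1, _⟩ | ⟨γ, af, ag, i, x, yf, yg, hγ0, hγs, hsaf, hsag, hafd, hagd,
    hf, hg, _, _, _, _, hlf, hlg, heq⟩
  · have := divPt_le_right f g
    linarith
  · have htri : dist x yf - dist x yg ≤ dist yf yg := by
      have h1 := abs_dist_sub_le yf yg x
      rw [dist_comm yf x, dist_comm yg x] at h1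
      have := abs_le.mp h1
      linarith [this.2]
    linarith

/-- If `t` is below both divergence points, the values agree (including `none`s). -/
lemma agree_below_both {f g : TreeProdFun I M} {t : ℝ}
    (h1 : t ∈ Set.Ioo 0 (divPt f g)) (h2 : t ∈ Set.Ioo 0 (divPt g f)) : f.f t = g.f t := by
  by_cases hf : (f.f t).isSome
  · exact divPt_agree f g t h1 hf
  · by_cases hg : (g.f t).isSome
    · exact (divPt_agree g f t h2 hg).symm
    · rw [Option.not_isSome_iff_eq_none] at hf hg
      rw [hf, hg]

/-- A maximal interval in the domain is canonically recovered by `pieceStart`/`pieceEnd`. -/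
lemma piece_eq {f : TreeProdFun I M} {t a b : ℝ} (ht : t ∈ Set.Ioo a b)
    (hsome : ∀ u ∈ Set.Ioo a b, (f.f u).isSome)
    (ha : f.f a = none) (hb : f.f b = none) (h0 : 0 ≤ a) (hd : b ≤ f.d) :
    pieceStart f t = a ∧ pieceEnd f t = b := by
  have hts : (f.f t).isSome := hsome t ht
  constructor
  · apply le_antisymm
    · apply pieceStart_le' hts ht.1.le h0
      intro u hu
      rcases eq_or_lt_of_le hu.2 with h | h
      · rw [h]; exact hts
      · exact hsome u ⟨hu.1, lt_trans h ht.2⟩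
    · by_contra hc
      push_neg at hc
      have : (f.f a).isSome := pieceStart_some hts a ⟨hc, ht.1.le⟩
      rw [ha] at this; simp at this
  · apply le_antisymm
    · by_contra hc
      push_neg at hc
      have : (f.f b).isSome := pieceEnd_some hts b ⟨ht.2.le, hc⟩
      rw [hb] at this; simp at this
    · apply le_pieceEnd hts ht.2.le hd
      intro u hu
      rcases eq_or_lt_of_le hu.1 with h | h
      · rw [← h]; exact hts
      · exact hsome u ⟨lt_trans ht.1 h, hu.2⟩

open Filter in
/-- Construction of the limit in the stable case. -/
lemma caseA_exists (v : ℕ → TreeProdFun I M) (δ : ℕ → ℝ) (dI : ℝ)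
    (hδ0 : ∀ K, 0 ≤ δ K)
    (hδd : ∀ K l, K ≤ l → δ K ≤ (v l).d)
    (hδdI : ∀ K, δ K ≤ dI)
    (hag : ∀ K m l, K ≤ m → K ≤ l → ∀ t ∈ Set.Ioo (0:ℝ) (δ K), (v m).f t = (v l).f t)
    (hd : Tendsto (fun k => (v k).d) atTop (nhds dI))
    (hδlim : Tendsto δ atTop (nhds dI)) :
    ∃ F : TreeProdFun I M, F.d = dI ∧ ∀ K, ∀ t ∈ Set.Ioo 0 (δ K), F.f t = (v K).f t := by
  classical
  set Ff : ℝ → Option (PairVal I M) :=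
    fun t => if h : ∃ K, t ∈ Set.Ioo 0 (δ K) then (v h.choose).f t else none with hFf
  have char : ∀ K, ∀ t ∈ Set.Ioo 0 (δ K), Ff t = (v K).f t := by
    intro K t ht
    have hex : ∃ K, t ∈ Set.Ioo 0 (δ K) := ⟨K, ht⟩
    simp only [hFf, dif_pos hex]
    rcases min_cases hex.choose K with ⟨hmin, _⟩ | ⟨hmin, _⟩
    · exact hag (min hex.choose K) hex.choose K (min_le_left _ _) (min_le_right _ _) t
        (by rw [hmin]; exact hex.choose_spec)
    · exact hag (min hex.choose K) hex.choose K (min_le_left _ _) (min_le_right _ _) t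
        (by rw [hmin]; exact ht)
  have hnone : ∀ t, (¬ ∃ K, t ∈ Set.Ioo 0 (δ K)) → Ff t = none := by
    intro t h; simp only [hFf, dif_neg h]
  have hsub : ∀ t, (Ff t).isSome → ∃ K, t ∈ Set.Ioo 0 (δ K) := by
    intro t h
    by_contra hc
    rw [hnone t hc] at h; simp at h
  have hsubI : ∀ t, (Ff t).isSome → t ∈ Set.Ioo 0 dI := by
    intro t h
    obtain ⟨K, hK⟩ := hsub t h
    exact ⟨hK.1, lt_of_lt_of_le hK.2 (hδdI K)⟩
  have hexgt : ∀ r, r < dI → ∃ K, r < δ K := by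
    intro r hr
    exact (hδlim.eventually (eventually_gt_nhds hr)).exists
  have hexgt2 : ∀ r ε, r < dI → 0 < ε → ∃ K, r < δ K ∧ (v K).d < dI + ε := by
    intro r ε hr hε
    exact ((hδlim.eventually (eventually_gt_nhds hr)).and
      (hd.eventually (eventually_lt_nhds (by linarith)))).exists
  have hIoo_bound : ∀ a b : ℝ, a < b → (∀ u ∈ Set.Ioo a b, (Ff u).isSome) →
      0 ≤ a ∧ b ≤ dI := by
    intro a b hab hsome
    constructor
    · by_contra hc
      push_neg at hc
      have hu : min ((a+b)/2) (a/2) ∈ Set.Ioo a b := by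
        constructor
        · exact lt_min (by linarith) (by linarith)
        · exact lt_of_le_of_lt (min_le_left _ _) (by linarith)
      have h1 := (hsubI _ (hsome _ hu)).1
      have h2 : min ((a+b)/2) (a/2) ≤ a/2 := min_le_right _ _
      linarith
    · by_contra hc
      push_neg at hc
      have hu : max ((a+b)/2) ((dI+b)/2) ∈ Set.Ioo a b := by
        constructor
        · exact lt_of_lt_of_le (by linarith) (le_max_left _ _)
        · exact max_lt (by linarith) (by linarith)
      have h2 := (hsubI _ (hsome _ hu)).2
      have h3 : (dI+b)/2 ≤ max ((a+b)/2) ((dI+b)/2) := le_max_right _ _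
      linarith
  have htransfer_none : ∀ (K : ℕ) (r : ℝ), 0 ≤ r → r < δ K → Ff r = none →
      (v K).f r = none := by
    intro K r hr0 hrK hnone'
    rcases eq_or_lt_of_le hr0 with h0 | h0
    · exact (v K).none_of_notIoo (by rw [← h0]; simp)
    · rw [← char K r ⟨h0, hrK⟩]; exact hnone'
  have hd0 : 0 ≤ dI := le_trans (hδ0 0) (hδdI 0)
  refine ⟨⟨dI, hd0, Ff, hsubI, ?_, ?_, ?_, ?_, ?_, ?_, ?_⟩, rfl, char⟩
  · -- dom_open
    have hset : {t : ℝ | (Ff t).isSome = true} =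
        ⋃ K, (Set.Ioo 0 (δ K) ∩ {t : ℝ | ((v K).f t).isSome = true}) := by
      ext t
      simp only [Set.mem_setOf_eq, Set.mem_iUnion, Set.mem_inter_iff]
      constructor
      · intro h
        obtain ⟨K, hK⟩ := hsub t h
        refine ⟨K, hK, ?_⟩
        rw [← char K t hK]
        exact h
      · rintro ⟨K, hK, hsome⟩
        rw [char K t hK]
        exact hsome
    rw [hset]
    exact isOpen_iUnion (fun K => isOpen_Ioo.inter (v K).dom_open)
  · -- dom_dense
    intro t ht
    rw [_root_.mem_closure_iff]
    intro O hO htO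
    obtain ⟨K, hK⟩ := hexgt t ht.2
    have htK : t ∈ Set.Ioo 0 ((v K).d) := ⟨ht.1, lt_of_lt_of_le hK (hδd K K (le_refl K))⟩
    have := (v K).dom_dense htK
    rw [_root_.mem_closure_iff] at this
    obtain ⟨s, hs1, hs2⟩ := this (O ∩ Set.Ioo 0 (δ K)) (hO.inter isOpen_Ioo)
      ⟨htO, ht.1, hK⟩
    refine ⟨s, hs1.1, ?_⟩
    show (Ff s).isSome
    rw [char K s hs1.2]
    exact hs2
  · -- distinct
    intro t i x y h
    have hsome : (Ff t).isSome := by rw [h]; rfl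
    obtain ⟨K, hK⟩ := hsub t hsome
    exact (v K).distinct t i x y (by rw [← char K t hK]; exact h)
  · -- locConst
    intro t hsome
    obtain ⟨K, hK⟩ := hsub t hsome
    have h1 : ∀ᶠ s in nhds t, (v K).f s = (v K).f t := (v K).locConst t
      (by rw [← char K t hK]; exact hsome)
    have h2 : ∀ᶠ s in nhds t, s ∈ Set.Ioo 0 (δ K) :=
      eventually_of_mem (Ioo_mem_nhds hK.1 hK.2) (fun s hs => hs)
    filter_upwards [h1, h2] with s hs1 hs2
    rw [char K s hs2, hs1, ← char K t hK]
  · -- intervalLen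
    intro a b hab hsome hna hnb t htmem i x y hval
    obtain ⟨ha0, hbI⟩ := hIoo_bound a b hab hsome
    have ht0 : 0 < t := by linarith [htmem.1]
    rcases eq_or_lt_of_le hbI with hbeq | hblt
    · -- b = dI: limiting piece
      have hkey : ∀ ε, 0 < ε → b - ε ≤ a + dist x y ∧ a + dist x y < b + ε := by
        intro ε hε
        obtain ⟨K, hK1, hK2⟩ := hexgt2 (max t (b - ε)) ε
          (by rw [← hbeq]; exact max_lt htmem.2 (by linarith)) hε
        have htδ : t < δ K := lt_of_le_of_lt (le_max_left _ _) hK1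
        have hbε : b - ε < δ K := lt_of_le_of_lt (le_max_right _ _) hK1
        have hvKt : (v K).f t = some ⟨i,(x,y)⟩ := by
          rw [← char K t ⟨ht0, htδ⟩]; exact hval
        have hvKsome : ((v K).f t).isSome := by rw [hvKt]; rfl
        have hPS : pieceStart (v K) t = a := by
          apply le_antisymm
          · apply pieceStart_le' hvKsome htmem.1.le ha0
            intro u hu
            have hub : u ∈ Set.Ioo a b := ⟨hu.1, lt_of_le_of_lt hu.2 htmem.2⟩
            rw [← char K u ⟨by linarith [hu.1], by linarith [hu.2]⟩]
            exact hsome u hub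
          · by_contra hc
            push_neg at hc
            have haSome : ((v K).f a).isSome := pieceStart_some hvKsome a ⟨hc, htmem.1.le⟩
            rw [htransfer_none K a ha0 (by linarith [htmem.1])
              (Option.not_isSome_iff_eq_none.mp hna)] at haSome
            simp at haSome
        have hlen : dist x y = pieceEnd (v K) t - a := by rw [piece_len hvKsome hvKt, hPS]
        have hup : pieceEnd (v K) t ≤ (v K).d := pieceEnd_le_d hvKsome
        have hlow : min (δ K) b ≤ pieceEnd (v K) t := by
          apply le_pieceEnd hvKsome (le_min htδ.le htmem.2.le)
          · exact (min_le_left _ _).trans (hδd K K (le_refl K))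
          · intro u hu
            have hub : u ∈ Set.Ioo a b :=
              ⟨lt_of_lt_of_le htmem.1 hu.1, lt_of_lt_of_le hu.2 (min_le_right _ _)⟩
            rw [← char K u ⟨by linarith [hub.1], lt_of_lt_of_le hu.2 (min_le_left _ _)⟩]
            exact hsome u hub
        have hminb : b - ε ≤ min (δ K) b := le_min hbε.le (by linarith)
        constructor
        · linarith
        · have : a + dist x y ≤ (v K).d := by linarith
          linarith [hbeq.symm ▸ hK2]
      have h1 : a + dist x y ≤ b := le_of_forall_pos_le_add
        (fun ε hε => by linarith [(hkey ε hε).2])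
      have h2 : b ≤ a + dist x y := le_of_forall_pos_le_add
        (fun ε hε => by linarith [(hkey ε hε).1])
      linarith
    · -- b < dI : transfer
      obtain ⟨K, hK⟩ := hexgt b hblt
      have htrans : ∀ u ∈ Set.Ioo a b, (v K).f u = Ff u := by
        intro u hu
        exact (char K u ⟨by linarith [hu.1], lt_trans hu.2 hK⟩).symm
      apply (v K).intervalLen a b hab
      · intro u hu; rw [htrans u hu]; exact hsome u hu
      · rw [htransfer_none K a ha0 (by linarith) (Option.not_isSome_iff_eq_none.mp hna)]
        simp
      · rw [htransfer_none K b (by linarith) hK (Option.not_isSome_iff_eq_none.mp hnb)]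
        simp
      · exact htmem
      · rw [htrans t htmem]; exact hval
  · -- noFakeExit
    intro a b c hab hbc hsome1 hsome2 hna hnb hnc s hs t ht i x y z w hvs hvt
    obtain ⟨ha0, hbI⟩ := hIoo_bound a b hab hsome1
    obtain ⟨hb0, hcI⟩ := hIoo_bound b c hbc hsome2
    obtain ⟨K, hK⟩ := hexgt t (lt_of_lt_of_le ht.2 hcI)
    have hbδ : b < δ K := by linarith [ht.1]
    have hvKt : (v K).f t = some ⟨i,(z,w)⟩ := by
      rw [← char K t ⟨by linarith [ht.1, hb0], hK⟩]; exact hvt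
    have hvKsome : ((v K).f t).isSome := by rw [hvKt]; rfl
    set c' := pieceEnd (v K) t with hc'
    apply (v K).noFakeExit a b c' hab (lt_trans ht.1 (lt_pieceEnd hvKsome))
    · intro u hu
      rw [← char K u ⟨by linarith [hu.1], by linarith [hu.2]⟩]
      exact hsome1 u hu
    · intro u hu
      rcases le_or_gt u t with h | h
      · rw [← char K u ⟨by linarith [hu.1, hb0], by linarith⟩]
        exact hsome2 u ⟨hu.1, lt_of_le_of_lt h ht.2⟩
      · exact pieceEnd_some hvKsome u ⟨h.le, hu.2⟩
    · rw [htransfer_none K a ha0 (by linarith) (Option.not_isSome_iff_eq_none.mp hna)]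
      simp
    · rw [htransfer_none K b hb0 hbδ (Option.not_isSome_iff_eq_none.mp hnb)]
      simp
    · rw [pieceEnd_none hvKsome]
      simp
    · exact hs
    · exact ⟨ht.1, lt_pieceEnd hvKsome⟩
    · rw [← char K s ⟨by linarith [hs.1], by linarith [hs.2]⟩]; exact hvs
    · exact hvKt
  · -- noBacktrack
    intro p q hq hsub' hall
    have hp : p ∈ Set.Ioo (p - q) (p + q) := ⟨by linarith, by linarith⟩
    have hpI := hsub' hp
    have hpq0 : 0 ≤ p - q := by
      by_contra hc
      push_neg at hc
      have hu : (p-q)/2 ∈ Set.Ioo (p-q) (p+q) := ⟨by linarith, by linarith [hpI.1]⟩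
      have := (hsub' hu).1
      linarith
    obtain ⟨K, hK⟩ := hexgt p hpI.2
    set q' := min q (δ K - p) with hq'
    have hq'0 : 0 < q' := lt_min hq (by linarith)
    have hq'q : q' ≤ q := min_le_left _ _
    have hsub2 : Set.Ioo (p - q') (p + q') ⊆ Set.Ioo 0 ((v K).d) := by
      intro u hu
      constructor
      · have : p - q ≤ p - q' := by linarith
        linarith [hu.1]
      · have h1 : p + q' ≤ δ K := by
          have := min_le_right q (δ K - p)
          simp only [hq']
          linarith
        have h2 := hδd K K (le_refl K)
        linarith [hu.2]
    refine (v K).noBacktrack p q' hq'0 hsub2 (fun t ht => ?_)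
    have h1 : t ∈ Set.Ioo (p - q) (p + q) := ⟨by linarith [ht.1], by linarith [ht.2]⟩
    have h2 : t ∈ Set.Ioo 0 (δ K) := by
      have := hsub2 ht
      exact ⟨this.1, by linarith [ht.2, min_le_right q (δ K - p)]⟩
    have h3 : 2*p - t ∈ Set.Ioo 0 (δ K) := by
      have hm : 2*p - t ∈ Set.Ioo (p - q') (p + q') := ⟨by linarith [ht.2], by linarith [ht.1]⟩
      have := hsub2 hm
      exact ⟨this.1, by linarith [hm.2, min_le_right q (δ K - p)]⟩
    have h4 := hall t h1
    rw [char K t h2, char K (2*p - t) h3] at h4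
    exact h4

lemma pairval_inj {i j : I} {a b : M i} {c d : M j}
    (h : (⟨i,(a,b)⟩ : PairVal I M) = ⟨j,(c,d)⟩) :
    ∃ hh : i = j, cast (congrArg M hh) a = c ∧ cast (congrArg M hh) b = d := by
  cases h; exact ⟨rfl, rfl, rfl⟩

lemma swap_map_eq {o : Option (PairVal I M)} {i : I} {a b : M i}
    (h : (some ⟨i,(a,b)⟩ : Option (PairVal I M)) =
      Option.map (fun v : PairVal I M => ⟨v.1, (v.2.2, v.2.1)⟩) o) :
    o = some ⟨i,(b,a)⟩ := by
  rcases o with _ | ⟨j, c, e⟩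
  · simp at h
  · simp only [Option.map_some] at h
    obtain ⟨hh, h1, h2⟩ := pairval_inj (Option.some.inj h)
    subst hh
    simp only [cast_eq] at h1 h2
    subst h1; subst h2
    rfl

open Filter in
/-- Construction of the limit in the divergent (new final piece) case. -/
lemma caseB_exists (w : ℕ → TreeProdFun I M) (γ dI : ℝ) (i : I) (x : M i) (y : ℕ → M i)
    (b : ℕ → ℝ) (ylim : M i)
    (hγ0 : 0 ≤ γ) (hγdI : γ < dI)
    (hγb : ∀ m, γ < b m)
    (hγnone : ∀ m, (w m).f γ = none)
    (hagree : ∀ m l, ∀ t ∈ Set.Ioo (0:ℝ) γ, (w m).f t = (w l).f t)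
    (hpiece : ∀ m, ∀ t ∈ Set.Ioo γ (b m), (w m).f t = some ⟨i,(x, y m)⟩)
    (hbnone : ∀ m, (w m).f (b m) = none)
    (hbd : ∀ m, b m ≤ (w m).d)
    (hylim : Tendsto y atTop (nhds ylim))
    (hblim : Tendsto b atTop (nhds dI))
    (hblen : ∀ m, dist x (y m) = b m - γ) :
    ∃ F : TreeProdFun I M, F.d = dI ∧
      (∀ t, t ≤ γ → F.f t = (w 0).f t) ∧
      (∀ t ∈ Set.Ioo γ dI, F.f t = some ⟨i,(x,ylim)⟩) ∧
      (∀ t, dI ≤ t → F.f t = none) := by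
  classical
  have hdist : dist x ylim = dI - γ := by
    have h1 : Tendsto (fun m => dist x (y m)) atTop (nhds (dist x ylim)) :=
      tendsto_const_nhds.dist hylim
    have h2 : Tendsto (fun m => b m - γ) atTop (nhds (dI - γ)) :=
      hblim.sub tendsto_const_nhds
    exact tendsto_nhds_unique (by simpa only [hblen] using h1) h2
  have hxy : x ≠ ylim := by
    intro h
    rw [h, dist_self] at hdist
    linarith
  have hw0d : γ < (w 0).d := lt_of_lt_of_le (hγb 0) (hbd 0)
  set Ff : ℝ → Option (PairVal I M) := fun t =>
    if γ < t ∧ t < dI then some ⟨i,(x,ylim)⟩ else (if t < γ then (w 0).f t else none)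
    with hFf
  have char1 : ∀ t, t ≤ γ → Ff t = (w 0).f t := by
    intro t ht
    have hnc : ¬(γ < t ∧ t < dI) := fun hc => absurd hc.1 (not_lt.mpr ht)
    rcases lt_or_eq_of_le ht with h | h
    · simp only [hFf, if_neg hnc, if_pos h]
    · have hnc2 : ¬(t < γ) := by rw [h]; exact lt_irrefl γ
      simp only [hFf, if_neg hnc, if_neg hnc2]
      rw [h, hγnone 0]
  have char2 : ∀ t ∈ Set.Ioo γ dI, Ff t = some ⟨i,(x,ylim)⟩ := by
    intro t ht
    simp only [hFf, if_pos (And.intro ht.1 ht.2)]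
  have char3 : ∀ t, dI ≤ t → Ff t = none := by
    intro t ht
    have hnc1 : ¬(γ < t ∧ t < dI) := fun hc => absurd hc.2 (not_lt.mpr ht)
    have hnc2 : ¬(t < γ) := not_lt.mpr (le_trans hγdI.le ht)
    simp only [hFf, if_neg hnc1, if_neg hnc2]
  have hd0 : 0 ≤ dI := le_trans hγ0 hγdI.le
  have hsubI : ∀ t, (Ff t).isSome → t ∈ Set.Ioo 0 dI := by
    intro t h
    by_cases h1 : γ < t ∧ t < dI
    · exact ⟨by linarith [h1.1], h1.2⟩
    · by_cases h2 : t < γ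
      · have : Ff t = (w 0).f t := char1 t h2.le
        rw [this] at h
        have := (w 0).isSome_mem h
        exact ⟨this.1, by linarith⟩
      · exfalso
        have : Ff t = none := by simp only [hFf, if_neg h1, if_neg h2]
        rw [this] at h; simp at h
  have hIoo_bound : ∀ a c : ℝ, a < c → (∀ u ∈ Set.Ioo a c, (Ff u).isSome) →
      0 ≤ a ∧ c ≤ dI := by
    intro a c hac hsome
    constructor
    · by_contra hc
      push_neg at hc
      have hu : min ((a+c)/2) (a/2) ∈ Set.Ioo a c :=
        ⟨lt_min (by linarith) (by linarith), lt_of_le_of_lt (min_le_left _ _) (by linarith)⟩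
      have h1 := (hsubI _ (hsome _ hu)).1
      have h2 : min ((a+c)/2) (a/2) ≤ a/2 := min_le_right _ _
      linarith
    · by_contra hc
      push_neg at hc
      have hu : max ((a+c)/2) ((dI+c)/2) ∈ Set.Ioo a c :=
        ⟨lt_of_lt_of_le (by linarith) (le_max_left _ _), max_lt (by linarith) (by linarith)⟩
      have h2 := (hsubI _ (hsome _ hu)).2
      have h3 : (dI+c)/2 ≤ max ((a+c)/2) ((dI+c)/2) := le_max_right _ _
      linarith
  have hγnoneF : Ff γ = none := by rw [char1 γ (le_refl γ), hγnone 0]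
  refine ⟨⟨dI, hd0, Ff, hsubI, ?_, ?_, ?_, ?_, ?_, ?_, ?_⟩, rfl, char1, char2, char3⟩
  · -- dom_open
    have hset : {t : ℝ | (Ff t).isSome = true} =
        Set.Ioo γ dI ∪ (Set.Iio γ ∩ {t : ℝ | ((w 0).f t).isSome = true}) := by
      ext t
      simp only [Set.mem_setOf_eq, Set.mem_union, Set.mem_inter_iff, Set.mem_Iio]
      constructor
      · intro h
        by_cases h1 : γ < t ∧ t < dI
        · exact Or.inl ⟨h1.1, h1.2⟩
        · by_cases h2 : t < γ
          · rw [char1 t h2.le] at h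
            exact Or.inr ⟨h2, h⟩
          · exfalso
            have : Ff t = none := by simp only [hFf, if_neg h1, if_neg h2]
            rw [this] at h; simp at h
      · rintro (h | ⟨h1, h2⟩)
        · rw [char2 t h]; rfl
        · rw [char1 t h1.le]; exact h2
    rw [hset]
    exact isOpen_Ioo.union (isOpen_Iio.inter (w 0).dom_open)
  · -- dom_dense
    intro t ht
    rw [_root_.mem_closure_iff]
    intro O hO htO
    rcases lt_or_ge t γ with h | h
    · have htw : t ∈ Set.Ioo 0 ((w 0).d) := ⟨ht.1, by linarith⟩
      have := (w 0).dom_dense htw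
      rw [_root_.mem_closure_iff] at this
      obtain ⟨s, hs1, hs2⟩ := this (O ∩ Set.Iio γ) (hO.inter isOpen_Iio) ⟨htO, h⟩
      refine ⟨s, hs1.1, ?_⟩
      show (Ff s).isSome
      rw [char1 s hs1.2.le]
      exact hs2
    · have hcl : t ∈ closure (Set.Ioo γ dI) := by
        rw [closure_Ioo (ne_of_lt hγdI)]
        exact ⟨h, ht.2.le⟩
      rw [_root_.mem_closure_iff] at hcl
      obtain ⟨s, hs1, hs2⟩ := hcl O hO htO
      refine ⟨s, hs1, ?_⟩
      show (Ff s).isSome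
      rw [char2 s hs2]; rfl
  · -- distinct
    intro t i' x' y' h
    by_cases h1 : γ < t ∧ t < dI
    · rw [char2 t ⟨h1.1, h1.2⟩] at h
      obtain ⟨hh, hx, hy⟩ := pairval_inj (Option.some.inj h)
      subst hh
      simp only [cast_eq] at hx hy
      subst hx; subst hy
      exact hxy
    · by_cases h2 : t < γ
      · rw [char1 t h2.le] at h
        exact (w 0).distinct t i' x' y' h
      · exfalso
        have : Ff t = none := by simp only [hFf, if_neg h1, if_neg h2]
        rw [this] at h; cases h
  · -- locConst
    intro t hsome
    by_cases h1 : γ < t ∧ t < dI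
    · have h2 : ∀ᶠ s in nhds t, s ∈ Set.Ioo γ dI :=
        eventually_of_mem (Ioo_mem_nhds h1.1 h1.2) (fun s hs => hs)
      filter_upwards [h2] with s hs
      rw [char2 s hs, char2 t ⟨h1.1, h1.2⟩]
    · by_cases h2 : t < γ
      · have h3 : ∀ᶠ s in nhds t, (w 0).f s = (w 0).f t := (w 0).locConst t
          (by rw [← char1 t h2.le]; exact hsome)
        have h4 : ∀ᶠ s in nhds t, s ∈ Set.Iio γ :=
          eventually_of_mem (Iio_mem_nhds h2) (fun s hs => hs)
        filter_upwards [h3, h4] with s hs1 hs2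
        rw [char1 s hs2.le, hs1, ← char1 t h2.le]
      · exfalso
        have : Ff t = none := by simp only [hFf, if_neg h1, if_neg h2]
        rw [this] at hsome; simp at hsome
  · -- intervalLen
    intro a c hac hsome hna hnc t htmem i' x' y' hval
    obtain ⟨ha0, hcI⟩ := hIoo_bound a c hac hsome
    have hγnotin : γ ∉ Set.Ioo a c := by
      intro hmem
      have := hsome γ hmem
      rw [hγnoneF] at this; simp at this
    rcases le_or_gt c γ with hcase | hcase
    · -- transfer to w 0
      apply (w 0).intervalLen a c hac
      · intro u hu
        rw [← char1 u (by linarith [hu.2])]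
        exact hsome u hu
      · rw [← char1 a (by linarith)]
        exact hna
      · rw [← char1 c hcase]
        exact hnc
      · exact htmem
      · rw [← char1 t (by linarith [htmem.2])]
        exact hval
    · -- the final piece: a = γ, c = dI
      have haγ : γ ≤ a := by
        by_contra hcon
        push_neg at hcon
        exact hγnotin ⟨hcon, hcase⟩
      have haeq : a = γ := by
        rcases eq_or_lt_of_le haγ with h | h
        · exact h.symm
        · exfalso
          have haI : a < dI := lt_of_lt_of_le hac hcI
          have : (Ff a).isSome := by rw [char2 a ⟨h, haI⟩]; rfl
          exact hna this
      have hceq : c = dI := by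
        rcases eq_or_lt_of_le hcI with h | h
        · exact h
        · exfalso
          have : (Ff c).isSome := by rw [char2 c ⟨by linarith, h⟩]; rfl
          exact hnc this
      have hvt : Ff t = some ⟨i,(x,ylim)⟩ := char2 t ⟨by rw [← haeq]; exact htmem.1,
        by rw [← hceq]; exact htmem.2⟩
      rw [hval] at hvt
      obtain ⟨hh, hx, hy⟩ := pairval_inj (Option.some.inj hvt)
      subst hh
      simp only [cast_eq] at hx hy
      subst hx; subst hy
      rw [hdist, haeq, hceq]
  · -- noFakeExit
    intro a c e hac hce hsome1 hsome2 hna hnc hne s hs t ht i' x1 y1 z1 w1 hvs hvt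
    obtain ⟨ha0, hcI⟩ := hIoo_bound a c hac hsome1
    obtain ⟨hc0, heI⟩ := hIoo_bound c e hce hsome2
    have hγnotin1 : γ ∉ Set.Ioo a c := by
      intro hmem
      have := hsome1 γ hmem
      rw [hγnoneF] at this; simp at this
    have hγnotin2 : γ ∉ Set.Ioo c e := by
      intro hmem
      have := hsome2 γ hmem
      rw [hγnoneF] at this; simp at this
    rcases le_or_gt e γ with hcase | hcase
    · -- full transfer to w 0
      refine (w 0).noFakeExit a c e hac hce ?_ ?_ ?_ ?_ ?_ s hs t ht i' x1 y1 z1 w1 ?_ ?_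
      · intro u hu
        rw [← char1 u (by linarith [hu.2])]; exact hsome1 u hu
      · intro u hu
        rw [← char1 u (by linarith [hu.2])]; exact hsome2 u hu
      · rw [← char1 a (by linarith)]; exact hna
      · rw [← char1 c (by linarith)]; exact hnc
      · rw [← char1 e hcase]; exact hne
      · rw [← char1 s (by linarith [hs.2])]; exact hvs
      · rw [← char1 t (by linarith [ht.2])]; exact hvt
    · -- e > γ : γ ≤ c (since γ ∉ ]c,e[ and γ < e)
      have hγc : γ ≤ c := by
        by_contra hcon
        push_neg at hcon
        exact hγnotin2 ⟨hcon, hcase⟩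
      rcases eq_or_lt_of_le hγc with hceq | hclt
      · -- c = γ: the no-fake-exit across the final piece, use w 0
        -- identify the value of the t piece
        have heeq : e = dI := by
          rcases eq_or_lt_of_le heI with h | h
          · exact h
          · exfalso
            have : (Ff e).isSome := by rw [char2 e ⟨by linarith, h⟩]; rfl
            exact hne this
        have hvt2 : Ff t = some ⟨i,(x,ylim)⟩ := char2 t ⟨by rw [hceq]; exact ht.1,
          by rw [← heeq]; exact ht.2⟩
        rw [hvt] at hvt2
        obtain ⟨hh, hx, hy⟩ := pairval_inj (Option.some.inj hvt2)
        subst hh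
        simp only [cast_eq] at hx hy
        rw [hx]
        -- now use (w 0) with intervals ]a,c=γ[ and ]γ, b 0[
        have hres := (w 0).noFakeExit a γ (b 0) (by rw [hceq]; exact hac) (hγb 0)
          ?_ ?_ ?_ ?_ ?_ s (by rw [hceq]; exact hs)
          ((γ + b 0)/2) ⟨by linarith [hγb 0], by linarith [hγb 0]⟩ i' x1 y1 x (y 0) ?_ ?_
        · exact hres
        · intro u hu
          rw [← char1 u (by linarith [hu.2])]
          exact hsome1 u (by rw [← hceq]; exact hu)
        · intro u hu
          rw [hpiece 0 u hu]; rfl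
        · rw [← char1 a (by linarith [hac, hceq])]; exact hna
        · rw [hγnone 0]; simp
        · rw [hbnone 0]; simp
        · rw [← char1 s (by linarith [hs.2, hceq])]; exact hvs
        · exact hpiece 0 _ ⟨by linarith [hγb 0], by linarith [hγb 0]⟩
      · -- γ < c : impossible since c would be in the final piece
        exfalso
        have hcd : c < dI := lt_of_lt_of_le hce heI
        have : (Ff c).isSome := by rw [char2 c ⟨hclt, hcd⟩]; rfl
        exact hnc this
  · -- noBacktrack
    intro p q hq hsub hall
    have hp : p ∈ Set.Ioo (p - q) (p + q) := ⟨by linarith, by linarith⟩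
    have hpI := hsub hp
    have hpq0 : 0 ≤ p - q := by
      by_contra hc
      push_neg at hc
      have hu : (p-q)/2 ∈ Set.Ioo (p-q) (p+q) := ⟨by linarith, by linarith [hpI.1]⟩
      have := (hsub hu).1
      linarith
    have hpqd : p + q ≤ dI := by
      by_contra hc
      push_neg at hc
      have hu : max p ((dI + (p+q))/2) ∈ Set.Ioo (p-q) (p+q) :=
        ⟨lt_of_lt_of_le (by linarith) (le_max_left _ _), max_lt (by linarith) (by linarith)⟩
      have h1 := (hsub hu).2
      have h2 : (dI + (p+q))/2 ≤ max p ((dI + (p+q))/2) := le_max_right _ _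
      linarith
    rcases le_or_gt (p + q) γ with hcase | hcase
    · -- transfer to w 0
      refine (w 0).noBacktrack p q hq ?_ (fun t ht => ?_)
      · intro u hu
        exact ⟨by linarith [hu.1], by linarith [hu.2]⟩
      · have h1 := hall t ht
        rw [char1 t (by linarith [ht.2]), char1 (2*p - t) (by linarith [ht.1])] at h1
        exact h1
    · rcases lt_trichotomy p γ with hpγ | hpγ | hpγ
      · -- p < γ < p + q: reflect inside the w 0 region
        refine (w 0).noBacktrack p (γ - p) (by linarith) ?_ (fun t ht => ?_)
        · intro u hu
          constructor
          · have : p - (γ - p) = 2*p - γ := by ring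
            have h2 : p - q ≤ 2*p - γ := by linarith
            linarith [hu.1]
          · have : p + (γ - p) = γ := by ring
            rw [this] at hu
            linarith [hu.2]
        · have htI : t ∈ Set.Ioo (p - q) (p + q) :=
            ⟨by linarith [ht.1], by linarith [ht.2]⟩
          have h1 := hall t htI
          have ht2 : t < γ := by linarith [ht.2]
          have ht3 : 2*p - t < γ := by linarith [ht.1]
          rw [char1 t ht2.le, char1 (2*p - t) ht3.le] at h1
          exact h1
      · -- p = γ
        subst hpγ
        -- the function near p takes value (ylim, x) to the left
        set m₀ := min q (dI - p) with hm₀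
        have hm₀0 : 0 < m₀ := lt_min hq (by linarith)
        have hleft : ∀ u ∈ Set.Ioo (p - m₀) p, (w 0).f u = some ⟨i,(ylim,x)⟩ := by
          intro u hu
          have hτ : 2*p - u ∈ Set.Ioo p (p + m₀) := ⟨by linarith [hu.2], by linarith [hu.1]⟩
          have hτI : 2*p - u ∈ Set.Ioo (p - q) (p + q) :=
            ⟨by linarith [hτ.1], by linarith [hτ.2, min_le_left q (dI - p)]⟩
          have h1 := hall (2*p - u) hτI
          have hτ2 : 2*p - u ∈ Set.Ioo p dI :=
            ⟨hτ.1, by linarith [hτ.2, min_le_right q (dI - p)]⟩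
          rw [char2 _ hτ2] at h1
          have : (2:ℝ)*p - (2*p - u) = u := by ring
          rw [this] at h1
          have := swap_map_eq h1
          rw [← char1 u (by linarith [hu.2])]
          exact this
        set t₁ := p - m₀/2 with ht₁
        have ht₁mem : t₁ ∈ Set.Ioo (p - m₀) p := ⟨by simp only [ht₁]; linarith, by simp only [ht₁]; linarith⟩
        have hvt₁ : (w 0).f t₁ = some ⟨i,(ylim,x)⟩ := hleft t₁ ht₁mem
        have hst₁ : ((w 0).f t₁).isSome := by rw [hvt₁]; rfl
        have hpe : pieceEnd (w 0) t₁ = p := by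
          apply le_antisymm
          · by_contra hcon
            push_neg at hcon
            have : ((w 0).f p).isSome := pieceEnd_some hst₁ p ⟨ht₁mem.2.le, hcon⟩
            rw [hγnone 0] at this; simp at this
          · apply le_pieceEnd hst₁ ht₁mem.2.le (by linarith)
            intro u hu
            rcases eq_or_lt_of_le hu.1 with h | h
            · rw [← h]; exact hst₁
            · rw [hleft u ⟨by linarith [ht₁mem.1], hu.2⟩]; rfl
        refine absurd ((w 0).noFakeExit (pieceStart (w 0) t₁) p (b 0)
          (pieceStart_lt hst₁ |>.trans ht₁mem.2) (hγb 0) ?_ ?_ ?_ ?_ ?_ t₁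
          ⟨pieceStart_lt hst₁, ht₁mem.2⟩ ((p + b 0)/2)
          ⟨by linarith [hγb 0], by linarith [hγb 0]⟩ i ylim x x (y 0) hvt₁
          (hpiece 0 _ ⟨by linarith [hγb 0], by linarith [hγb 0]⟩)) (by simp)
        · intro u hu
          rcases le_or_gt u t₁ with h | h
          · exact pieceStart_some hst₁ u ⟨hu.1, h⟩
          · exact pieceEnd_some hst₁ u ⟨h.le, by rw [hpe]; exact hu.2⟩
        · intro u hu
          rw [hpiece 0 u hu]; rfl
        · rw [pieceStart_none hst₁]; simp
        · rw [hγnone 0]; simp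
        · rw [hbnone 0]; simp
      · -- p > γ : the center is inside the final piece
        have hpd : p < dI := by linarith
        have h1 := hall p hp
        rw [char2 p ⟨hpγ, hpd⟩] at h1
        have h3 := swap_map_eq h1
        have h2p : 2*p - p = p := by ring
        rw [h2p, char2 p ⟨hpγ, hpd⟩] at h3
        obtain ⟨hh, hx, _⟩ := pairval_inj (Option.some.inj h3)
        simp only [cast_eq] at hx
        exact hxy hx

open Filter in
/-- Convergence bound in the stable case. -/
lemma convA (v : ℕ → TreeProdFun I M) (δ : ℕ → ℝ) (dI : ℝ) (F : TreeProdFun I M)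
    (hδ0 : ∀ K, 0 ≤ δ K) (hδd : ∀ K l, K ≤ l → δ K ≤ (v l).d) (hδdI : ∀ K, δ K ≤ dI)
    (hag : ∀ K m l, K ≤ m → K ≤ l → ∀ t ∈ Set.Ioo (0:ℝ) (δ K), (v m).f t = (v l).f t)
    (hFd : F.d = dI)
    (hFchar : ∀ K, ∀ t ∈ Set.Ioo 0 (δ K), F.f t = (v K).f t)
    (hd : Tendsto (fun k => (v k).d) atTop (nhds dI))
    (hδlim : Tendsto δ atTop (nhds dI))
    (h : TreeProdFun I M) (e : ℝ) (he : 0 < e)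
    (hpair : ∀ m, Dtp h (v m) < e ∧ Dtp (v m) h < e) :
    Dtp h F ≤ 10 * e := by
  classical
  have hdI0 : 0 ≤ dI := le_trans (hδ0 0) (hδdI 0)
  obtain ⟨K, hK1, hK2, hK3⟩ : ∃ K, dI - e < δ K ∧ dI - e < (v K).d ∧ (v K).d < dI + e := by
    have h1 := hδlim.eventually (eventually_gt_nhds (show dI - e < dI by linarith))
    have h2 := hd.eventually (eventually_gt_nhds (show dI - e < dI by linarith))
    have h3 := hd.eventually (eventually_lt_nhds (show dI < dI + e by linarith))
    obtain ⟨K, hK⟩ := ((h1.and h2).and h3).exists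
    exact ⟨K, hK.1.1, hK.1.2, hK.2⟩
  have hdh1 : h.d - (v K).d < e := d_sub_lt (hpair K).1
  have hdh2 : (v K).d - h.d < e := d_sub_lt (hpair K).2
  have hFnone : ∀ r, dI ≤ r → F.f r = none := by
    intro r hr
    apply F.none_of_notIoo
    rw [hFd]
    intro hc
    linarith [hc.2]
  have hexgt : ∀ r, r < dI → ∃ L, K ≤ L ∧ r < δ L := by
    intro r hr
    have h1 := hδlim.eventually (eventually_gt_nhds hr)
    obtain ⟨L, hL⟩ := (h1.and (eventually_ge_atTop K)).exists
    exact ⟨L, hL.2, hL.1⟩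
  set D := divPt h (v K) with hD
  have hDh : D ≤ h.d := divPt_le_left h (v K)
  have hDK : D ≤ (v K).d := divPt_le_right h (v K)
  rcases Dtp_cases (hpair K).1 with ⟨h1, h2⟩ | ⟨γ, Ah, AK, i, x, yh, yK, hγ0, hγD, hDAh, hDAK,
    hAhd, hAKd, hvalh, hvalK, hγnoneh, hγnoneK, hAhnone, hAKnone, hlenh, hlenK, heq⟩
  · -- type 2
    have hagF : ∀ t ∈ Set.Ioo (0:ℝ) (min D (δ K)), (h.f t).isSome → h.f t = F.f t := by
      intro t ht hsome
      rw [divPt_agree h (v K) t ⟨ht.1, lt_of_lt_of_le ht.2 (min_le_left _ _)⟩ hsome]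
      exact (hFchar K t ⟨ht.1, lt_of_lt_of_le ht.2 (min_le_right _ _)⟩).symm
    have hbound := Dtp_le_of_agree (f := h) (g := F)
      (le_min (divPt_nonneg h (v K)) (hδ0 K))
      ((min_le_left _ _).trans hDh) (by rw [hFd]; exact (min_le_right _ _).trans (hδdI K)) hagF
    rw [hFd] at hbound
    rcases min_cases D (δ K) with ⟨hm, _⟩ | ⟨hm, _⟩ <;> rw [hm] at hbound <;> linarith
  · -- type 1
    have hee : 0 ≤ dist yh yK := dist_nonneg
    have ht1 : h.d - Ah < e := by linarith [(hpair K).1]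
    have ht2 : (v K).d - AK < e := by linarith [(hpair K).1]
    have ht3 : dist yh yK < e := by linarith [(hpair K).1]
    rcases le_or_gt (δ K) γ with hγδ | hγδ
    · -- the piece is beyond the stable region
      have hagF : ∀ t ∈ Set.Ioo (0:ℝ) (δ K), (h.f t).isSome → h.f t = F.f t := by
        intro t ht hsome
        rw [divPt_agree h (v K) t ⟨ht.1, lt_of_lt_of_le ht.2 (hγδ.trans hγD)⟩ hsome]
        exact (hFchar K t ht).symm
      have hbound := Dtp_le_of_agree (f := h) (g := F) (hδ0 K)
        ((hγδ.trans hγD).trans hDh) (by rw [hFd]; exact hδdI K) hagF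
      rw [hFd] at hbound
      linarith
    · -- γ < δ K : F contains the piece of v K
      have hγAK : γ < AK := lt_of_le_of_lt hγD hDAK
      have hγAh : γ < Ah := lt_of_le_of_lt hγD hDAh
      set bg := min AK dI with hbg
      have hγbg : γ < bg := lt_min hγAK (lt_of_lt_of_le hγδ (hδdI K))
      have hm : γ < min (δ K) AK := lt_min hγδ hγAK
      set t' := (γ + min (δ K) AK)/2 with ht'
      have ht'mem : t' ∈ Set.Ioo γ (min (δ K) AK) :=
        ⟨by simp only [ht']; linarith, by simp only [ht']; linarith⟩
      have hvLpiece : ∀ L, K ≤ L → (∀ t ∈ Set.Ioo γ AK, (v L).f t = some ⟨i,(x,yK)⟩) ∧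
          (v L).f AK = none := by
        intro L hLK
        have hvLt' : (v L).f t' = some ⟨i,(x,yK)⟩ := by
          rw [← hag K K L (le_refl K) hLK t'
            ⟨by linarith [ht'mem.1], lt_of_lt_of_le ht'mem.2 (min_le_left _ _)⟩]
          exact hvalK t' ⟨ht'mem.1, lt_of_lt_of_le ht'mem.2 (min_le_right _ _)⟩
        have hsL : ((v L).f t').isSome := by rw [hvLt']; rfl
        have hvLγ : (v L).f γ = none := by
          rcases eq_or_lt_of_le hγ0 with h0 | h0
          · exact (v L).none_of_notIoo (by rw [← h0]; simp)
          · rw [← hag K K L (le_refl K) hLK γ ⟨h0, hγδ⟩]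
            exact hγnoneK
        have hPSL : pieceStart (v L) t' = γ := by
          apply le_antisymm
          · apply pieceStart_le' hsL ht'mem.1.le hγ0
            intro u hu
            have hu2 : u < min (δ K) AK := lt_of_le_of_lt hu.2 ht'mem.2
            rw [← hag K K L (le_refl K) hLK u
              ⟨by linarith [hu.1], lt_of_lt_of_le hu2 (min_le_left _ _)⟩]
            rw [hvalK u ⟨hu.1, lt_of_lt_of_le hu2 (min_le_right _ _)⟩]; rfl
          · by_contra hc
            push_neg at hc
            have : ((v L).f γ).isSome := pieceStart_some hsL γ ⟨hc, ht'mem.1.le⟩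
            rw [hvLγ] at this; simp at this
        have hPEL : pieceEnd (v L) t' = AK := by
          have hl := piece_len hsL hvLt'
          rw [hPSL] at hl
          linarith [hlenK]
        constructor
        · intro t ht
          rw [piece_const hsL t ⟨by rw [hPSL]; exact ht.1, by rw [hPEL]; exact ht.2⟩]
          exact hvLt'
        · rw [← hPEL]
          exact pieceEnd_none hsL
      have hFpiece : ∀ t ∈ Set.Ioo γ bg, F.f t = some ⟨i,(x,yK)⟩ := by
        intro t ht
        obtain ⟨L, hLK, hLt⟩ := hexgt t (lt_of_lt_of_le ht.2 (min_le_right _ _))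
        rw [hFchar L t ⟨by linarith [ht.1], hLt⟩]
        exact (hvLpiece L hLK).1 t ⟨ht.1, lt_of_lt_of_le ht.2 (min_le_left _ _)⟩
      have hFbg : F.f bg = none := by
        rcases le_or_gt dI AK with hcase | hcase
        · rw [hbg, min_eq_right hcase]
          exact hFnone dI (le_refl dI)
        · rw [hbg, min_eq_left hcase.le]
          obtain ⟨L, hLK, hLt⟩ := hexgt AK hcase
          rw [hFchar L AK ⟨by linarith, hLt⟩]
          exact (hvLpiece L hLK).2
      have hAKdI : dI - AK < 2*e := by linarith
      rcases eq_or_ne yh yK with hyy | hyy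
      · -- equal second coordinates: extended agreement
        have hAhAK : Ah = AK := by
          rw [hyy] at hlenh
          linarith [hlenK]
        have hagF : ∀ t ∈ Set.Ioo (0:ℝ) (min Ah dI), (h.f t).isSome → h.f t = F.f t := by
          intro t ht hsome
          rcases lt_trichotomy t γ with htγ | htγ | htγ
          · rw [divPt_agree h (v K) t ⟨ht.1, lt_of_lt_of_le htγ hγD⟩ hsome]
            exact (hFchar K t ⟨ht.1, lt_trans htγ hγδ⟩).symm
          · exfalso
            rw [htγ, hγnoneh] at hsome
            simp at hsome
          · have htmem : t ∈ Set.Ioo γ Ah := ⟨htγ, lt_of_lt_of_le ht.2 (min_le_left _ _)⟩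
            have htbg : t ∈ Set.Ioo γ bg := by
              rw [hbg]
              refine ⟨htγ, lt_min ?_ (lt_of_lt_of_le ht.2 (min_le_right _ _))⟩
              rw [← hAhAK]; exact htmem.2
            rw [hvalh t htmem, hyy, ← hFpiece t htbg]
        have hbound := Dtp_le_of_agree (f := h) (g := F)
          (le_min (by linarith : (0:ℝ) ≤ Ah) hdI0)
          ((min_le_left _ _).trans hAhd) (by rw [hFd]; exact min_le_right _ _) hagF
        rw [hFd] at hbound
        rcases min_cases Ah dI with ⟨hm2, _⟩ | ⟨hm2, _⟩ <;> rw [hm2] at hbound <;> linarith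
      · -- different second coordinates: exact type-1 formula
        have hagF : ∀ t ∈ Set.Ioo (0:ℝ) γ, (h.f t).isSome → h.f t = F.f t := by
          intro t ht hsome
          rw [divPt_agree h (v K) t ⟨ht.1, lt_of_lt_of_le ht.2 hγD⟩ hsome]
          exact (hFchar K t ⟨ht.1, lt_trans ht.2 hγδ⟩).symm
        have hET := Dtp_eq_type1 (f := h) (g := F) hγ0 hγAh hγbg hAhd
          (by rw [hFd]; exact min_le_right _ _) hagF hvalh hFpiece hAhnone hFbg hyy
        rw [hET, hFd]
        have hdbg : dI - bg ≤ 2*e := by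
          rw [hbg]
          rcases min_cases AK dI with ⟨hm2, _⟩ | ⟨hm2, _⟩ <;> rw [hm2] <;> linarith
        linarith

open Filter in
/-- Convergence bound in the divergent case. -/
lemma convB (w : ℕ → TreeProdFun I M) (γ dI : ℝ) (i : I) (x : M i) (y : ℕ → M i)
    (b : ℕ → ℝ) (ylim : M i) (F : TreeProdFun I M)
    (hγ0 : 0 ≤ γ) (hγdI : γ < dI)
    (hγb : ∀ m, γ < b m)
    (hγnone : ∀ m, (w m).f γ = none)
    (hpiece : ∀ m, ∀ t ∈ Set.Ioo γ (b m), (w m).f t = some ⟨i,(x, y m)⟩)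
    (hbnone : ∀ m, (w m).f (b m) = none)
    (hbd : ∀ m, b m ≤ (w m).d)
    (hblen : ∀ m, dist x (y m) = b m - γ)
    (hdist : dist x ylim = dI - γ)
    (hFd : F.d = dI)
    (charm : ∀ m, ∀ t, t ≤ γ → F.f t = (w m).f t)
    (char2 : ∀ t ∈ Set.Ioo γ dI, F.f t = some ⟨i,(x,ylim)⟩)
    (hylim : Tendsto y atTop (nhds ylim))
    (hblim : Tendsto b atTop (nhds dI))
    (hwd : Tendsto (fun m => (w m).d) atTop (nhds dI))
    (h : TreeProdFun I M) (e : ℝ) (he : 0 < e)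
    (hpair : ∀ m, Dtp h (w m) < e ∧ Dtp (w m) h < e) :
    Dtp h F ≤ 10 * e := by
  classical
  have hFnone : ∀ r, dI ≤ r → F.f r = none := by
    intro r hr
    apply F.none_of_notIoo
    rw [hFd]
    intro hc
    linarith [hc.2]
  obtain ⟨m, hm1, hm2, hm3, hm4⟩ : ∃ m, dist (y m) ylim < e ∧ dI - e < b m ∧
      dI - e < (w m).d ∧ (w m).d < dI + e := by
    obtain ⟨N1, hN1⟩ := Metric.tendsto_atTop.mp hylim e he
    have h2 := hblim.eventually (eventually_gt_nhds (show dI - e < dI by linarith))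
    have h3 := hwd.eventually (eventually_gt_nhds (show dI - e < dI by linarith))
    have h4 := hwd.eventually (eventually_lt_nhds (show dI < dI + e by linarith))
    obtain ⟨m, hm⟩ := (((h2.and h3).and h4).and (eventually_ge_atTop N1)).exists
    exact ⟨m, hN1 m hm.2, hm.1.1.1, hm.1.1.2, hm.1.2⟩
  have hdh1 : h.d - (w m).d < e := d_sub_lt (hpair m).1
  have hdh2 : (w m).d - h.d < e := d_sub_lt (hpair m).2
  set D := divPt h (w m) with hD
  have hDh : D ≤ h.d := divPt_le_left _ _
  have hDw : D ≤ (w m).d := divPt_le_right _ _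
  have hD0 : 0 ≤ D := divPt_nonneg _ _
  have hagm : ∀ t ∈ Set.Ioo (0:ℝ) D, (h.f t).isSome → h.f t = (w m).f t := divPt_agree h (w m)
  rcases le_or_gt D γ with hsplit | hsplit
  · -- the divergence happens before (or at) γ
    rcases Dtp_cases (hpair m).1 with ⟨h1, h2⟩ | ⟨γ₂, Ah, Am, i₂, x₂, yh, ym₂, hγ₂0, hγ₂D,
      hDAh, hDAm, hAhd, hAmd, hvalh, hvalm, hγ₂noneh, hγ₂nonem, hAhnone, hAmnone,
      hlenh, hlenm, heq⟩
    · -- type 2 : D is close to the ends, use the master bound at D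
      have hagF : ∀ t ∈ Set.Ioo (0:ℝ) D, (h.f t).isSome → h.f t = F.f t := by
        intro t ht hsome
        rw [hagm t ht hsome, ← charm m t (by linarith [ht.2])]
      have hbound := Dtp_le_of_agree (f := h) (g := F) hD0 hDh
        (by rw [hFd]; linarith) hagF
      rw [hFd] at hbound
      linarith
    · -- type 1 at D ≤ γ
      have hdist0 : (0:ℝ) ≤ dist yh ym₂ := dist_nonneg
      have ht1 : h.d - Ah < e := by linarith [(hpair m).1, hAmd]
      have ht2 : (w m).d - Am < e := by linarith [(hpair m).1, hAhd]
      have ht3 : dist yh ym₂ < e := by linarith [(hpair m).1, hAhd, hAmd]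
      rcases le_or_gt Am γ with hAmγ | hAmγ
      · -- everything happens before γ
        have hFval : ∀ t ∈ Set.Ioo γ₂ Am, F.f t = some ⟨i₂,(x₂,ym₂)⟩ := by
          intro t ht
          rw [charm m t (by linarith [ht.2])]
          exact hvalm t ht
        have hFAm : F.f Am = none := by rw [charm m Am hAmγ]; exact hAmnone
        rcases eq_or_ne yh ym₂ with hyy | hyy
        · have hAhAm : Ah = Am := by
            rw [hyy] at hlenh
            linarith [hlenm]
          have hagF : ∀ t ∈ Set.Ioo (0:ℝ) Ah, (h.f t).isSome → h.f t = F.f t := by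
            intro t ht hsome
            rcases lt_trichotomy t γ₂ with htγ | htγ | htγ
            · rw [hagm t ⟨ht.1, lt_of_lt_of_le htγ hγ₂D⟩ hsome,
                ← charm m t (by linarith [hγ₂D, hsplit])]
            · exfalso
              rw [htγ, hγ₂noneh] at hsome
              simp at hsome
            · rw [hvalh t ⟨htγ, ht.2⟩, hyy, ← hFval t ⟨htγ, by rw [← hAhAm]; exact ht.2⟩]
          have hbound := Dtp_le_of_agree (f := h) (g := F)
            (by linarith [lt_of_le_of_lt hγ₂D hDAh] : (0:ℝ) ≤ Ah) hAhd
            (by rw [hFd]; linarith [hAhAm]) hagF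
          rw [hFd] at hbound
          linarith
        · have hagF : ∀ t ∈ Set.Ioo (0:ℝ) γ₂, (h.f t).isSome → h.f t = F.f t := by
            intro t ht hsome
            rw [hagm t ⟨ht.1, lt_of_lt_of_le ht.2 hγ₂D⟩ hsome,
              ← charm m t (by linarith [hγ₂D, hsplit, ht.2])]
          have hET := Dtp_eq_type1 (f := h) (g := F) hγ₂0 (lt_of_le_of_lt hγ₂D hDAh)
            (lt_of_le_of_lt hγ₂D hDAm) hAhd (by rw [hFd]; linarith) hagF hvalh hFval
            hAhnone hFAm hyy
          rw [hET, hFd]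
          linarith
      · -- Am > γ : necessarily γ₂ = γ, and the w m-piece is its final piece
        have hγ₂γ : γ₂ = γ := by
          rcases lt_or_eq_of_le (le_trans hγ₂D hsplit) with hlt | heqq
          · exfalso
            have hvv : (w m).f γ = some ⟨i₂,(x₂,ym₂)⟩ := hvalm γ ⟨hlt, hAmγ⟩
            rw [hγnone m] at hvv
            cases hvv
          · exact heqq
        have ht0mem : (γ + min Am (b m))/2 ∈ Set.Ioo γ (min Am (b m)) := by
          have : γ < min Am (b m) := lt_min hAmγ (hγb m)
          exact ⟨by linarith, by linarith⟩
        have hv1 : (w m).f ((γ + min Am (b m))/2) = some ⟨i₂,(x₂,ym₂)⟩ :=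
          hvalm _ ⟨by rw [hγ₂γ]; exact ht0mem.1, lt_of_lt_of_le ht0mem.2 (min_le_left _ _)⟩
        have hv2 : (w m).f ((γ + min Am (b m))/2) = some ⟨i,(x,y m)⟩ :=
          hpiece m _ ⟨ht0mem.1, lt_of_lt_of_le ht0mem.2 (min_le_right _ _)⟩
        obtain ⟨hh, hx2, hy2⟩ := pairval_inj (Option.some.inj (hv1.symm.trans hv2))
        subst hh
        simp only [cast_eq] at hx2 hy2
        rw [hx2, hy2] at hvalm hlenm
        rw [hy2] at ht3
        rw [hx2] at hvalh hlenh
        have hAmbm : Am = b m := by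
          rcases lt_trichotomy Am (b m) with hlt | heqq | hgt
          · exfalso
            have h5 := hpiece m Am ⟨hAmγ, hlt⟩
            rw [hAmnone] at h5
            cases h5
          · exact heqq
          · exfalso
            have h5 := hvalm (b m) ⟨by rw [hγ₂γ]; exact hγb m, hgt⟩
            rw [hbnone m] at h5
            cases h5
        rcases eq_or_ne yh ylim with hyy | hyy
        · -- the piece of h ends exactly at dI
          have hAhdI : Ah = dI := by
            rw [hyy, hγ₂γ] at hlenh
            linarith [hdist]
          have hagF : ∀ t ∈ Set.Ioo (0:ℝ) dI, (h.f t).isSome → h.f t = F.f t := by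
            intro t ht hsome
            rcases lt_trichotomy t γ with htγ | htγ | htγ
            · rw [hagm t ⟨ht.1, lt_of_lt_of_le htγ (by rw [← hγ₂γ] at hsplit ⊢; exact hγ₂D)⟩
                hsome, ← charm m t htγ.le]
            · exfalso
              rw [htγ, ← hγ₂γ, hγ₂noneh] at hsome
              simp at hsome
            · rw [hvalh t ⟨by rw [hγ₂γ]; exact htγ, by rw [hAhdI]; exact ht.2⟩, hyy,
                ← char2 t ⟨htγ, ht.2⟩]
          have hbound := Dtp_le_of_agree (f := h) (g := F) (by linarith : (0:ℝ) ≤ dI)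
            (by rw [← hAhdI]; exact hAhd) (by rw [hFd]) hagF
          rw [hFd] at hbound
          linarith
        · have hagF : ∀ t ∈ Set.Ioo (0:ℝ) γ, (h.f t).isSome → h.f t = F.f t := by
            intro t ht hsome
            rw [hagm t ⟨ht.1, by rw [← hγ₂γ] at ht; exact lt_of_lt_of_le ht.2 hγ₂D⟩ hsome,
              ← charm m t ht.2.le]
          have hvalh' : ∀ t ∈ Set.Ioo γ Ah, h.f t = some ⟨i₂,(x,yh)⟩ := by
            intro t ht
            exact hvalh t ⟨by rw [hγ₂γ]; exact ht.1, ht.2⟩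
          have hET := Dtp_eq_type1 (f := h) (g := F) hγ0
            (by rw [← hγ₂γ]; exact lt_of_le_of_lt hγ₂D hDAh) hγdI hAhd (by rw [hFd])
            hagF hvalh' char2 hAhnone (hFnone dI (le_refl dI)) hyy
          rw [hET, hFd]
          have htri2 : dist yh ylim ≤ dist yh (y m) + dist (y m) ylim := dist_triangle _ _ _
          linarith [ht1]
  · -- D > γ : h itself contains the final piece of w m
    have hhγ : h.f γ = none := by
      rcases eq_or_lt_of_le hγ0 with h0 | h0
      · exact h.none_of_notIoo (by rw [← h0]; simp)
      · by_contra hc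
        have hsome : (h.f γ).isSome := by
          rw [Option.isSome_iff_ne_none]
          exact hc
        have h5 := hagm γ ⟨h0, hsplit⟩ hsome
        rw [hγnone m] at h5
        rw [h5] at hsome
        simp at hsome
    obtain ⟨t₀, ht₀, ht₀some⟩ := h.exists_dom_mem
      (show γ < min D (b m) from lt_min hsplit (hγb m)) hγ0 ((min_le_left _ _).trans hDh)
    have hvt₀ : h.f t₀ = some ⟨i,(x,y m)⟩ := by
      rw [hagm t₀ ⟨by linarith [ht₀.1], lt_of_lt_of_le ht₀.2 (min_le_left _ _)⟩ ht₀some]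
      exact hpiece m t₀ ⟨ht₀.1, lt_of_lt_of_le ht₀.2 (min_le_right _ _)⟩
    have hps : pieceStart h t₀ = γ := by
      have hge : γ ≤ pieceStart h t₀ := by
        by_contra hc
        push_neg at hc
        have h5 : (h.f γ).isSome := pieceStart_some ht₀some γ ⟨hc, ht₀.1.le⟩
        rw [hhγ] at h5
        simp at h5
      rcases eq_or_lt_of_le hge with h0 | h0
      · exact h0.symm
      · exfalso
        have hpsle : pieceStart h t₀ ≤ t₀ := pieceStart_le_self ht₀some
        obtain ⟨t₁, ht₁, ht₁some⟩ := h.exists_dom_mem h0 hγ0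
          (le_trans hpsle (le_trans ht₀.2.le ((min_le_left _ _).trans hDh)))
        have hvt₁ : h.f t₁ = some ⟨i,(x,y m)⟩ := by
          rw [hagm t₁ ⟨by linarith [ht₁.1], by
            linarith [ht₁.2, hpsle, ht₀.2, min_le_left D (b m)]⟩ ht₁some]
          exact hpiece m t₁ ⟨ht₁.1, by
            linarith [ht₁.2, hpsle, ht₀.2, min_le_right D (b m)]⟩
        have hpe1le : pieceEnd h t₁ ≤ pieceStart h t₀ := by
          by_contra hc
          push_neg at hc
          have h5 : (h.f (pieceStart h t₀)).isSome := pieceEnd_some ht₁some _ ⟨ht₁.2.le, hc⟩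
          rw [pieceStart_none ht₀some] at h5
          simp at h5
        have hps1ge : γ ≤ pieceStart h t₁ := by
          by_contra hc
          push_neg at hc
          have h5 : (h.f γ).isSome := pieceStart_some ht₁some γ ⟨hc, ht₁.1.le⟩
          rw [hhγ] at h5
          simp at h5
        have hlen1 := piece_len ht₁some hvt₁
        have hpsbm : pieceStart h t₀ < b m := by
          linarith [ht₀.2, hpsle, min_le_right D (b m)]
        linarith [hblen m, hps1ge, hpe1le, hlen1]
    have hpe : pieceEnd h t₀ = b m := by
      have h5 := piece_len ht₀some hvt₀
      rw [hps] at h5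
      linarith [hblen m]
    have hhval : ∀ t ∈ Set.Ioo γ (b m), h.f t = some ⟨i,(x,y m)⟩ := by
      intro t ht
      rw [piece_const ht₀some t ⟨by rw [hps]; exact ht.1, by rw [hpe]; exact ht.2⟩, hvt₀]
    have hhbm : h.f (b m) = none := by rw [← hpe]; exact pieceEnd_none ht₀some
    have hbmh : b m ≤ h.d := by rw [← hpe]; exact pieceEnd_le_d ht₀some
    rcases eq_or_ne (y m) ylim with hyy | hyy
    · have hbmdI : b m = dI := by
        have h5 := hblen m
        rw [hyy] at h5
        linarith [hdist]
      have hagF : ∀ t ∈ Set.Ioo (0:ℝ) dI, (h.f t).isSome → h.f t = F.f t := by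
        intro t ht hsome
        rcases lt_trichotomy t γ with htγ | htγ | htγ
        · rw [hagm t ⟨ht.1, lt_trans htγ hsplit⟩ hsome, ← charm m t htγ.le]
        · exfalso
          rw [htγ, hhγ] at hsome
          simp at hsome
        · rw [hhval t ⟨htγ, by rw [hbmdI]; exact ht.2⟩, hyy, ← char2 t ⟨htγ, ht.2⟩]
      have hbound := Dtp_le_of_agree (f := h) (g := F) (by linarith : (0:ℝ) ≤ dI)
        (by rw [← hbmdI]; exact hbmh) (by rw [hFd]) hagF
      rw [hFd] at hbound
      linarith
    · have hagF : ∀ t ∈ Set.Ioo (0:ℝ) γ, (h.f t).isSome → h.f t = F.f t := by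
        intro t ht hsome
        rw [hagm t ⟨ht.1, lt_trans ht.2 hsplit⟩ hsome, ← charm m t ht.2.le]
      have hET := Dtp_eq_type1 (f := h) (g := F) hγ0 (hγb m) hγdI hbmh (by rw [hFd])
        hagF hhval char2 hhbm (hFnone dI (le_refl dI)) hyy
      rw [hET, hFd]
      linarith

/-- Structure of a type-1 pair at a point `th` beyond the divergence. -/
lemma pair_type1 {f g : TreeProdFun I M} {th ep : ℝ}
    (hth : divPt f g ≤ th)
    (hDtp : Dtp f g < ep)
    (hfd : th < f.d - ep) (hgd : th < g.d - ep)
    (hstrict : divPt f g < th ∨ (f.f th).isSome) :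
    ∃ (j : I) (z ya yc : M j) (γp Af Ag : ℝ),
      γp ≤ divPt f g ∧ 0 ≤ γp ∧ γp < th ∧
      f.f th = some ⟨j,(z,ya)⟩ ∧ g.f th = some ⟨j,(z,yc)⟩ ∧ dist ya yc < ep ∧
      pieceStart f th = γp ∧ pieceStart g th = γp ∧
      pieceEnd f th = Af ∧ pieceEnd g th = Ag ∧
      f.d - Af < ep ∧ g.d - Ag < ep ∧ Af ≤ f.d ∧ Ag ≤ g.d ∧
      f.f γp = none ∧ g.f γp = none ∧
      (∀ t ∈ Set.Ioo γp Af, f.f t = some ⟨j,(z,ya)⟩) ∧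
      (∀ t ∈ Set.Ioo γp Ag, g.f t = some ⟨j,(z,yc)⟩) ∧
      (∀ t ∈ Set.Ioo (0:ℝ) γp, (f.f t).isSome → f.f t = g.f t) := by
  rcases Dtp_cases hDtp with ⟨h1, h2⟩ | ⟨γp, Af, Ag, j, z, ya, yc, hγ0, hγD, hDf, hDg,
    hAfd, hAgd, hvf, hvg, hγf, hγg, hAfnone, hAgnone, hlf, hlg, heqp⟩
  · exfalso
    linarith
  · have hAf : f.d - Af < ep := by
      linarith [dist_nonneg (x := ya) (y := yc), hAgd, heqp]
    have hAg : g.d - Ag < ep := by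
      linarith [dist_nonneg (x := ya) (y := yc), hAfd, heqp]
    have hdistb : dist ya yc < ep := by linarith [heqp, hAfd, hAgd]
    have hthAf : th < Af := by linarith
    have hthAg : th < Ag := by linarith
    have hγth : γp < th := by
      rcases hstrict with h | h
      · exact lt_of_le_of_lt hγD h
      · rcases lt_or_eq_of_le (le_trans hγD hth) with h' | h'
        · exact h'
        · exfalso
          rw [← h', hγf] at h
          simp at h
    have hfth : f.f th = some ⟨j,(z,ya)⟩ := hvf th ⟨hγth, hthAf⟩
    have hgth : g.f th = some ⟨j,(z,yc)⟩ := hvg th ⟨hγth, hthAg⟩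
    obtain ⟨hPSf, hPEf⟩ := piece_eq ⟨hγth, hthAf⟩
      (fun u hu => by rw [hvf u hu]; rfl) hγf hAfnone hγ0 hAfd
    obtain ⟨hPSg, hPEg⟩ := piece_eq ⟨hγth, hthAg⟩
      (fun u hu => by rw [hvg u hu]; rfl) hγg hAgnone hγ0 hAgd
    refine ⟨j, z, ya, yc, γp, Af, Ag, hγD, hγ0, hγth, hfth, hgth, hdistb, hPSf, hPSg,
      hPEf, hPEg, hAf, hAg, hAfd, hAgd, hγf, hγg, hvf, hvg, ?_⟩
    intro t ht hsome
    exact divPt_agree f g t ⟨ht.1, lt_of_lt_of_le ht.2 hγD⟩ hsome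

end TreeProdFun

open Filter TreeProdFun in
/-- the tree product with the metric `D` is complete: every Cauchy
sequence converges. -/
theorem stmt_8 [∀ i, CompleteSpace (M i)] (u : ℕ → TreeProdFun I M)
    (hu : ∀ ε : ℝ, 0 < ε → ∃ N : ℕ, ∀ m ≥ N, ∀ n ≥ N, Dtp (u m) (u n) < ε) :
    ∃ f : TreeProdFun I M,
      Filter.Tendsto (fun n => Dtp (u n) f) Filter.atTop (nhds 0) := by
  classical
  have hεpos : ∀ k : ℕ, (0:ℝ) < (1/2)^k := fun k => by positivity
  choose N₀ hN₀ using fun k : ℕ => hu ((1/2)^k) (hεpos k)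
  set N : ℕ → ℕ := fun k => Finset.sup (Finset.range (k+1)) N₀ with hNdef
  have hNmono : Monotone N := fun a b hab =>
    Finset.sup_mono (Finset.range_subset_range.mpr (by omega))
  have hNle : ∀ k, N₀ k ≤ N k := fun k => Finset.le_sup (Finset.self_mem_range_succ k)
  have key : ∀ k m n, N k ≤ m → N k ≤ n → Dtp (u m) (u n) < (1/2)^k :=
    fun k m n hm hn => hN₀ k m (le_trans (hNle k) hm) n (le_trans (hNle k) hn)
  set v : ℕ → TreeProdFun I M := fun k => u (N k) with hvdef
  have hvpair : ∀ k l, k ≤ l → Dtp (v k) (v l) < (1/2)^k ∧ Dtp (v l) (v k) < (1/2)^k :=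
    fun k l hkl => ⟨key k _ _ (le_refl _) (hNmono hkl), key k _ _ (hNmono hkl) (le_refl _)⟩
  have hεlim : Tendsto (fun k : ℕ => ((1:ℝ)/2)^k) atTop (nhds 0) :=
    tendsto_pow_atTop_nhds_zero_of_lt_one (by norm_num) (by norm_num)
  have hεmono : ∀ a b : ℕ, a ≤ b → ((1:ℝ)/2)^b ≤ (1/2)^a :=
    fun a b hab => pow_le_pow_of_le_one (by norm_num) (by norm_num) hab
  -- the lengths converge
  have hdC : CauchySeq (fun k => (v k).d) := by
    rw [Metric.cauchySeq_iff]
    intro ε hε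
    obtain ⟨k, hk⟩ := exists_pow_lt_of_lt_one hε (show (1:ℝ)/2 < 1 by norm_num)
    refine ⟨k, fun a ha b hb => ?_⟩
    rw [Real.dist_eq, abs_sub_lt_iff]
    rcases le_total a b with hab | hab
    · have h1 := hvpair a b hab
      have h2 := hεmono k a ha
      exact ⟨by linarith [d_sub_lt h1.1], by linarith [d_sub_lt h1.2]⟩
    · have h1 := hvpair b a hab
      have h2 := hεmono k b hb
      exact ⟨by linarith [d_sub_lt h1.2], by linarith [d_sub_lt h1.1]⟩
  obtain ⟨dI, hdI⟩ := cauchySeq_tendsto_of_complete hdC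
  -- the stability radii
  set S : ℕ → Set ℝ := fun K =>
    {r | ∃ m l, K ≤ m ∧ K ≤ l ∧ r = min (divPt (v m) (v l)) (divPt (v l) (v m))} with hSdef
  have hSne : ∀ K, (S K).Nonempty := fun K => ⟨_, K, K, le_refl K, le_refl K, rfl⟩
  have hSbdd : ∀ K, BddBelow (S K) := fun K => ⟨0, by
    rintro r ⟨m, l, _, _, rfl⟩
    exact le_min (divPt_nonneg _ _) (divPt_nonneg _ _)⟩
  set δ : ℕ → ℝ := fun K => sInf (S K) with hδdef
  have hδ0 : ∀ K, 0 ≤ δ K := fun K => le_csInf (hSne K) (by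
    rintro r ⟨m, l, _, _, rfl⟩
    exact le_min (divPt_nonneg _ _) (divPt_nonneg _ _))
  have hδle : ∀ K m l, K ≤ m → K ≤ l →
      δ K ≤ min (divPt (v m) (v l)) (divPt (v l) (v m)) :=
    fun K m l hm hl => csInf_le (hSbdd K) ⟨m, l, hm, hl, rfl⟩
  have hδd : ∀ K l, K ≤ l → δ K ≤ (v l).d :=
    fun K l hl => le_trans (hδle K l l hl hl)
      (le_trans (min_le_left _ _) (divPt_le_left _ _))
  have hδdI : ∀ K, δ K ≤ dI := fun K =>
    ge_of_tendsto hdI (eventually_atTop.mpr ⟨K, fun l hl => hδd K l hl⟩)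
  have hδmono : Monotone δ := fun a b hab => csInf_le_csInf (hSbdd a) (hSne b) (by
    rintro r ⟨m, l, hm, hl, rfl⟩
    exact ⟨m, l, le_trans hab hm, le_trans hab hl, rfl⟩)
  have hag : ∀ K m l, K ≤ m → K ≤ l → ∀ t ∈ Set.Ioo (0:ℝ) (δ K), (v m).f t = (v l).f t := by
    intro K m l hm hl t ht
    have h1 := hδle K m l hm hl
    exact agree_below_both ⟨ht.1, lt_of_lt_of_le ht.2 (h1.trans (min_le_left _ _))⟩
      ⟨ht.1, lt_of_lt_of_le ht.2 (h1.trans (min_le_right _ _))⟩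
  have hbdd : BddAbove (Set.range δ) := ⟨dI, by rintro r ⟨K, rfl⟩; exact hδdI K⟩
  set δI := ⨆ K, δ K with hδIdef
  have hδtend : Tendsto δ atTop (nhds δI) := tendsto_atTop_ciSup hδmono hbdd
  have hδIdI : δI ≤ dI := ciSup_le hδdI
  -- reduce to a uniform bound
  suffices hsuff : ∃ F : TreeProdFun I M, ∀ k : ℕ, ∀ n, N k ≤ n →
      Dtp (u n) F ≤ 10 * ((1/2)^k) by
    obtain ⟨F, hF⟩ := hsuff
    refine ⟨F, ?_⟩
    rw [Metric.tendsto_atTop]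
    intro ε hε
    obtain ⟨k, hk⟩ := exists_pow_lt_of_lt_one (show (0:ℝ) < ε/11 by linarith)
      (show (1:ℝ)/2 < 1 by norm_num)
    refine ⟨N k, fun n hn => ?_⟩
    have h1 := hF k n hn
    have h2 := Dtp_nonneg (u n) F
    rw [Real.dist_eq, sub_zero, abs_of_nonneg h2]
    linarith
  rcases eq_or_lt_of_le hδIdI with hAB | hAB
  · -- CASE A : full stability
    have hδlim : Tendsto δ atTop (nhds dI) := by rw [← hAB]; exact hδtend
    obtain ⟨F, hFd, hFchar⟩ := caseA_exists v δ dI hδ0 hδd hδdI hag hdI hδlim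
    refine ⟨F, fun k n hn => ?_⟩
    exact convA (fun m => v (m + k)) (fun m => δ (m + k)) dI F
      (fun K => hδ0 _)
      (fun K l hKl => hδd (K + k) (l + k) (by omega))
      (fun K => hδdI _)
      (fun K m l hm hl => hag (K + k) (m + k) (l + k) (by omega) (by omega))
      hFd (fun K => hFchar (K + k))
      (hdI.comp (tendsto_add_atTop_nat k))
      (hδlim.comp (tendsto_add_atTop_nat k))
      (u n) ((1/2)^k) (hεpos k)
      (fun m => ⟨key k n (N (m + k)) hn (hNmono (by omega)),
        key k (N (m + k)) n (hNmono (by omega)) hn⟩)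
  · -- CASE B : a new final piece appears
    have hδI0 : 0 ≤ δI := le_trans (hδ0 0) (le_ciSup hbdd 0)
    set ec : ℝ := (dI - δI)/8 with hec
    have hec0 : 0 < ec := by simp only [hec]; linarith
    set ts : ℝ := δI + 4*ec with hts
    set th : ℝ := δI + 5*ec with hth
    have hts0 : 0 ≤ ts := by simp only [hts]; linarith
    have hth0 : 0 < th := by simp only [hth]; linarith
    have htsth : ts < th := by simp only [hts, hth]; linarith
    have hthdI : th < dI - 2*ec := by simp only [hth, hec]; linarith
    obtain ⟨K₁, hK₁⟩ : ∃ K₁, ∀ m, K₁ ≤ m → dI - ec/2 < (v m).d ∧ (v m).d < dI + ec/2 := by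
      obtain ⟨K₁, hK⟩ := eventually_atTop.mp
        ((hdI.eventually (eventually_gt_nhds (show dI - ec/2 < dI by linarith))).and
         (hdI.eventually (eventually_lt_nhds (show dI < dI + ec/2 by linarith))))
      exact ⟨K₁, hK⟩
    obtain ⟨K₂, hK₂⟩ : ∃ K₂, ((1:ℝ)/2)^K₂ < ec/2 :=
      exists_pow_lt_of_lt_one (by linarith) (by norm_num)
    set K₀ := max K₁ K₂ with hK₀def
    have hεs : ∀ m, K₀ ≤ m → ((1:ℝ)/2)^m < ec/2 := fun m hm =>
      lt_of_le_of_lt (hεmono _ _ (le_trans (le_max_right _ _) hm)) hK₂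
    have hds : ∀ m, K₀ ≤ m → dI - ec/2 < (v m).d ∧ (v m).d < dI + ec/2 :=
      fun m hm => hK₁ m (le_trans (le_max_left _ _) hm)
    have hside : ∀ m, K₀ ≤ m → ∀ ep : ℝ, ep ≤ ec/2 → th < (v m).d - ep := by
      intro m hm ep hep
      have h1 := (hds m hm).1
      linarith [hthdI]
    -- pairs with small joint divergence exist beyond every index
    have hsmallpair : ∀ X : ℕ, ∃ a b, X ≤ a ∧ X ≤ b ∧
        min (divPt (v a) (v b)) (divPt (v b) (v a)) < ts := by
      intro X
      by_contra hcon
      push_neg at hcon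
      have h1 : ts ≤ δ X := le_csInf (hSne X) (by
        rintro r ⟨m, l, hm, hl, rfl⟩
        exact hcon m l hm hl)
      have h2 : δ X ≤ δI := le_ciSup hbdd X
      simp only [hts] at h1
      linarith
    have hpartner : ∀ m, K₀ ≤ m → ∃ c, m ≤ c ∧ K₀ ≤ c ∧
        min (divPt (v m) (v c)) (divPt (v c) (v m)) ≤ ts := by
      intro m hm
      obtain ⟨a, b, ha, hb, hab⟩ := hsmallpair m
      by_contra hcon
      push_neg at hcon
      have hma := hcon a ha (le_trans hm ha)
      have hmb := hcon b hb (le_trans hm hb)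
      have hagab : ∀ t ∈ Set.Ioo (0:ℝ) ts, (v a).f t = (v b).f t := by
        intro t ht
        have h1 : (v m).f t = (v a).f t := agree_below_both
          ⟨ht.1, lt_trans ht.2 (lt_of_lt_of_le hma (min_le_left _ _))⟩
          ⟨ht.1, lt_trans ht.2 (lt_of_lt_of_le hma (min_le_right _ _))⟩
        have h2 : (v m).f t = (v b).f t := agree_below_both
          ⟨ht.1, lt_trans ht.2 (lt_of_lt_of_le hmb (min_le_left _ _))⟩
          ⟨ht.1, lt_trans ht.2 (lt_of_lt_of_le hmb (min_le_right _ _))⟩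
        rw [← h1, h2]
      have htsa : ts ≤ (v a).d := by linarith [(hds a (le_trans hm ha)).1, hthdI, htsth]
      have htsb : ts ≤ (v b).d := by linarith [(hds b (le_trans hm hb)).1, hthdI, htsth]
      have h3 : ts ≤ divPt (v a) (v b) :=
        le_divPt _ _ hts0 htsa htsb (fun t ht _ => hagab t ht)
      have h4 : ts ≤ divPt (v b) (v a) :=
        le_divPt _ _ hts0 htsb htsa (fun t ht _ => (hagab t ht).symm)
      rcases min_cases (divPt (v a) (v b)) (divPt (v b) (v a)) with ⟨hmn, _⟩ | ⟨hmn, _⟩ <;>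
        rw [hmn] at hab <;> linarith
    -- structure of each v m at th
    have hstruct : ∀ m, K₀ ≤ m → ((v m).f th).isSome ∧ pieceStart (v m) th ≤ ts ∧
        (v m).d - (1/2)^m < pieceEnd (v m) th ∧ pieceEnd (v m) th ≤ (v m).d := by
      intro m hm
      obtain ⟨c, hmc, hcK₀, hσ⟩ := hpartner m hm
      have hepc : ((1:ℝ)/2)^m ≤ ec/2 := le_of_lt (hεs m hm)
      rcases min_cases (divPt (v m) (v c)) (divPt (v c) (v m)) with ⟨hmn, _⟩ | ⟨hmn, _⟩ <;>
        rw [hmn] at hσ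
      · obtain ⟨j, z, ya, yc, γp, Af, Ag, p1, p2, p3, p4, p5, p6, p7, p8, p9, p10, p11, p12,
          p13, p14, p15, p16, p17, p18, p19⟩ :=
          pair_type1 (f := v m) (g := v c) (th := th) (ep := (1/2)^m)
            (le_trans hσ (le_of_lt htsth)) (hvpair m c hmc).1
            (hside m hm _ hepc) (hside c hcK₀ _ hepc)
            (Or.inl (lt_of_le_of_lt hσ htsth))
        exact ⟨by rw [p4]; rfl, by rw [p7]; linarith [p1, hσ], by rw [p9]; linarith [p11],
          by rw [p9]; exact p13⟩
      · obtain ⟨j, z, ya, yc, γp, Af, Ag, p1, p2, p3, p4, p5, p6, p7, p8, p9, p10, p11, p12,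
          p13, p14, p15, p16, p17, p18, p19⟩ :=
          pair_type1 (f := v c) (g := v m) (th := th) (ep := (1/2)^m)
            (le_trans hσ (le_of_lt htsth)) (hvpair m c hmc).2
            (hside c hcK₀ _ hepc) (hside m hm _ hepc)
            (Or.inl (lt_of_le_of_lt hσ htsth))
        exact ⟨by rw [p5]; rfl, by rw [p8]; linarith [p1, hσ], by rw [p10]; linarith [p12],
          by rw [p10]; exact p14⟩
    -- the pairwise comparison at th
    have hPW : ∀ m l, K₀ ≤ m → m ≤ l →
        ∃ (j : I) (z am al : M j),
          (v m).f th = some ⟨j,(z,am)⟩ ∧ (v l).f th = some ⟨j,(z,al)⟩ ∧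
          dist am al < (1/2)^m ∧
          pieceStart (v m) th = pieceStart (v l) th ∧
          (∀ t ∈ Set.Ioo (0:ℝ) (pieceStart (v m) th), (v m).f t = (v l).f t) := by
      intro m l hm hml
      have hlK₀ : K₀ ≤ l := le_trans hm hml
      have hepc : ((1:ℝ)/2)^m ≤ ec/2 := le_of_lt (hεs m hm)
      rcases le_or_gt (min (divPt (v m) (v l)) (divPt (v l) (v m))) th with hσ | hσ
      · rcases min_cases (divPt (v m) (v l)) (divPt (v l) (v m)) with ⟨hmn, _⟩ | ⟨hmn, _⟩ <;>
          rw [hmn] at hσ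
        · obtain ⟨j, z, am, al, γp, Af, Ag, p1, p2, p3, p4, p5, p6, p7, p8, p9, p10, p11,
            p12, p13, p14, p15, p16, p17, p18, p19⟩ :=
            pair_type1 (f := v m) (g := v l) (th := th) (ep := (1/2)^m)
              hσ (hvpair m l hml).1 (hside m hm _ hepc) (hside l hlK₀ _ hepc)
              (Or.inr (hstruct m hm).1)
          refine ⟨j, z, am, al, p4, p5, p6, by rw [p7, p8], ?_⟩
          rw [p7]
          intro t ht
          by_cases hsm : ((v m).f t).isSome
          · exact p19 t ht hsm
          · by_cases hsl : ((v l).f t).isSome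
            · rcases le_or_gt (divPt (v l) (v m)) th with hσ2 | hσ2
              · obtain ⟨j2, z2, a2, b2, γq, Af2, Ag2, q1, q2, q3, q4, q5, q6, q7, q8, q9,
                  q10, q11, q12, q13, q14, q15, q16, q17, q18, q19⟩ :=
                  pair_type1 (f := v l) (g := v m) (th := th) (ep := (1/2)^m)
                    hσ2 (hvpair m l hml).2 (hside l hlK₀ _ hepc) (hside m hm _ hepc)
                    (Or.inr (hstruct l hlK₀).1)
                have hγqγp : γq = γp := by rw [← q7, p8]
                exact (q19 t (by rw [hγqγp]; exact ht) hsl).symm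
              · exact (divPt_agree (v l) (v m) t
                  ⟨ht.1, lt_trans (lt_of_lt_of_le ht.2 (le_trans p1 hσ)) hσ2⟩ hsl).symm
            · rw [Option.not_isSome_iff_eq_none] at hsm hsl
              rw [hsm, hsl]
        · obtain ⟨j, z, al, am, γp, Af, Ag, p1, p2, p3, p4, p5, p6, p7, p8, p9, p10, p11,
            p12, p13, p14, p15, p16, p17, p18, p19⟩ :=
            pair_type1 (f := v l) (g := v m) (th := th) (ep := (1/2)^m)
              hσ (hvpair m l hml).2 (hside l hlK₀ _ hepc) (hside m hm _ hepc)
              (Or.inr (hstruct l hlK₀).1)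
          refine ⟨j, z, am, al, p5, p4, by rw [dist_comm]; exact p6, by rw [p8, p7], ?_⟩
          rw [p8]
          intro t ht
          by_cases hsm : ((v m).f t).isSome
          · rcases le_or_gt (divPt (v m) (v l)) th with hσ2 | hσ2
            · obtain ⟨j2, z2, a2, b2, γq, Af2, Ag2, q1, q2, q3, q4, q5, q6, q7, q8, q9,
                q10, q11, q12, q13, q14, q15, q16, q17, q18, q19⟩ :=
                pair_type1 (f := v m) (g := v l) (th := th) (ep := (1/2)^m)
                  hσ2 (hvpair m l hml).1 (hside m hm _ hepc) (hside l hlK₀ _ hepc)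
                  (Or.inr (hstruct m hm).1)
              have hγqγp : γq = γp := by rw [← q7, p8]
              exact q19 t (by rw [hγqγp]; exact ht) hsm
            · exact divPt_agree (v m) (v l) t
                ⟨ht.1, lt_trans (lt_of_lt_of_le ht.2 (le_trans p1 hσ)) hσ2⟩ hsm
          · by_cases hsl : ((v l).f t).isSome
            · exact (p19 t ht hsl).symm
            · rw [Option.not_isSome_iff_eq_none] at hsm hsl
              rw [hsm, hsl]
      · -- full agreement through th
        obtain ⟨valm, hvalm⟩ := Option.isSome_iff_exists.mp (hstruct m hm).1
        obtain ⟨j, z, am⟩ := valm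
        have hagth : ∀ t, 0 < t → t ≤ th → (v m).f t = (v l).f t := by
          intro t h1 h2
          rcases lt_or_eq_of_le h2 with h3 | h3
          · exact agree_below_both
              ⟨h1, lt_trans h3 (lt_of_lt_of_le hσ (min_le_left _ _))⟩
              ⟨h1, lt_trans h3 (lt_of_lt_of_le hσ (min_le_right _ _))⟩
          · rw [h3]
            exact agree_below_both
              ⟨hth0, lt_of_lt_of_le hσ (min_le_left _ _)⟩
              ⟨hth0, lt_of_lt_of_le hσ (min_le_right _ _)⟩
        have heqth : (v m).f th = (v l).f th := hagth th hth0 (le_refl th)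
        refine ⟨j, z, am, am, hvalm, by rw [← heqth]; exact hvalm,
          by rw [dist_self]; exact hεpos m, ?_, ?_⟩
        · apply le_antisymm
          · apply pieceStart_le' (hstruct m hm).1
              (pieceStart_le_self (hstruct l hlK₀).1)
              (pieceStart_nonneg (hstruct l hlK₀).1)
            intro s hs
            rw [hagth s (lt_of_le_of_lt (pieceStart_nonneg (hstruct l hlK₀).1) hs.1) hs.2]
            exact pieceStart_some (hstruct l hlK₀).1 s hs
          · apply pieceStart_le' (hstruct l hlK₀).1
              (pieceStart_le_self (hstruct m hm).1)
              (pieceStart_nonneg (hstruct m hm).1)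
            intro s hs
            rw [← hagth s (lt_of_le_of_lt (pieceStart_nonneg (hstruct m hm).1) hs.1) hs.2]
            exact pieceStart_some (hstruct m hm).1 s hs
        · intro t ht
          exact hagth t ht.1
            (le_of_lt (lt_of_lt_of_le ht.2 (pieceStart_le_self (hstruct m hm).1)))
    -- canonical data
    obtain ⟨val₀, hval₀⟩ := Option.isSome_iff_exists.mp (hstruct K₀ (le_refl _)).1
    obtain ⟨i, x, y₀⟩ := val₀
    set γ := pieceStart (v K₀) th with hγdef
    have hγ0 : 0 ≤ γ := pieceStart_nonneg (hstruct K₀ (le_refl _)).1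
    have hγts : γ ≤ ts := (hstruct K₀ (le_refl _)).2.1
    have hγdI : γ < dI := by linarith [htsth, hthdI]
    have hPSm : ∀ m, K₀ ≤ m → pieceStart (v m) th = γ := by
      intro m hm
      exact ((hPW K₀ m (le_refl _) hm).choose_spec.choose_spec.choose_spec.choose_spec).2.2.2.1.symm
    have hagm : ∀ m l, K₀ ≤ m → K₀ ≤ l → ∀ t ∈ Set.Ioo (0:ℝ) γ, (v m).f t = (v l).f t := by
      intro m l hm hl t ht
      rcases le_total m l with hml | hml
      · obtain ⟨j, z, am, al, _, _, _, _, h5⟩ := hPW m l hm hml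
        exact h5 t (by rw [hPSm m hm]; exact ht)
      · obtain ⟨j, z, am, al, _, _, _, _, h5⟩ := hPW l m hl hml
        exact (h5 t (by rw [hPSm l hl]; exact ht)).symm
    have hYex : ∀ m, K₀ ≤ m → ∃ ym : M i, (v m).f th = some ⟨i,(x,ym)⟩ := by
      intro m hm
      obtain ⟨j, z, a0, am, hv0, hvm, _, _, _⟩ := hPW K₀ m (le_refl _) hm
      rw [hval₀] at hv0
      obtain ⟨hh, hxz, _⟩ := pairval_inj (Option.some.inj hv0)
      subst hh
      simp only [cast_eq] at hxz
      subst hxz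
      exact ⟨am, hvm⟩
    set Y : ℕ → M i := fun m =>
      if hm : ∃ ym : M i, (v (K₀ + m)).f th = some ⟨i,(x,ym)⟩ then hm.choose else y₀
      with hYdef
    have hYval : ∀ m, (v (K₀ + m)).f th = some ⟨i,(x,Y m)⟩ := by
      intro m
      have hex := hYex (K₀ + m) (Nat.le_add_right _ _)
      simp only [hYdef, dif_pos hex]
      exact hex.choose_spec
    have hYdist : ∀ m l, m ≤ l → dist (Y m) (Y l) < (1/2)^(K₀ + m) := by
      intro m l hml
      obtain ⟨j, z, am, al, hv1, hv2, hd, _, _⟩ :=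
        hPW (K₀ + m) (K₀ + l) (Nat.le_add_right _ _) (by omega)
      rw [hYval m] at hv1
      obtain ⟨hh, hxz, hym⟩ := pairval_inj (Option.some.inj hv1)
      subst hh
      simp only [cast_eq] at hxz hym
      subst hxz
      subst hym
      rw [hYval l] at hv2
      obtain ⟨hh2, hxz2, hyl⟩ := pairval_inj (Option.some.inj hv2)
      simp only [cast_eq] at hxz2 hyl
      rw [← hyl] at hd
      exact hd
    have hYcauchy : CauchySeq Y := by
      rw [Metric.cauchySeq_iff]
      intro ε hε
      obtain ⟨k2, hk2⟩ := exists_pow_lt_of_lt_one hε (show (1:ℝ)/2 < 1 by norm_num)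
      refine ⟨k2, fun a ha b hb => ?_⟩
      rcases le_total a b with hab | hab
      · exact lt_of_lt_of_le (hYdist a b hab)
          (le_trans (hεmono _ _ (by omega)) (le_of_lt hk2))
      · rw [dist_comm]
        exact lt_of_lt_of_le (hYdist b a hab)
          (le_trans (hεmono _ _ (by omega)) (le_of_lt hk2))
    obtain ⟨ylim, hylim⟩ := cauchySeq_tendsto_of_complete hYcauchy
    set B : ℕ → ℝ := fun m => pieceEnd (v (K₀ + m)) th with hBdef
    have hshift : Tendsto (fun m : ℕ => K₀ + m) atTop atTop :=
      tendsto_atTop_mono (fun m => Nat.le_add_left m K₀) tendsto_id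
    have hBlim : Tendsto B atTop (nhds dI) := by
      have hlow : Tendsto (fun m => (v (K₀ + m)).d - (1/2)^(K₀ + m)) atTop (nhds dI) := by
        have h1 : Tendsto (fun m => (v (K₀ + m)).d) atTop (nhds dI) := hdI.comp hshift
        have h2 : Tendsto (fun m : ℕ => ((1:ℝ)/2)^(K₀ + m)) atTop (nhds 0) := hεlim.comp hshift
        simpa using h1.sub h2
      have hhigh : Tendsto (fun m => (v (K₀ + m)).d) atTop (nhds dI) := hdI.comp hshift
      exact tendsto_of_tendsto_of_tendsto_of_le_of_le hlow hhigh
        (fun m => le_of_lt (hstruct (K₀ + m) (Nat.le_add_right _ _)).2.2.1)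
        (fun m => (hstruct (K₀ + m) (Nat.le_add_right _ _)).2.2.2)
    have hγB : ∀ m, γ < B m := fun m =>
      lt_of_le_of_lt (le_trans hγts (le_of_lt htsth))
        (lt_pieceEnd (hstruct (K₀ + m) (Nat.le_add_right _ _)).1)
    have hγnone' : ∀ m, (v (K₀ + m)).f γ = none := by
      intro m
      rw [← hPSm (K₀ + m) (Nat.le_add_right _ _)]
      exact pieceStart_none (hstruct (K₀ + m) (Nat.le_add_right _ _)).1
    have hpiece' : ∀ m, ∀ t ∈ Set.Ioo γ (B m), (v (K₀ + m)).f t = some ⟨i,(x,Y m)⟩ := by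
      intro m t ht
      rw [piece_const (hstruct (K₀ + m) (Nat.le_add_right _ _)).1 t
        ⟨by rw [hPSm (K₀ + m) (Nat.le_add_right _ _)]; exact ht.1, ht.2⟩]
      exact hYval m
    have hbnone' : ∀ m, (v (K₀ + m)).f (B m) = none := fun m =>
      pieceEnd_none (hstruct (K₀ + m) (Nat.le_add_right _ _)).1
    have hbd' : ∀ m, B m ≤ (v (K₀ + m)).d := fun m =>
      pieceEnd_le_d (hstruct (K₀ + m) (Nat.le_add_right _ _)).1
    have hblen' : ∀ m, dist x (Y m) = B m - γ := by
      intro m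
      rw [piece_len (hstruct (K₀ + m) (Nat.le_add_right _ _)).1 (hYval m),
        hPSm (K₀ + m) (Nat.le_add_right _ _)]
    obtain ⟨F, hFd, hchar1, hchar2, hchar3⟩ := caseB_exists (fun m => v (K₀ + m)) γ dI i x Y B
      ylim hγ0 hγdI hγB hγnone' (fun m l t ht => hagm _ _ (Nat.le_add_right _ _)
        (Nat.le_add_right _ _) t ht) hpiece' hbnone' hbd' hylim hBlim hblen'
    have hdistlim : dist x ylim = dI - γ := by
      have h1 : Tendsto (fun m => dist x (Y m)) atTop (nhds (dist x ylim)) :=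
        tendsto_const_nhds.dist hylim
      have h2 : Tendsto (fun m => B m - γ) atTop (nhds (dI - γ)) :=
        hBlim.sub tendsto_const_nhds
      exact tendsto_nhds_unique (by simpa only [hblen'] using h1) h2
    have charm : ∀ m, ∀ t, t ≤ γ → F.f t = (v (K₀ + m)).f t := by
      intro m t ht
      rw [hchar1 t ht]
      rcases le_or_gt t 0 with h0 | h0
      · rw [(v (K₀ + 0)).none_of_notIoo (by intro hc; exact absurd hc.1 (not_lt.mpr h0)),
          (v (K₀ + m)).none_of_notIoo (by intro hc; exact absurd hc.1 (not_lt.mpr h0))]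
      · rcases lt_or_eq_of_le ht with h1 | h1
        · exact hagm (K₀ + 0) (K₀ + m) (Nat.le_add_right _ _) (Nat.le_add_right _ _) t ⟨h0, h1⟩
        · rw [h1, hγnone' 0, hγnone' m]
    refine ⟨F, fun k n hn => ?_⟩
    exact convB (fun m => v (K₀ + (m + k))) γ dI i x (fun m => Y (m + k))
      (fun m => B (m + k)) ylim F hγ0 hγdI (fun m => hγB _) (fun m => hγnone' _)
      (fun m => hpiece' _) (fun m => hbnone' _) (fun m => hbd' _) (fun m => hblen' _)
      hdistlim hFd (fun m => charm _) hchar2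
      (hylim.comp (tendsto_add_atTop_nat k))
      (hBlim.comp (tendsto_add_atTop_nat k))
      ((hdI.comp hshift).comp (tendsto_add_atTop_nat k))
      (u n) ((1/2)^k) (hεpos k)
      (fun m => ⟨key k n (N (K₀ + (m + k))) hn (hNmono (by omega)),
        key k (N (K₀ + (m + k))) n (hNmono (by omega)) hn⟩)
end

section
/- Let F be a tree-graded geodesic metric space, s ∈ F, and C a connected component of F \ {s}. Then at least one of the following holds: (a) there exists a unique piece P of F such that for every x ∈ C and every geodesic [s,x] in C ∪ {s}, the intersection P ∩ [s,x] is a nontrivial initial subsegment of [s,x]; or (b) for any x, y ∈ C, any two geodesics [s,x] and [s,y] in C ∪ {s} have a common point distinct from s. -/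
/-- A map `γ` is a geodesic (unit-speed) on the interval `[a,b]`. -/
def IsGeodesicOn {F : Type*} [MetricSpace F] (γ : ℝ → F) (a b : ℝ) : Prop :=
  ∀ s ∈ Set.Icc a b, ∀ t ∈ Set.Icc a b, dist (γ s) (γ t) = |s - t|

/-- A metric space is geodesic if every two points are joined by a geodesic. -/
def GeodesicSpace (F : Type*) [MetricSpace F] : Prop :=
  ∀ x y : F, ∃ γ : ℝ → F, γ 0 = x ∧ γ (dist x y) = y ∧ IsGeodesicOn γ 0 (dist x y)

/-- A subset is geodesic: any two of its points are joined by a geodesic inside it. -/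
def GeodesicSubset {F : Type*} [MetricSpace F] (p : Set F) : Prop :=
  ∀ x ∈ p, ∀ y ∈ p, ∃ γ : ℝ → F, γ 0 = x ∧ γ (dist x y) = y ∧
    IsGeodesicOn γ 0 (dist x y) ∧ γ '' Set.Icc 0 (dist x y) ⊆ p

/-- A nontrivial simple geodesic triangle: a simple loop `γ` on `[0,L]` composed of three
geodesics `[0,a]`, `[a,b]`, `[b,L]`. -/
structure SimpleGeodesicTriangle {F : Type*} [MetricSpace F]
    (γ : ℝ → F) (a b L : ℝ) : Prop where
  L_pos : 0 < L
  ha : 0 ≤ a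
  hab : a ≤ b
  hbL : b ≤ L
  side1 : IsGeodesicOn γ 0 a
  side2 : IsGeodesicOn γ a b
  side3 : IsGeodesicOn γ b L
  closed : γ 0 = γ L
  simple : Set.InjOn γ (Set.Ico 0 L)

/-- `F` is tree-graded with respect to the collection `P` of pieces. -/
structure IsTreeGraded {F : Type*} [MetricSpace F] (P : Set (Set F)) : Prop where
  pieces_nonempty : ∀ p ∈ P, p.Nonempty
  pieces_closed : ∀ p ∈ P, IsClosed p
  pieces_geodesic : ∀ p ∈ P, GeodesicSubset p
  T1 : ∀ p ∈ P, ∀ q ∈ P, p ≠ q → (p ∩ q).Subsingleton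
  T2 : ∀ (γ : ℝ → F) (a b L : ℝ), SimpleGeodesicTriangle γ a b L →
    ∃ p ∈ P, γ '' Set.Icc 0 L ⊆ p

/-- `γ` is a geodesic from `s` to `x` lying in `C ∪ {s}`. -/
def IsGeodesicFromTo {F : Type*} [MetricSpace F] (γ : ℝ → F) (s x : F) (C : Set F) : Prop :=
  γ 0 = s ∧ γ (dist s x) = x ∧ IsGeodesicOn γ 0 (dist s x) ∧
    γ '' Set.Icc 0 (dist s x) ⊆ C ∪ {s}

section Aux

variable {F : Type*} [MetricSpace F]

lemma geo_mono {γ : ℝ → F} {a b a' b' : ℝ} (h : IsGeodesicOn γ a b)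
    (h1 : a ≤ a') (h2 : b' ≤ b) : IsGeodesicOn γ a' b' := fun u hu t ht =>
  h u ⟨h1.trans hu.1, hu.2.trans h2⟩ t ⟨h1.trans ht.1, ht.2.trans h2⟩

lemma geo_continuousOn {γ : ℝ → F} {a b : ℝ} (h : IsGeodesicOn γ a b) :
    ContinuousOn γ (Set.Icc a b) := by
  have : LipschitzOnWith 1 γ (Set.Icc a b) := by
    rw [lipschitzOnWith_iff_dist_le_mul]
    intro u hu t ht
    rw [h u hu t ht, Real.dist_eq]
    simp
  exact this.continuousOn

lemma geo_injOn {γ : ℝ → F} {a b : ℝ} (h : IsGeodesicOn γ a b) {u t : ℝ}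
    (hu : u ∈ Set.Icc a b) (ht : t ∈ Set.Icc a b) (he : γ u = γ t) : u = t := by
  have h2 := h u hu t ht
  rw [he, dist_self] at h2
  have h3 := abs_eq_zero.mp h2.symm
  linarith [sub_eq_zero.mp h3]

lemma geo_param {γ : ℝ → F} {B r : ℝ} (h : IsGeodesicOn γ 0 B) (hr : r ∈ Set.Icc 0 B) :
    dist (γ 0) (γ r) = r := by
  rw [h 0 ⟨le_refl _, hr.1.trans hr.2⟩ r hr, zero_sub, abs_neg, abs_of_nonneg hr.1]

lemma closed_eq_set {f g : ℝ → F} {a b : ℝ} (hf : ContinuousOn f (Set.Icc a b))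
    (hg : ContinuousOn g (Set.Icc a b)) : IsClosed {t ∈ Set.Icc a b | f t = g t} := by
  have heq : {t ∈ Set.Icc a b | f t = g t}
      = Set.Icc a b ∩ (fun t => dist (f t) (g t)) ⁻¹' {0} := by
    ext t
    simp [Set.mem_setOf_eq, dist_eq_zero]
  rw [heq]
  exact ContinuousOn.preimage_isClosed_of_isClosed
    (continuous_dist.comp_continuousOn (hf.prodMk hg)) isClosed_Icc
    isClosed_singleton

variable {P : Set (Set F)}

lemma pieces_eq (hTG : IsTreeGraded P) {p q : Set F} (hp : p ∈ P) (hq : q ∈ P) {a b : F}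
    (hap : a ∈ p) (haq : a ∈ q) (hbp : b ∈ p) (hbq : b ∈ q) (hab : a ≠ b) : p = q := by
  by_contra hne
  exact hab (hTG.T1 p hp q hq hne ⟨hap, haq⟩ ⟨hbp, hbq⟩)

lemma bigon (hTG : IsTreeGraded P) {σ τ : ℝ → F} {m : ℝ} (hm : 0 < m)
    (hσ : IsGeodesicOn σ 0 m) (hτ : IsGeodesicOn τ 0 m)
    (h0 : σ 0 = τ 0) (h1 : σ m = τ m)
    (hd : ∀ r, 0 < r → r < m → σ r ≠ τ r) :
    ∃ p ∈ P, σ '' Set.Icc 0 m ⊆ p ∧ τ '' Set.Icc 0 m ⊆ p := by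
  classical
  set ℓ : ℝ → F := fun t => if t ≤ m then σ t else τ (2 * m - t) with hℓdef
  have hval1 : ∀ t ∈ Set.Icc (0:ℝ) m, ℓ t = σ t := fun t ht => by
    simp only [hℓdef, if_pos ht.2]
  have hval2 : ∀ t ∈ Set.Icc m (2 * m), ℓ t = τ (2 * m - t) := by
    intro t ht
    by_cases h : t ≤ m
    · have htm : t = m := le_antisymm h ht.1
      simp only [hℓdef, if_pos h]
      rw [htm, h1]
      congr 1
      ring
    · simp only [hℓdef, if_neg h]
  have side1 : IsGeodesicOn ℓ 0 m := by
    intro u hu t ht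
    rw [hval1 u hu, hval1 t ht]
    exact hσ u hu t ht
  have side2 : IsGeodesicOn ℓ m (2 * m) := by
    intro u hu t ht
    rw [hval2 u hu, hval2 t ht]
    have hmu : 2 * m - u ∈ Set.Icc (0:ℝ) m := ⟨by linarith [hu.2], by linarith [hu.1]⟩
    have hmt : 2 * m - t ∈ Set.Icc (0:ℝ) m := ⟨by linarith [ht.2], by linarith [ht.1]⟩
    rw [hτ _ hmu _ hmt]
    rw [show (2 * m - u) - (2 * m - t) = t - u by ring, abs_sub_comm]
  have side3 : IsGeodesicOn ℓ (2 * m) (2 * m) := by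
    intro u hu t ht
    have h1' : u = 2 * m := le_antisymm hu.2 hu.1
    have h2' : t = 2 * m := le_antisymm ht.2 ht.1
    subst h1'; subst h2'
    simp
  have hclosed : ℓ 0 = ℓ (2 * m) := by
    rw [hval1 0 ⟨le_refl _, hm.le⟩, hval2 (2 * m) ⟨by linarith, le_refl _⟩]
    rw [show 2 * m - 2 * m = (0:ℝ) by ring, h0]
  have key : ∀ t ∈ Set.Ico (0:ℝ) (2*m), ∀ t' ∈ Set.Ico (0:ℝ) (2*m),
      t ≤ t' → ℓ t = ℓ t' → t = t' := by
    intro t ht t' ht' _ heq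
    by_cases h1t : t ≤ m <;> by_cases h1t' : t' ≤ m
    · rw [hval1 t ⟨ht.1, h1t⟩, hval1 t' ⟨ht'.1, h1t'⟩] at heq
      exact geo_injOn hσ ⟨ht.1, h1t⟩ ⟨ht'.1, h1t'⟩ heq
    · -- t ≤ m < t'
      rw [hval1 t ⟨ht.1, h1t⟩, hval2 t' ⟨(not_le.mp h1t').le, ht'.2.le⟩] at heq
      have hr0 : 0 < 2 * m - t' := by linarith [ht'.2]
      have hrm : 2 * m - t' < m := by linarith [not_le.mp h1t']
      have hd1 : dist (σ 0) (σ t) = t := geo_param hσ ⟨ht.1, h1t⟩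
      have hd2 : dist (τ 0) (τ (2 * m - t')) = 2 * m - t' :=
        geo_param hτ ⟨hr0.le, hrm.le⟩
      have hte : t = 2 * m - t' := by
        rw [← hd1, ← hd2, h0, heq]
      exfalso
      refine hd t (by linarith) (by linarith) ?_
      rw [heq]
      congr 1
      linarith
    · exfalso; exact h1t (le_trans (by assumption) h1t')
    · rw [hval2 t ⟨(not_le.mp h1t).le, ht.2.le⟩, hval2 t' ⟨(not_le.mp h1t').le, ht'.2.le⟩]
        at heq
      have := geo_injOn hτ (u := 2*m - t) (t := 2*m - t')
        ⟨by linarith [ht.2], by linarith [not_le.mp h1t]⟩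
        ⟨by linarith [ht'.2], by linarith [not_le.mp h1t']⟩ heq
      linarith
  have hsimple : Set.InjOn ℓ (Set.Ico 0 (2 * m)) := by
    intro t ht t' ht' heq
    rcases le_total t t' with h | h
    · exact key t ht t' ht' h heq
    · exact (key t' ht' t ht h heq.symm).symm
  obtain ⟨p, hp, himg⟩ := hTG.T2 ℓ m (2 * m) (2 * m)
    ⟨by linarith, hm.le, by linarith, le_refl _, side1, side2, side3, hclosed, hsimple⟩
  refine ⟨p, hp, ?_, ?_⟩
  · rintro _ ⟨r, hr, rfl⟩
    exact himg ⟨r, ⟨hr.1, by linarith [hr.2]⟩, hval1 r hr⟩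
  · rintro _ ⟨r, hr, rfl⟩
    refine himg ⟨2 * m - r, ⟨by linarith [hr.2], by linarith [hr.1]⟩, ?_⟩
    rw [hval2 (2 * m - r) ⟨by linarith [hr.2], by linarith [hr.1]⟩]
    congr 1
    ring

end Aux

section Aux2

variable {F : Type*} [MetricSpace F] {P : Set (Set F)}

/-- Intersection of a piece with a geodesic is convex. -/
lemma piece_convex (hTG : IsTreeGraded P) {p : Set F} (hp : p ∈ P) {γ : ℝ → F} {m : ℝ}
    (hγ : IsGeodesicOn γ 0 m) {r1 r2 r3 : ℝ} (h01 : 0 ≤ r1) (h12 : r1 ≤ r2) (h23 : r2 ≤ r3)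
    (h3m : r3 ≤ m) (hr1 : γ r1 ∈ p) (hr3 : γ r3 ∈ p) : γ r2 ∈ p := by
  by_contra hr2
  obtain ⟨σ, hσ0, hσd, hσgeo, hσim⟩ := hTG.pieces_geodesic p hp (γ r1) hr1 (γ r3) hr3
  have hdist : dist (γ r1) (γ r3) = r3 - r1 := by
    rw [hγ r1 ⟨h01, by linarith⟩ r3 ⟨by linarith, h3m⟩, abs_sub_comm,
      abs_of_nonneg (by linarith)]
  rw [hdist] at hσd hσgeo hσim
  set d := r3 - r1 with hd
  -- the geodesic γ shifted
  set g' : ℝ → F := fun t => γ (r1 + t) with hg'def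
  have hg'geo : IsGeodesicOn g' 0 d := by
    intro u hu t ht
    rw [hg'def]
    simp only
    rw [hγ (r1 + u) ⟨by linarith [hu.1], by linarith [hu.2]⟩
        (r1 + t) ⟨by linarith [ht.1], by linarith [ht.2]⟩]
    congr 1
    ring
  have hE : IsClosed {t ∈ Set.Icc 0 d | g' t = σ t} :=
    closed_eq_set (geo_continuousOn hg'geo) (geo_continuousOn hσgeo)
  set E := {t ∈ Set.Icc 0 d | g' t = σ t} with hEdef
  have h0E : (0:ℝ) ∈ E := by
    refine ⟨⟨le_refl _, by linarith⟩, ?_⟩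
    rw [hg'def]; simp only; rw [add_zero, hσ0]
  have hdE : d ∈ E := by
    refine ⟨⟨by linarith, le_refl _⟩, ?_⟩
    rw [hg'def]; simp only
    rw [show r1 + d = r3 by rw [hd]; ring, hσd]
  have hr2E : r2 - r1 ∉ E := by
    intro hmem
    apply hr2
    have : g' (r2 - r1) = σ (r2 - r1) := hmem.2
    rw [hg'def] at this; simp only at this
    rw [show r1 + (r2 - r1) = r2 by ring] at this
    rw [this]
    exact hσim ⟨r2 - r1, ⟨by linarith, by linarith⟩, rfl⟩
  -- sup below and inf above
  set E1 := E ∩ Set.Icc 0 (r2 - r1) with hE1def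
  set E2 := E ∩ Set.Icc (r2 - r1) d with hE2def
  have hE1c : IsClosed E1 := hE.inter isClosed_Icc
  have hE2c : IsClosed E2 := hE.inter isClosed_Icc
  have hE1ne : E1.Nonempty := ⟨0, h0E, le_refl _, by linarith⟩
  have hE2ne : E2.Nonempty := ⟨d, hdE, ⟨by linarith, le_refl _⟩⟩
  set m1 := sSup E1 with hm1def
  set m2 := sInf E2 with hm2def
  have hm1mem : m1 ∈ E1 := hE1c.csSup_mem hE1ne ⟨r2 - r1, fun t ht => ht.2.2⟩
  have hm2mem : m2 ∈ E2 := hE2c.csInf_mem hE2ne ⟨r2 - r1, fun t ht => ht.2.1⟩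
  have hm1lt : m1 < r2 - r1 := lt_of_le_of_ne hm1mem.2.2 (fun h => hr2E (h ▸ hm1mem.1))
  have hm2gt : r2 - r1 < m2 := lt_of_le_of_ne hm2mem.2.1 (fun h => hr2E (h.symm ▸ hm2mem.1))
  have hm1m2 : m1 < m2 := hm1lt.trans hm2gt
  have hm10 : 0 ≤ m1 := hm1mem.2.1
  have hm2d : m2 ≤ d := hm2mem.2.2
  -- bigon between m1 and m2
  set σ' : ℝ → F := fun t => g' (m1 + t) with hσ'def
  set τ' : ℝ → F := fun t => σ (m1 + t) with hτ'def
  have hσ'geo : IsGeodesicOn σ' 0 (m2 - m1) := by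
    intro u hu t ht
    rw [hσ'def]; simp only
    rw [hg'geo (m1 + u) ⟨by linarith [hu.1], by linarith [hu.2]⟩
        (m1 + t) ⟨by linarith [ht.1], by linarith [ht.2]⟩]
    congr 1; ring
  have hτ'geo : IsGeodesicOn τ' 0 (m2 - m1) := by
    intro u hu t ht
    rw [hτ'def]; simp only
    rw [hσgeo (m1 + u) ⟨by linarith [hu.1], by linarith [hu.2]⟩
        (m1 + t) ⟨by linarith [ht.1], by linarith [ht.2]⟩]
    congr 1; ring
  have hgap : ∀ r, 0 < r → r < m2 - m1 → σ' r ≠ τ' r := by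
    intro r hr0 hrm heq
    have hmem : m1 + r ∈ E := ⟨⟨by linarith, by linarith⟩, heq⟩
    rcases le_or_gt (m1 + r) (r2 - r1) with hle | hlt
    · have : m1 + r ≤ m1 := le_csSup ⟨r2 - r1, fun t ht => ht.2.2⟩ ⟨hmem, by linarith, hle⟩
      linarith
    · have : m2 ≤ m1 + r := csInf_le ⟨r2 - r1, fun t ht => ht.2.1⟩ ⟨hmem, hlt.le, by linarith⟩
      linarith
  obtain ⟨q, hq, hqσ', hqτ'⟩ := bigon hTG (by linarith : (0:ℝ) < m2 - m1) hσ'geo hτ'geo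
    (by show g' (m1 + 0) = σ (m1 + 0); rw [add_zero]; exact hm1mem.1.2)
    (by show g' (m1 + (m2 - m1)) = σ (m1 + (m2 - m1));
        rw [show m1 + (m2 - m1) = m2 by ring]; exact hm2mem.1.2)
    hgap
  -- q = p via the two σ points
  have hσm1p : σ m1 ∈ p := hσim ⟨m1, ⟨hm10, by linarith⟩, rfl⟩
  have hσm2p : σ m2 ∈ p := hσim ⟨m2, ⟨by linarith, hm2d⟩, rfl⟩
  have hσm1q : σ m1 ∈ q := hqτ' ⟨0, ⟨le_refl _, by linarith⟩, by rw [hτ'def]; simp⟩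
  have hσm2q : σ m2 ∈ q := hqτ' ⟨m2 - m1, ⟨by linarith, le_refl _⟩,
    by rw [hτ'def]; simp only; congr 1; ring⟩
  have hne : σ m1 ≠ σ m2 := by
    intro h
    have := geo_injOn hσgeo (u := m1) (t := m2) ⟨hm10, by linarith⟩ ⟨by linarith, hm2d⟩ h
    linarith
  have hpq : p = q := pieces_eq hTG hp hq hσm1p hσm1q hσm2p hσm2q hne
  apply hr2
  rw [hpq]
  refine hqσ' ⟨r2 - r1 - m1, ⟨by linarith, by linarith⟩, ?_⟩
  rw [hσ'def, hg'def]; simp only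
  congr 1
  ring

/-- Propagation: if a piece captures an initial segment of a geodesic from `s`, it captures
an initial segment of any other geodesic from `s` sharing a point with it. -/
lemma propagation (hTG : IsTreeGraded P) {p : Set F} (hp : p ∈ P) {γ₁ γ₂ : ℝ → F}
    {B₁ B₂ u : ℝ} {s : F}
    (h₁ : IsGeodesicOn γ₁ 0 B₁) (h₂ : IsGeodesicOn γ₂ 0 B₂)
    (hs₁ : γ₁ 0 = s) (hs₂ : γ₂ 0 = s)
    (hu : 0 < u) (huB : u ≤ B₁) (hcap : γ₁ '' Set.Icc 0 u ⊆ p)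
    {r : ℝ} (hr : 0 < r) (hrB₁ : r ≤ B₁) (hrB₂ : r ≤ B₂) (hshare : γ₁ r = γ₂ r) :
    ∃ v, 0 < v ∧ v ≤ B₂ ∧ γ₂ '' Set.Icc 0 v ⊆ p := by
  have hsp : s ∈ p := hcap ⟨0, ⟨le_refl _, hu.le⟩, hs₁⟩
  set M := min B₁ B₂ with hMdef
  have hrM : r ≤ M := le_min hrB₁ hrB₂
  set E := {t ∈ Set.Icc 0 M | γ₁ t = γ₂ t} with hEdef
  have hE : IsClosed E := closed_eq_set
    (geo_continuousOn (geo_mono h₁ (le_refl _) (min_le_left _ _)))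
    (geo_continuousOn (geo_mono h₂ (le_refl _) (min_le_right _ _)))
  by_cases hA : ∃ t, t ∈ E ∧ 0 < t ∧ t ≤ u
  · obtain ⟨t, htE, ht0, htu⟩ := hA
    have hγ₂t : γ₂ t ∈ p := by
      rw [← htE.2]
      exact hcap ⟨t, ⟨ht0.le, htu⟩, rfl⟩
    refine ⟨t, ht0, htE.1.2.trans (min_le_right _ _), ?_⟩
    rintro _ ⟨w, hw, rfl⟩
    have hs₂' : γ₂ 0 ∈ p := by rw [hs₂]; exact hsp
    exact piece_convex hTG hp h₂ (le_refl 0) hw.1 hw.2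
      (htE.1.2.trans (min_le_right _ _)) hs₂' hγ₂t
  · push_neg at hA
    set T := E ∩ Set.Ici u with hTdef
    have hTc : IsClosed T := hE.inter isClosed_Ici
    have hTne : T.Nonempty := by
      refine ⟨r, ⟨⟨hr.le, hrM⟩, hshare⟩, ?_⟩
      exact (hA r ⟨⟨hr.le, hrM⟩, hshare⟩ hr).le
    set m := sInf T with hmdef
    have hmmem : m ∈ T := hTc.csInf_mem hTne ⟨u, fun t ht => ht.2⟩
    have hmu : u ≤ m := hmmem.2
    have hm0 : 0 < m := lt_of_lt_of_le hu hmu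
    have hmM : m ≤ M := hmmem.1.1.2
    have hgap : ∀ t, 0 < t → t < m → γ₁ t ≠ γ₂ t := by
      intro t ht0 htm heq
      have htE : t ∈ E := ⟨⟨ht0.le, by linarith⟩, heq⟩
      have : u < t := hA t htE ht0
      have : m ≤ t := csInf_le ⟨u, fun w hw => hw.2⟩ ⟨htE, this.le⟩
      linarith
    obtain ⟨q, hq, hq₁, hq₂⟩ := bigon hTG hm0
      (geo_mono h₁ (le_refl _) (hmM.trans (min_le_left _ _)))
      (geo_mono h₂ (le_refl _) (hmM.trans (min_le_right _ _)))
      (by rw [hs₁, hs₂]) hmmem.1.2 hgap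
    have hsq : s ∈ q := by rw [← hs₁]; exact hq₁ ⟨0, ⟨le_refl _, hm0.le⟩, rfl⟩
    have hγ₁up : γ₁ u ∈ p := hcap ⟨u, ⟨hu.le, le_refl _⟩, rfl⟩
    have hγ₁uq : γ₁ u ∈ q := hq₁ ⟨u, ⟨hu.le, hmu⟩, rfl⟩
    have hne : s ≠ γ₁ u := by
      intro h
      have : dist (γ₁ 0) (γ₁ u) = u := geo_param h₁ ⟨hu.le, huB⟩
      rw [hs₁, ← h, dist_self] at this
      linarith
    have hpq : p = q := pieces_eq hTG hp hq hsp hsq hγ₁up hγ₁uq hne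
    exact ⟨m, hm0, hmM.trans (min_le_right _ _), by rw [hpq]; exact hq₂⟩

end Aux2

section Aux3

variable {F : Type*} [MetricSpace F] {P : Set (Set F)}

/-- From two geodesics issuing from `s` that meet only at `s`, and a geodesic `h` joining
their endpoints and avoiding `s`, extract a simple geodesic triangle and hence a piece
containing nontrivial initial segments of both. -/
lemma triangle_lemma (hTG : IsTreeGraded P) {s : F} {g g'' h : ℝ → F} {B T D : ℝ}
    (hB : 0 < B) (hT : 0 < T) (hD : 0 ≤ D)
    (hg : IsGeodesicOn g 0 B) (hg'' : IsGeodesicOn g'' 0 T) (hh : IsGeodesicOn h 0 D)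
    (hgs : g 0 = s) (hg''s : g'' 0 = s)
    (honly : ∀ β ∈ Set.Icc (0:ℝ) B, ∀ τ ∈ Set.Icc (0:ℝ) T, g β = g'' τ → β = 0)
    (hh0 : h 0 = g B) (hhD : h D = g'' T)
    (hhs : ∀ t ∈ Set.Icc (0:ℝ) D, h t ≠ s) :
    ∃ q ∈ P, ∃ u v : ℝ, 0 < u ∧ u ≤ B ∧ 0 < v ∧ v ≤ T ∧
      g '' Set.Icc 0 u ⊆ q ∧ g'' '' Set.Icc 0 v ⊆ q := by
  classical
  have hgimgc : IsClosed (g '' Set.Icc 0 B) :=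
    (isCompact_Icc.image_of_continuousOn (geo_continuousOn hg)).isClosed
  have hg''imgc : IsClosed (g'' '' Set.Icc 0 T) :=
    (isCompact_Icc.image_of_continuousOn (geo_continuousOn hg'')).isClosed
  set K₁ := Set.Icc 0 D ∩ h ⁻¹' (g '' Set.Icc 0 B) with hK₁def
  have hK₁c : IsClosed K₁ :=
    ContinuousOn.preimage_isClosed_of_isClosed (geo_continuousOn hh) isClosed_Icc hgimgc
  have hK₁ne : K₁.Nonempty := ⟨0, ⟨le_refl _, hD⟩, ⟨B, ⟨hB.le, le_refl _⟩, hh0.symm⟩⟩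
  set t₁ := sSup K₁ with ht₁def
  have ht₁mem : t₁ ∈ K₁ := hK₁c.csSup_mem hK₁ne ⟨D, fun t ht => ht.1.2⟩
  have ht₁Icc : t₁ ∈ Set.Icc (0:ℝ) D := ht₁mem.1
  obtain ⟨u, huIcc, hgu⟩ := ht₁mem.2
  have hu0 : 0 < u := by
    rcases lt_or_eq_of_le huIcc.1 with h' | h'
    · exact h'
    · exfalso
      exact hhs t₁ ht₁Icc (by rw [← hgu, ← h', hgs])
  set K₂ := Set.Icc t₁ D ∩ h ⁻¹' (g'' '' Set.Icc 0 T) with hK₂def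
  have hK₂c : IsClosed K₂ :=
    ContinuousOn.preimage_isClosed_of_isClosed
      (ContinuousOn.mono (geo_continuousOn hh) (Set.Icc_subset_Icc ht₁Icc.1 (le_refl _)))
      isClosed_Icc hg''imgc
  have hK₂ne : K₂.Nonempty := ⟨D, ⟨ht₁Icc.2, le_refl _⟩, ⟨T, ⟨hT.le, le_refl _⟩, hhD.symm⟩⟩
  set t₂ := sInf K₂ with ht₂def
  have ht₂mem : t₂ ∈ K₂ := hK₂c.csInf_mem hK₂ne ⟨t₁, fun t ht => ht.1.1⟩
  have ht₂Icc : t₂ ∈ Set.Icc t₁ D := ht₂mem.1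
  obtain ⟨v, hvIcc, hg''v⟩ := ht₂mem.2
  have hv0 : 0 < v := by
    rcases lt_or_eq_of_le hvIcc.1 with h' | h'
    · exact h'
    · exact absurd (by rw [← hg''v, ← h', hg''s]) (hhs t₂ ⟨ht₁Icc.1.trans ht₂Icc.1, ht₂Icc.2⟩)
  have ht₁t₂ : t₁ < t₂ := by
    rcases lt_or_eq_of_le ht₂Icc.1 with h' | h'
    · exact h'
    · exfalso
      have : g u = g'' v := by rw [hgu, hg''v, h']
      have hu0' := honly u ⟨huIcc.1, huIcc.2⟩ v hvIcc this
      linarith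
  have F1 : ∀ t ∈ Set.Icc (0:ℝ) D, t₁ < t → h t ∉ g '' Set.Icc 0 B := by
    intro t htIcc hlt hmem
    have : t ≤ t₁ := le_csSup ⟨D, fun w hw => hw.1.2⟩ ⟨htIcc, hmem⟩
    linarith
  have F2 : ∀ t ∈ Set.Icc t₁ D, t < t₂ → h t ∉ g'' '' Set.Icc 0 T := by
    intro t htIcc hlt hmem
    have : t₂ ≤ t := csInf_le ⟨t₁, fun w hw => hw.1.1⟩ ⟨htIcc, hmem⟩
    linarith
  set b := u + (t₂ - t₁) with hbdef
  set L := u + (t₂ - t₁) + v with hLdef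
  have hub : u < b := by rw [hbdef]; linarith
  have hbL : b < L := by rw [hLdef, hbdef]; linarith
  set ℓ : ℝ → F := fun t => if t ≤ u then g t else if t ≤ b then h (t - u + t₁)
    else g'' (v - (t - b)) with hℓdef
  have hval1 : ∀ t ∈ Set.Icc (0:ℝ) u, ℓ t = g t := fun t ht => by
    simp only [hℓdef, if_pos ht.2]
  have hval2 : ∀ t ∈ Set.Icc u b, ℓ t = h (t - u + t₁) := by
    intro t ht
    by_cases h' : t ≤ u
    · have htu : t = u := le_antisymm h' ht.1
      simp only [hℓdef, if_pos h']
      rw [htu, hgu]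
      congr 1
      ring
    · simp only [hℓdef, if_neg h', if_pos ht.2]
  have hval3 : ∀ t ∈ Set.Icc b L, ℓ t = g'' (v - (t - b)) := by
    intro t ht
    have h1 : ¬ t ≤ u := not_le.mpr (lt_of_lt_of_le hub ht.1)
    by_cases h2 : t ≤ b
    · have htb : t = b := le_antisymm h2 ht.1
      simp only [hℓdef, if_neg h1, if_pos h2]
      rw [htb, show b - u + t₁ = t₂ by rw [hbdef]; ring, ← hg''v]
      congr 1
      ring
    · simp only [hℓdef, if_neg h1, if_neg h2]
  have side1 : IsGeodesicOn ℓ 0 u := by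
    intro r hr t ht
    rw [hval1 r hr, hval1 t ht]
    exact hg r ⟨hr.1, hr.2.trans huIcc.2⟩ t ⟨ht.1, ht.2.trans huIcc.2⟩
  have side2 : IsGeodesicOn ℓ u b := by
    intro r hr t ht
    rw [hval2 r hr, hval2 t ht]
    rw [hh (r - u + t₁) ⟨by linarith [hr.1, ht₁Icc.1], by linarith [hr.2, ht₂Icc.2]⟩
        (t - u + t₁) ⟨by linarith [ht.1, ht₁Icc.1], by linarith [ht.2, ht₂Icc.2]⟩]
    congr 1
    ring
  have side3 : IsGeodesicOn ℓ b L := by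
    intro r hr t ht
    rw [hval3 r hr, hval3 t ht]
    rw [hg'' (v - (r - b)) ⟨by linarith [hr.2], by linarith [hr.1, hvIcc.2]⟩
        (v - (t - b)) ⟨by linarith [ht.2], by linarith [ht.1, hvIcc.2]⟩]
    rw [show v - (r - b) - (v - (t - b)) = t - r by ring, abs_sub_comm]
  have hclosed : ℓ 0 = ℓ L := by
    rw [hval1 0 ⟨le_refl _, hu0.le⟩, hval3 L ⟨hbL.le, le_refl _⟩]
    rw [hgs, show v - (L - b) = 0 by rw [hLdef, hbdef]; ring, hg''s]
  have key : ∀ t ∈ Set.Ico (0:ℝ) L, ∀ t' ∈ Set.Ico (0:ℝ) L,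
      t ≤ t' → ℓ t = ℓ t' → t = t' := by
    intro t ht t' ht' hle heq
    rcases le_or_gt t u with h1 | h1
    · rcases le_or_gt t' u with h1' | h1'
      · rw [hval1 t ⟨ht.1, h1⟩, hval1 t' ⟨ht'.1, h1'⟩] at heq
        exact geo_injOn hg ⟨ht.1, h1.trans huIcc.2⟩ ⟨ht'.1, h1'.trans huIcc.2⟩ heq
      · rcases le_or_gt t' b with h2' | h2'
        · rw [hval1 t ⟨ht.1, h1⟩, hval2 t' ⟨h1'.le, h2'⟩] at heq
          exfalso
          refine F1 (t' - u + t₁) ⟨by linarith [ht₁Icc.1], by linarith [ht₂Icc.2]⟩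
            (by linarith) ⟨t, ⟨ht.1, h1.trans huIcc.2⟩, heq⟩
        · rw [hval1 t ⟨ht.1, h1⟩, hval3 t' ⟨h2'.le, ht'.2.le⟩] at heq
          exfalso
          have hτ'0 : 0 < v - (t' - b) := by linarith [ht'.2]
          have hτ'v : v - (t' - b) < v := by linarith
          have ht0 : t = 0 := honly t ⟨ht.1, h1.trans huIcc.2⟩ (v - (t' - b))
            ⟨hτ'0.le, by linarith [hvIcc.2]⟩ heq
          rw [ht0, hgs] at heq
          have hdp := geo_param hg'' (r := v - (t' - b)) ⟨hτ'0.le, by linarith [hvIcc.2]⟩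
          rw [← heq, hg''s, dist_self] at hdp
          linarith
    · have h1' : u < t' := lt_of_lt_of_le h1 hle
      rcases le_or_gt t b with h2 | h2
      · rcases le_or_gt t' b with h2' | h2'
        · rw [hval2 t ⟨h1.le, h2⟩, hval2 t' ⟨h1'.le, h2'⟩] at heq
          have := geo_injOn hh
            ⟨by linarith [ht₁Icc.1], by linarith [ht₂Icc.2]⟩
            ⟨by linarith [ht₁Icc.1], by linarith [ht₂Icc.2]⟩ heq
          linarith
        · rw [hval2 t ⟨h1.le, h2⟩, hval3 t' ⟨h2'.le, ht'.2.le⟩] at heq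
          exfalso
          have hτ'0 : 0 < v - (t' - b) := by linarith [ht'.2]
          have hτ'v : v - (t' - b) < v := by linarith
          rcases lt_or_eq_of_le (show t - u + t₁ ≤ t₂ by linarith) with hlt | heqp
          · exact F2 (t - u + t₁) ⟨by linarith, by linarith [ht₂Icc.2]⟩ hlt
              ⟨v - (t' - b), ⟨hτ'0.le, by linarith [hvIcc.2]⟩, heq.symm⟩
          · rw [heqp, ← hg''v] at heq
            have := geo_injOn hg'' hvIcc
              ⟨hτ'0.le, by linarith [hvIcc.2]⟩ heq
            linarith
      · have h2' : b < t' := lt_of_lt_of_le h2 hle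
        rw [hval3 t ⟨h2.le, ht.2.le⟩, hval3 t' ⟨h2'.le, ht'.2.le⟩] at heq
        have := geo_injOn hg''
          ⟨by linarith [ht.2], by linarith [hvIcc.2]⟩
          ⟨by linarith [ht'.2], by linarith [hvIcc.2]⟩ heq
        linarith
  have hsimple : Set.InjOn ℓ (Set.Ico 0 L) := by
    intro t ht t' ht' heq
    rcases le_total t t' with h' | h'
    · exact key t ht t' ht' h' heq
    · exact (key t' ht' t ht h' heq.symm).symm
  obtain ⟨q, hq, himg⟩ := hTG.T2 ℓ u b L
    ⟨by linarith, hu0.le, hub.le, hbL.le, side1, side2, side3, hclosed, hsimple⟩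
  refine ⟨q, hq, u, v, hu0, huIcc.2, hv0, hvIcc.2, ?_, ?_⟩
  · rintro _ ⟨r, hr, rfl⟩
    exact himg ⟨r, ⟨hr.1, by linarith [hr.2]⟩, hval1 r hr⟩
  · rintro _ ⟨r, hr, rfl⟩
    refine himg ⟨b + (v - r), ⟨by linarith [hr.2, ht₁Icc.1], by linarith [hr.1]⟩, ?_⟩
    rw [hval3 (b + (v - r)) ⟨by linarith [hr.2], by linarith [hr.1]⟩]
    congr 1
    ring
end Aux3

section Aux4

variable {F : Type*} [MetricSpace F] {P : Set (Set F)}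

/-- Two geodesics from `s` can share a point only at equal parameters. -/
lemma share_param {s : F} {g₁ g₂ : ℝ → F} {B₁ B₂ β τ : ℝ}
    (h₁ : IsGeodesicOn g₁ 0 B₁) (h₂ : IsGeodesicOn g₂ 0 B₂)
    (hs₁ : g₁ 0 = s) (hs₂ : g₂ 0 = s)
    (hβ : β ∈ Set.Icc 0 B₁) (hτ : τ ∈ Set.Icc 0 B₂) (he : g₁ β = g₂ τ) : β = τ := by
  have e1 : dist (g₁ 0) (g₁ β) = β := geo_param h₁ hβ
  have e2 : dist (g₂ 0) (g₂ τ) = τ := geo_param h₂ hτ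
  rw [hs₁] at e1
  rw [hs₂] at e2
  rw [← e1, he, e2]

/-- The master dichotomy: two geodesics from `s` whose points `g β`, `g'' τ` are at
distance `< β + τ` either share a point distinct from `s` or have nontrivial initial
segments in a common piece. -/
lemma master (hF : GeodesicSpace F) (hTG : IsTreeGraded P) {s : F} {g g'' : ℝ → F}
    {B T β τ : ℝ}
    (hg : IsGeodesicOn g 0 B) (hg'' : IsGeodesicOn g'' 0 T)
    (hgs : g 0 = s) (hg''s : g'' 0 = s)
    (hβ : 0 < β) (hβB : β ≤ B) (hτ : 0 < τ) (hτT : τ ≤ T)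
    (hstrict : dist (g β) (g'' τ) < β + τ) :
    (∃ r, 0 < r ∧ r ≤ B ∧ r ≤ T ∧ g r = g'' r) ∨
    (∃ q ∈ P, (∃ u, 0 < u ∧ u ≤ B ∧ g '' Set.Icc 0 u ⊆ q) ∧
              (∃ v, 0 < v ∧ v ≤ T ∧ g'' '' Set.Icc 0 v ⊆ q)) := by
  by_cases hsh : ∃ β' τ', 0 < β' ∧ β' ≤ β ∧ 0 < τ' ∧ τ' ≤ τ ∧ g β' = g'' τ'
  · obtain ⟨β', τ', h1, h2, h3, h4, h5⟩ := hsh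
    left
    have := share_param hg hg'' hgs hg''s ⟨h1.le, h2.trans hβB⟩ ⟨h3.le, h4.trans hτT⟩ h5
    exact ⟨β', h1, h2.trans hβB, this ▸ h4.trans hτT, this ▸ h5⟩
  · push_neg at hsh
    have honly : ∀ β' ∈ Set.Icc (0:ℝ) β, ∀ τ' ∈ Set.Icc (0:ℝ) τ, g β' = g'' τ' → β' = 0 := by
      intro β' hβ' τ' hτ' he
      by_contra hne
      have hβ'0 : 0 < β' := lt_of_le_of_ne hβ'.1 (Ne.symm hne)
      rcases lt_or_eq_of_le hτ'.1 with h' | h'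
      · exact hsh β' τ' hβ'0 hβ'.2 h' hτ'.2 he
      · rw [← h', hg''s] at he
        have := geo_param hg ⟨hβ'.1, hβ'.2.trans hβB⟩
        rw [he, hgs, dist_self] at this
        linarith
    obtain ⟨h, hh0, hhD, hhgeo⟩ := hF (g β) (g'' τ)
    set D := dist (g β) (g'' τ) with hDdef
    have hD0 : 0 ≤ D := dist_nonneg
    have hhs : ∀ t ∈ Set.Icc (0:ℝ) D, h t ≠ s := by
      intro t ht he
      have e1 : dist (h 0) (h t) = t := geo_param hhgeo ht
      have e2 : dist (h t) (h D) = D - t := by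
        rw [hhgeo t ht D ⟨hD0, le_refl _⟩, abs_sub_comm, abs_of_nonneg (by linarith [ht.2])]
      rw [hh0, he] at e1
      rw [he, hhD] at e2
      have e1' : β = t := by
        rw [← e1, dist_comm, ← hgs]
        exact (geo_param hg ⟨hβ.le, hβB⟩).symm
      have e2' : τ = D - t := by
        rw [← e2, ← hg''s]
        exact (geo_param hg'' ⟨hτ.le, hτT⟩).symm
      linarith
    obtain ⟨q, hq, u, v, hu0, huβ, hv0, hvτ, hgu, hg''v⟩ :=
      triangle_lemma hTG hβ hτ hD0 (geo_mono hg (le_refl _) hβB)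
        (geo_mono hg'' (le_refl _) hτT) hhgeo hgs hg''s honly hh0 hhD hhs
    exact Or.inr ⟨q, hq, ⟨u, hu0, huβ.trans hβB, hgu⟩, ⟨v, hv0, hvτ.trans hτT, hg''v⟩⟩

/-- Chain propagation through a preconnected set avoiding `s`. -/
lemma chain_reach (s : F) (C : Set F) (hpc : IsPreconnected C)
    (hCs : ∀ w ∈ C, w ≠ s) (Q : F → Prop)
    (hstep : ∀ w ∈ C, ∀ w' ∈ C, dist w w' < dist s w + dist s w' → Q w → Q w')
    {x : F} (hx : x ∈ C) (hQx : Q x) : ∀ w ∈ C, Q w := by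
  set U := ⋃ w ∈ {w | w ∈ C ∧ Q w}, Metric.ball w (dist s w) with hUdef
  set V := ⋃ w ∈ {w | w ∈ C ∧ ¬ Q w}, Metric.ball w (dist s w) with hVdef
  have hdpos : ∀ w ∈ C, 0 < dist s w := fun w hw =>
    dist_pos.mpr (Ne.symm (hCs w hw))
  have hUo : IsOpen U := isOpen_biUnion (fun w _ => Metric.isOpen_ball)
  have hVo : IsOpen V := isOpen_biUnion (fun w _ => Metric.isOpen_ball)
  have hcover : C ⊆ U ∪ V := by
    intro w hw
    by_cases hQ : Q w
    · exact Or.inl (Set.mem_biUnion ⟨hw, hQ⟩ (Metric.mem_ball_self (hdpos w hw)))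
    · exact Or.inr (Set.mem_biUnion ⟨hw, hQ⟩ (Metric.mem_ball_self (hdpos w hw)))
  intro w₀ hw₀
  by_contra hQw₀
  have hCU : (C ∩ U).Nonempty :=
    ⟨x, hx, Set.mem_biUnion ⟨hx, hQx⟩ (Metric.mem_ball_self (hdpos x hx))⟩
  have hCV : (C ∩ V).Nonempty :=
    ⟨w₀, hw₀, Set.mem_biUnion ⟨hw₀, hQw₀⟩ (Metric.mem_ball_self (hdpos w₀ hw₀))⟩
  obtain ⟨z, hzC, hzU, hzV⟩ := hpc U V hUo hVo hcover hCU hCV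
  obtain ⟨w, hwmem, hzball⟩ := Set.mem_iUnion₂.mp hzU
  obtain ⟨w', hw'mem, hzball'⟩ := Set.mem_iUnion₂.mp hzV
  have hQz : Q z := hstep w hwmem.1 z hzC
    (by
      have := Metric.mem_ball.mp hzball
      rw [dist_comm] at this
      calc dist w z < dist s w := this
        _ ≤ dist s w + dist s z := le_add_of_nonneg_right dist_nonneg) hwmem.2
  have hQw' : Q w' := hstep z hzC w' hw'mem.1
    (by
      have := Metric.mem_ball.mp hzball'
      calc dist z w' < dist s w' := this
        _ ≤ dist s z + dist s w' := le_add_of_nonneg_left dist_nonneg) hQz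
  exact hw'mem.2 hQw'

end Aux4

section Aux5

variable {F : Type*} [MetricSpace F] {P : Set (Set F)}

lemma caps_unique (hTG : IsTreeGraded P) {q q' : Set F} (hq : q ∈ P) (hq' : q' ∈ P)
    {g : ℝ → F} {B u u' : ℝ} (hgg : IsGeodesicOn g 0 B)
    (hu0 : 0 < u) (huB : u ≤ B) (hu'0 : 0 < u') (_hu'B : u' ≤ B)
    (hc : g '' Set.Icc 0 u ⊆ q) (hc' : g '' Set.Icc 0 u' ⊆ q') : q = q' := by
  set m := min u u' with hmdef
  have hm0 : 0 < m := lt_min hu0 hu'0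
  have h0q : g 0 ∈ q := hc ⟨0, ⟨le_refl _, hu0.le⟩, rfl⟩
  have h0q' : g 0 ∈ q' := hc' ⟨0, ⟨le_refl _, hu'0.le⟩, rfl⟩
  have hmq : g m ∈ q := hc ⟨m, ⟨hm0.le, min_le_left _ _⟩, rfl⟩
  have hmq' : g m ∈ q' := hc' ⟨m, ⟨hm0.le, min_le_right _ _⟩, rfl⟩
  have hne : g 0 ≠ g m := by
    intro h
    have := geo_injOn hgg ⟨le_refl _, hu0.le.trans huB⟩
      ⟨hm0.le, ((min_le_left _ _).trans huB : m ≤ B)⟩ h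
    linarith
  exact pieces_eq hTG hq hq' h0q h0q' hmq hmq' hne

end Aux5


/-- for a connected component `C` of `F \ {s}` in a tree-graded space,
either (a) there is a unique piece `P` meeting every geodesic from `s` into `C ∪ {s}` in a
nontrivial initial subsegment, or (b) every two geodesics from `s` into `C ∪ {s}` share a
point different from `s`. -/
theorem stmt_12 {F : Type*} [MetricSpace F] [CompleteSpace F] (hF : GeodesicSpace F)
    (P : Set (Set F)) (hTG : IsTreeGraded P) (s : F) (C : Set F)
    (hC : ∃ x₀ : F, x₀ ≠ s ∧ C = connectedComponentIn ({s}ᶜ : Set F) x₀) :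
    (∃! p : Set F, p ∈ P ∧ ∀ x ∈ C, ∀ γ : ℝ → F, IsGeodesicFromTo γ s x C →
      ∃ u : ℝ, 0 < u ∧ u ≤ dist s x ∧
        p ∩ γ '' Set.Icc 0 (dist s x) = γ '' Set.Icc 0 u) ∨
    (∀ x ∈ C, ∀ y ∈ C, ∀ γ δ : ℝ → F,
      IsGeodesicFromTo γ s x C → IsGeodesicFromTo δ s y C →
      ∃ z : F, z ≠ s ∧ z ∈ γ '' Set.Icc 0 (dist s x) ∧ z ∈ δ '' Set.Icc 0 (dist s y)) := by
  classical
  obtain ⟨x₀, hx₀s, hCdef⟩ := hC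
  by_cases hb : ∀ x ∈ C, ∀ y ∈ C, ∀ γ δ : ℝ → F,
      IsGeodesicFromTo γ s x C → IsGeodesicFromTo δ s y C →
      ∃ z : F, z ≠ s ∧ z ∈ γ '' Set.Icc 0 (dist s x) ∧ z ∈ δ '' Set.Icc 0 (dist s y)
  · exact Or.inr hb
  left
  push_neg at hb
  obtain ⟨x, hxC, y, hyC, γ, δ, hγ, hδ, hnz⟩ := hb
  have hpc : IsPreconnected C := by
    rw [hCdef]; exact isPreconnected_connectedComponentIn
  have hCs : ∀ w ∈ C, w ≠ s := by
    intro w hw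
    rw [hCdef] at hw
    have := connectedComponentIn_subset ({s}ᶜ : Set F) x₀ hw
    simpa using this
  have hdpos : ∀ w ∈ C, 0 < dist s w := fun w hw => dist_pos.mpr (Ne.symm (hCs w hw))
  obtain ⟨hγ0, hγx, hγg, hγim⟩ := hγ
  obtain ⟨hδ0, hδy, hδg, hδim⟩ := hδ
  have hdx : 0 < dist s x := hdpos x hxC
  have hdy : 0 < dist s y := hdpos y hyC
  -- Step 1 (creation): find a piece containing a nontrivial initial segment of γ.
  set Q₁ : F → Prop := fun w => ∃ g : ℝ → F, g 0 = s ∧ g (dist s w) = w ∧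
    IsGeodesicOn g 0 (dist s w) ∧
    ((∃ r, 0 < r ∧ r ≤ dist s x ∧ r ≤ dist s w ∧ γ r = g r) ∨
     (∃ q ∈ P, (∃ u, 0 < u ∧ u ≤ dist s x ∧ γ '' Set.Icc 0 u ⊆ q) ∧
               (∃ v, 0 < v ∧ v ≤ dist s w ∧ g '' Set.Icc 0 v ⊆ q))) with hQ₁def
  have hQ₁x : Q₁ x := ⟨γ, hγ0, hγx, hγg,
    Or.inl ⟨dist s x, hdx, le_refl _, le_refl _, rfl⟩⟩
  have hstep₁ : ∀ w ∈ C, ∀ w' ∈ C, dist w w' < dist s w + dist s w' → Q₁ w → Q₁ w' := by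
    intro w hw w' hw' hclose hQw
    obtain ⟨g, hg0, hgw, hgg, hrel⟩ := hQw
    obtain ⟨g', hg'0, hg'w, hg'g⟩ := hF s w'
    have hstrict : dist (g (dist s w)) (g' (dist s w')) < dist s w + dist s w' := by
      rw [hgw, hg'w]; exact hclose
    have hrel' := master hF hTG hgg hg'g hg0 hg'0 (hdpos w hw) (le_refl _)
      (hdpos w' hw') (le_refl _) hstrict
    refine ⟨g', hg'0, hg'w, hg'g, ?_⟩
    rcases hrel with ⟨r, hr0, hrx, hrw, hγg_r⟩ | ⟨q, hq, hcapγ, hcapg⟩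
    · rcases hrel' with ⟨r', hr'0, hr'w, hr'w', hgg'⟩ | ⟨q, hq, hcapg, hcapg'⟩
      · have hstrict2 : dist (γ r) (g' r') < r + r' := by
          rw [hγg_r, ← hgg']
          rw [hgg r ⟨hr0.le, hrw⟩ r' ⟨hr'0.le, hr'w⟩]
          rw [abs_sub_lt_iff]
          constructor <;> linarith
        exact master hF hTG hγg hg'g hγ0 hg'0 hr0 hrx hr'0 hr'w' hstrict2
      · obtain ⟨u, hu0, huw, hcapgu⟩ := hcapg
        obtain ⟨v, hv0, hvx, hcap⟩ := propagation hTG hq hgg hγg hg0 hγ0 hu0 huw hcapgu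
          hr0 hrw hrx hγg_r.symm
        exact Or.inr ⟨q, hq, ⟨v, hv0, hvx, hcap⟩, hcapg'⟩
    · rcases hrel' with ⟨r', hr'0, hr'w, hr'w', hgg'⟩ | ⟨q', hq', hcapg2, hcapg'⟩
      · obtain ⟨u, hu0, huw, hcapgu⟩ := hcapg
        obtain ⟨v, hv0, hvw', hcap⟩ := propagation hTG hq hgg hg'g hg0 hg'0 hu0 huw hcapgu
          hr'0 hr'w hr'w' hgg'
        exact Or.inr ⟨q, hq, hcapγ, ⟨v, hv0, hvw', hcap⟩⟩
      · obtain ⟨u, hu0, huw, hcapgu⟩ := hcapg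
        obtain ⟨u', hu'0, hu'w, hcapgu'⟩ := hcapg2
        have hqq' : q = q' := caps_unique hTG hq hq' hgg hu0 huw hu'0 hu'w hcapgu hcapgu'
        exact Or.inr ⟨q, hq, hcapγ, hqq' ▸ hcapg'⟩
  have hQ₁y : Q₁ y := chain_reach s C hpc hCs Q₁ hstep₁ hxC hQ₁x y hyC
  have hcreate : ∃ p ∈ P, ∃ u, 0 < u ∧ u ≤ dist s x ∧ γ '' Set.Icc 0 u ⊆ p := by
    obtain ⟨g, hg0, hgy, hgg, hrel⟩ := hQ₁y
    rcases hrel with ⟨r, hr0, hrx, hry, hγr⟩ | ⟨q, hq, hcapγ, _⟩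
    · have hgyδ : g (dist s y) = δ (dist s y) := by rw [hgy, hδy]
      have hstrict : dist (γ r) (δ (dist s y)) < r + dist s y := by
        rw [hγr, ← hgyδ]
        rw [hgg r ⟨hr0.le, hry⟩ (dist s y) ⟨dist_nonneg, le_refl _⟩]
        rw [abs_sub_lt_iff]
        constructor <;> linarith
      rcases master hF hTG hγg hδg hγ0 hδ0 hr0 hrx hdy (le_refl _) hstrict with
        ⟨r', hr'0, hr'x, hr'y, hshare⟩ | ⟨q, hq, hcapγ, _⟩
      · exfalso
        have hzs : γ r' ≠ s := by
          intro h
          have := geo_param hγg ⟨hr'0.le, hr'x⟩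
          rw [h, hγ0, dist_self] at this
          linarith
        exact hnz (γ r') hzs ⟨r', ⟨hr'0.le, hr'x⟩, rfl⟩ ⟨r', ⟨hr'0.le, hr'y⟩, hshare.symm⟩
      · exact ⟨q, hq, hcapγ⟩
    · exact ⟨q, hq, hcapγ⟩
  obtain ⟨p₀, hp₀, u₀, hu₀0, hu₀x, hcap₀⟩ := hcreate
  have hsp₀ : s ∈ p₀ := hcap₀ ⟨0, ⟨le_refl _, hu₀0.le⟩, hγ0⟩
  -- Step 2: p₀ captures a geodesic to every point of C.
  set Q₂ : F → Prop := fun w => ∃ g : ℝ → F, g 0 = s ∧ g (dist s w) = w ∧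
    IsGeodesicOn g 0 (dist s w) ∧
    ∃ v, 0 < v ∧ v ≤ dist s w ∧ g '' Set.Icc 0 v ⊆ p₀ with hQ₂def
  have hQ₂x : Q₂ x := ⟨γ, hγ0, hγx, hγg, u₀, hu₀0, hu₀x, hcap₀⟩
  have hstep₂ : ∀ w ∈ C, ∀ w' ∈ C, dist w w' < dist s w + dist s w' → Q₂ w → Q₂ w' := by
    intro w hw w' hw' hclose hQw
    obtain ⟨g, hg0, hgw, hgg, v, hv0, hvw, hcap⟩ := hQw
    obtain ⟨g', hg'0, hg'w, hg'g⟩ := hF s w'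
    have hstrict : dist (g (dist s w)) (g' (dist s w')) < dist s w + dist s w' := by
      rw [hgw, hg'w]; exact hclose
    refine ⟨g', hg'0, hg'w, hg'g, ?_⟩
    rcases master hF hTG hgg hg'g hg0 hg'0 (hdpos w hw) (le_refl _) (hdpos w' hw')
      (le_refl _) hstrict with ⟨r, hr0, hrw, hrw', hshare⟩ | ⟨q, hq, hcapg, hcapg'⟩
    · exact propagation hTG hp₀ hgg hg'g hg0 hg'0 hv0 hvw hcap hr0 hrw hrw' hshare
    · obtain ⟨u, hu0, huw, hcapgu⟩ := hcapg
      have hqp : q = p₀ := caps_unique hTG hq hp₀ hgg hu0 huw hv0 hvw hcapgu hcap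
      obtain ⟨v', hv'0, hv'w', hcap'⟩ := hcapg'
      exact ⟨v', hv'0, hv'w', hqp ▸ hcap'⟩
  have hQ₂all : ∀ w ∈ C, Q₂ w := chain_reach s C hpc hCs Q₂ hstep₂ hxC hQ₂x
  -- Conclusion
  refine ⟨p₀, ⟨hp₀, ?_⟩, ?_⟩
  · intro x' hx' γ' hγ'
    obtain ⟨hγ'0, hγ'x, hγ'g, _⟩ := hγ'
    have hdx' : 0 < dist s x' := hdpos x' hx'
    obtain ⟨g, hg0, hgx', hgg, v, hv0, hvle, hvcap⟩ := hQ₂all x' hx'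
    have hshare : g (dist s x') = γ' (dist s x') := by rw [hgx', hγ'x]
    obtain ⟨v', hv'0, hv'le, hv'cap⟩ := propagation hTG hp₀ hgg hγ'g hg0 hγ'0 hv0 hvle
      hvcap hdx' (le_refl _) (le_refl _) hshare
    set A := Set.Icc 0 (dist s x') ∩ γ' ⁻¹' p₀ with hAdef
    have hAc : IsClosed A := ContinuousOn.preimage_isClosed_of_isClosed
      (geo_continuousOn hγ'g) isClosed_Icc (hTG.pieces_closed p₀ hp₀)
    have hv'A : v' ∈ A := ⟨⟨hv'0.le, hv'le⟩, hv'cap ⟨v', ⟨hv'0.le, le_refl _⟩, rfl⟩⟩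
    have hAne : A.Nonempty := ⟨v', hv'A⟩
    have hAbdd : BddAbove A := ⟨dist s x', fun t ht => ht.1.2⟩
    set u := sSup A with hudef
    have huA : u ∈ A := hAc.csSup_mem hAne hAbdd
    have hv'u : v' ≤ u := le_csSup hAbdd hv'A
    have hsp' : γ' 0 ∈ p₀ := by rw [hγ'0]; exact hsp₀
    refine ⟨u, lt_of_lt_of_le hv'0 hv'u, huA.1.2, ?_⟩
    ext z
    constructor
    · rintro ⟨hzp, w0, hw0, rfl⟩
      exact ⟨w0, ⟨hw0.1, le_csSup hAbdd ⟨hw0, hzp⟩⟩, rfl⟩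
    · rintro ⟨w0, hw0, rfl⟩
      refine ⟨?_, ⟨w0, ⟨hw0.1, hw0.2.trans huA.1.2⟩, rfl⟩⟩
      exact piece_convex hTG hp₀ hγ'g (le_refl 0) hw0.1 hw0.2 huA.1.2 hsp' huA.2
  · rintro p' ⟨hp', hprop'⟩
    obtain ⟨u', hu'0, hu'le, heq'⟩ := hprop' x hxC γ ⟨hγ0, hγx, hγg, hγim⟩
    have hsub' : γ '' Set.Icc 0 u' ⊆ p' := by
      rw [← heq']
      exact Set.inter_subset_left
    exact caps_unique hTG hp' hp₀ hγg hu'0 hu'le hu₀0 hu₀x hsub' hcap₀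
end
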